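/- arXiv:2406.00688 — 5 statements merged into one kernel-verified Lean document; each statement's English description precedes it below -/
import Mathlib

section
/- Let k be a positive integer, let N be the 2×2 matrix with rows (1,1) and (0,1) over the nonnegative integers, and let N_k be the Kronecker product of k copies of N. Let Z be a finite ordered alphabet with 2^k letters and let h be an endomorphism of the free monoid Z* whose matrix equals N_k. Let a be the first letter of Z and b the last letter of Z. Then h is upper triangular and, for every positive integer n, the number of occurrences of the letter b in the word a h^n equals n^k. -/
/-- An endomorphism of a free monoid over an ordered alphabet is upper triangular if,
for all letters `x`, the word `x g` contains no letter smaller than `x`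
(i.e. its matrix is upper triangular). -/
def IsUpperTriangular {α : Type} [LinearOrder α] (g : Monoid.End (FreeMonoid α)) : Prop :=
  ∀ x y : α, y < x → y ∉ FreeMonoid.toList (g (FreeMonoid.of x))

/-- The Kronecker product of `k` copies of the matrix `!![1, 1; 0, 1]`,
with the standard (lexicographic) flattening of indices. -/
def kronNPow : (k : ℕ) → Matrix (Fin (2 ^ k)) (Fin (2 ^ k)) ℕ
  | 0 => 1
  | k + 1 =>
      Matrix.reindex (finProdFinEquiv.trans (finCongr (by rw [pow_succ]; ring)))
        (finProdFinEquiv.trans (finCongr (by rw [pow_succ]; ring)))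
        (Matrix.kroneckerMap (· * ·) (!![1, 1; 0, 1] : Matrix (Fin 2) (Fin 2) ℕ)
          (kronNPow k))


open Matrix in
/-- Kronecker power of an arbitrary 2×2 matrix. -/
def kronPow (A : Matrix (Fin 2) (Fin 2) ℕ) : (k : ℕ) → Matrix (Fin (2 ^ k)) (Fin (2 ^ k)) ℕ
  | 0 => 1
  | k + 1 =>
      Matrix.reindex (finProdFinEquiv.trans (finCongr (by rw [pow_succ]; ring)))
        (finProdFinEquiv.trans (finCongr (by rw [pow_succ]; ring)))
        (Matrix.kroneckerMap (· * ·) A (kronPow A k))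

lemma kronNPow_eq (k : ℕ) : kronNPow k = kronPow !![1, 1; 0, 1] k := by
  induction k with
  | zero => rfl
  | succ k ih => simp only [kronNPow, kronPow, ih]

lemma pow2pos (k : ℕ) : 0 < 2 ^ k := Nat.pow_pos (by norm_num)

lemma div_bound {k : ℕ} (i : Fin (2 ^ (k + 1))) : i.val / 2 ^ k < 2 :=
  Nat.div_lt_of_lt_mul (by rw [← pow_succ]; exact i.isLt)

lemma kronPow_succ_apply (A : Matrix (Fin 2) (Fin 2) ℕ) (k : ℕ) (i j : Fin (2 ^ (k + 1))) :
    kronPow A (k + 1) i j =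
      A ⟨i.val / 2 ^ k, div_bound i⟩ ⟨j.val / 2 ^ k, div_bound j⟩ *
      kronPow A k ⟨i.val % 2 ^ k, Nat.mod_lt _ (pow2pos k)⟩
        ⟨j.val % 2 ^ k, Nat.mod_lt _ (pow2pos k)⟩ := by
  show (Matrix.reindex _ _ _) i j = _
  rw [Matrix.reindex_apply, Matrix.submatrix_apply]
  simp only [Equiv.symm_trans_apply, finCongr_symm, finCongr_apply,
    finProdFinEquiv_symm_apply, Matrix.kroneckerMap_apply]
  congr 1

lemma kronPow_mul (A B : Matrix (Fin 2) (Fin 2) ℕ) (k : ℕ) :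
    kronPow A k * kronPow B k = kronPow (A * B) k := by
  induction k with
  | zero =>
      show (1 : Matrix (Fin (2^0)) (Fin (2^0)) ℕ) * 1 = 1
      simp
  | succ k ih =>
      simp only [kronPow, Matrix.reindex_apply]
      rw [Matrix.submatrix_mul_equiv, ← ih, ← Matrix.mul_kronecker_mul]

lemma kronPow_one (k : ℕ) : kronPow 1 k = 1 := by
  induction k with
  | zero => rfl
  | succ k ih =>
      simp only [kronPow, ih, Matrix.one_kronecker_one, Matrix.reindex_apply]
      exact Matrix.submatrix_one_equiv _

lemma kronPow_pow (A : Matrix (Fin 2) (Fin 2) ℕ) (k n : ℕ) :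
    kronPow A k ^ n = kronPow (A ^ n) k := by
  induction n with
  | zero => simp [kronPow_one]
  | succ n ih => rw [pow_succ, ih, kronPow_mul, ← pow_succ]

lemma N_pow (n : ℕ) : (!![1, 1; 0, 1] : Matrix (Fin 2) (Fin 2) ℕ) ^ n = !![1, n; 0, 1] := by
  induction n with
  | zero => simp [Matrix.one_fin_two]
  | succ n ih =>
      rw [pow_succ, ih, Matrix.mul_fin_two]
      ext i j
      fin_cases i <;> fin_cases j <;> simp [Nat.add_comm 1 n]

lemma kronPow_entry (A : Matrix (Fin 2) (Fin 2) ℕ) :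
    ∀ (k : ℕ) (i j : Fin (2 ^ k)), i.val = 0 → j.val = 2 ^ k - 1 →
      kronPow A k i j = (A 0 1) ^ k := by
  intro k
  induction k with
  | zero =>
      intro i j hi hj
      have : i = j := Fin.ext (by simpa [hj] using hi)
      subst this
      simp [kronPow]
  | succ k ih =>
      intro i j hi hj
      have h2 : 0 < 2 ^ k := pow2pos k
      have hjv : j.val = (2 ^ k - 1) + 1 * 2 ^ k := by
        rw [hj, pow_succ]; omega
      rw [kronPow_succ_apply]
      have hd : j.val / 2 ^ k = 1 := by
        rw [hjv, Nat.add_mul_div_right _ _ h2, Nat.div_eq_of_lt (by omega)]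
      have hm : j.val % 2 ^ k = 2 ^ k - 1 := by
        rw [hjv, Nat.add_mul_mod_self_right, Nat.mod_eq_of_lt (by omega)]
      rw [ih _ _ (by simp [hi]) (by simp [hm]), pow_succ' (A 0 1) k]
      congr 2 <;> simp [Fin.ext_iff, hi, hd]

lemma kronPow_ut (A : Matrix (Fin 2) (Fin 2) ℕ) (hA : A 1 0 = 0) :
    ∀ (k : ℕ) (i j : Fin (2 ^ k)), j < i → kronPow A k i j = 0 := by
  intro k
  induction k with
  | zero =>
      intro i j hij
      have := i.isLt; have := j.isLt
      have : j.val < i.val := hij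
      omega
  | succ k ih =>
      intro i j hij
      have h2 : 0 < 2 ^ k := pow2pos k
      have hlt : j.val < i.val := hij
      rw [kronPow_succ_apply]
      rcases lt_or_eq_of_le (Nat.div_le_div_right (c := 2 ^ k) hlt.le) with hd | hd
      · -- j/2^k < i/2^k, both < 2, so i/2^k = 1, j/2^k = 0
        have hi2 : i.val / 2 ^ k < 2 := div_bound i
        have h1 : i.val / 2 ^ k = 1 := by
          match hq : i.val / 2 ^ k, hi2 with
          | 0, _ => rw [hq] at hd; exact absurd hd (Nat.not_lt_zero _)
          | 1, _ => rfl
        have h0' : j.val / 2 ^ k = 0 := by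
          rw [h1] at hd; exact Nat.lt_one_iff.mp hd
        have : (⟨i.val / 2 ^ k, div_bound i⟩ : Fin 2) = 1 := Fin.ext (by simp [h1])
        have h0 : (⟨j.val / 2 ^ k, div_bound j⟩ : Fin 2) = 0 := Fin.ext (by simp [h0'])
        rw [show A ⟨i.val / 2 ^ k, _⟩ ⟨j.val / 2 ^ k, _⟩ = A 1 0 by rw [this, h0], hA,
          zero_mul]
      · have hmlt : j.val % 2 ^ k < i.val % 2 ^ k := by
          have hi' := Nat.div_add_mod i.val (2 ^ k)
          have hj' := Nat.div_add_mod j.val (2 ^ k)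
          rw [hd] at hj'
          omega
        rw [ih _ _ hmlt, mul_zero]

lemma count_hom_apply {α : Type} [Fintype α] [DecidableEq α] (g : Monoid.End (FreeMonoid α))
    (w : FreeMonoid α) (y : α) :
    List.count y (FreeMonoid.toList (g w)) =
      ∑ x, List.count x (FreeMonoid.toList w) *
        List.count y (FreeMonoid.toList (g (FreeMonoid.of x))) := by
  induction w using FreeMonoid.recOn with
  | one => simp
  | of_mul a w ihw =>
      rw [map_mul, FreeMonoid.toList_mul, List.count_append, ihw]
      have : ∀ x : α, List.count x (FreeMonoid.toList (FreeMonoid.of a * w)) =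
          (if a = x then 1 else 0) + List.count x (FreeMonoid.toList w) := by
        intro x
        rw [FreeMonoid.toList_mul, List.count_append, FreeMonoid.toList_of,
          List.count_singleton']
      simp only [this, add_mul, Finset.sum_add_distrib, ite_mul, zero_mul, one_mul]
      rw [Finset.sum_ite_eq (Finset.univ : Finset α) a
        (fun x => List.count y (FreeMonoid.toList (g (FreeMonoid.of x))))]
      simp [add_comm]

lemma count_pow {α : Type} [Fintype α] [DecidableEq α] (g : Monoid.End (FreeMonoid α))
    (M : Matrix α α ℕ)
    (hM : ∀ x y, List.count y (FreeMonoid.toList (g (FreeMonoid.of x))) = M x y)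
    (n : ℕ) (x y : α) :
    List.count y (FreeMonoid.toList ((g ^ n) (FreeMonoid.of x))) = (M ^ n) x y := by
  induction n generalizing x y with
  | zero =>
      rw [pow_zero, pow_zero]
      have : (1 : Monoid.End (FreeMonoid α)) (FreeMonoid.of x) = FreeMonoid.of x := rfl
      rw [this, FreeMonoid.toList_of, List.count_singleton', Matrix.one_apply]
  | succ n ih =>
      rw [pow_succ g n]
      have : (g ^ n * g) (FreeMonoid.of x) = (g ^ n) (g (FreeMonoid.of x)) := rfl
      rw [this, count_hom_apply, pow_succ' M n]
      rw [Matrix.mul_apply]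
      congr 1
      funext z
      rw [hM, ih]

/-- if the matrix of an endomorphism `h` of the free monoid on `2^k`
ordered letters is the `k`-fold Kronecker power of `!![1,1;0,1]`, then `h` is upper
triangular and the number of occurrences of the last letter in `a h^n` is `n^k`,
where `a` is the first letter. -/
theorem statement1 (k : ℕ) (hk : 0 < k)
    (h : Monoid.End (FreeMonoid (Fin (2 ^ k))))
    (hmat : ∀ x y : Fin (2 ^ k),
      List.count y (FreeMonoid.toList (h (FreeMonoid.of x))) = kronNPow k x y) :
    IsUpperTriangular h ∧
      ∀ n : ℕ, 0 < n →
        List.count (⟨2 ^ k - 1, Nat.sub_lt (by positivity) one_pos⟩ : Fin (2 ^ k))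
            (FreeMonoid.toList ((h ^ n) (FreeMonoid.of (⟨0, by positivity⟩ : Fin (2 ^ k))))) =
          n ^ k := by
  constructor
  · intro x y hy
    have h0 : List.count y (FreeMonoid.toList (h (FreeMonoid.of x))) = 0 := by
      rw [hmat, kronNPow_eq]
      exact kronPow_ut _ (by norm_num) k x y hy
    exact List.count_eq_zero.mp h0
  · intro n hn
    rw [count_pow h (kronNPow k) hmat]
    rw [kronNPow_eq, kronPow_pow, N_pow,
      kronPow_entry _ k _ _ rfl rfl]
    simp
end

section
/- Let t be a positive integer and let α1,…,αt be nonnegative integers. Then there exists an M-triple (A,g1,g2) of dimension t such that the map (n1,…,nt) ↦ n1^{α1} n2^{α2} ⋯ nt^{αt} from ℤ₊^t to ℤ₊ is computable by (A,g1,g2). -/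
structure MTriple (t : ℕ) (α : Type) [Fintype α] [LinearOrder α] where
  g1 : Monoid.End (FreeMonoid α)
  g2 : Monoid.End (FreeMonoid α)
  lvl : α → ℕ
  lvl_mono : Monotone lvl
  lvl_le : ∀ x, lvl x ≤ t
  lvl_surj : ∀ i : ℕ, i ≤ t → ∃ x, lvl x = i
  tri_g1 : IsUpperTriangular g1
  tri_g2 : IsUpperTriangular g2
  last : α
  last_top : ∀ x, x ≤ last
  lvl_last : ∀ x, lvl x = t ↔ x = last
  g1_lvl : ∀ x : α, ∀ y ∈ FreeMonoid.toList (g1 (FreeMonoid.of x)), lvl y = lvl x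
  g2_lvl : ∀ x : α, lvl x < t → ∀ y ∈ FreeMonoid.toList (g2 (FreeMonoid.of x)), lvl y = lvl x + 1
  g2_sq : ∀ x : α, g2 (g2 (FreeMonoid.of x)) = 1
  g1_last : g1 (FreeMonoid.of last) = 1
  g2_last : g2 (FreeMonoid.of last) = 1

def ComputableBy {t : ℕ} {α : Type} [Fintype α] [LinearOrder α] (T : MTriple t α)
    (f : (Fin t → ℕ) → ℕ) : Prop :=
  ∃ w : FreeMonoid α, (∀ y ∈ FreeMonoid.toList w, T.lvl y = 0) ∧
    ∀ n : Fin t → ℕ, (∀ i, 0 < n i) →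
      (List.finRange t).foldl (fun u i => T.g2 ((T.g1 ^ n i) u)) w =
        FreeMonoid.of T.last ^ f n


namespace Stmt2

open FreeMonoid

variable (t : ℕ) (A : ℕ → ℕ)

def off (i : ℕ) : ℕ := ∑ k ∈ Finset.range i, (A k + 2)

lemma off_zero : off A 0 = 0 := rfl

lemma off_succ (i : ℕ) : off A (i + 1) = off A i + (A i + 2) := Finset.sum_range_succ _ _

lemma off_strictMono : StrictMono (off A) :=
  strictMono_nat_of_lt_succ fun n => by rw [off_succ]; omega

lemma off_mono : Monotone (off A) := (off_strictMono A).monotone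

/-- letters are elements of `Fin (off A t + 1)`; `mkt` builds one from a natural number. -/
def mkt (x : ℕ) : Fin (off A t + 1) :=
  ⟨min x (off A t), Nat.lt_succ_of_le (min_le_right _ _)⟩

lemma mkt_val {x : ℕ} (h : x ≤ off A t) : ((mkt t A x : Fin (off A t + 1)) : ℕ) = x :=
  min_eq_left h

/-- the level of a letter -/
def lvlN (x : ℕ) : ℕ := Nat.findGreatest (fun i => off A i ≤ x) t

lemma lvlN_le (x : ℕ) : lvlN t A x ≤ t := Nat.findGreatest_le t

lemma off_lvlN_le (x : ℕ) : off A (lvlN t A x) ≤ x :=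
  Nat.findGreatest_spec (P := fun i => off A i ≤ x) (Nat.zero_le t) (by simp [off_zero])

lemma lvlN_eq {i x : ℕ} (hit : i ≤ t) (h1 : off A i ≤ x) (h2 : x < off A (i + 1)) :
    lvlN t A x = i := by
  have hge : i ≤ lvlN t A x := Nat.le_findGreatest hit h1
  have hle : lvlN t A x ≤ i := by
    by_contra hc
    push_neg at hc
    have h3 := off_lvlN_le t A x
    have h4 : off A (i + 1) ≤ off A (lvlN t A x) := off_mono A hc
    omega
  omega

lemma lvlN_lt {x : ℕ} (hx : x < off A t) :
    lvlN t A x < t ∧ x < off A (lvlN t A x + 1) := by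
  have h1 := lvlN_le t A x
  have h0 := off_lvlN_le t A x
  have hne : lvlN t A x ≠ t := by
    intro h
    rw [h] at h0; omega
  have hlt : lvlN t A x < t := lt_of_le_of_ne h1 hne
  refine ⟨hlt, ?_⟩
  have h5 : ¬ off A (lvlN t A x + 1) ≤ x :=
    Nat.findGreatest_is_greatest (P := fun i => off A i ≤ x) (Nat.lt_succ_self (lvlN t A x)) hlt
  omega

/-! ### counting letters -/

def cnt {β : Type} [DecidableEq β] (z : β) (u : FreeMonoid β) : ℕ := (toList u).count z

variable {β : Type} [DecidableEq β]

lemma cnt_one (z : β) : cnt z (1 : FreeMonoid β) = 0 := rfl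

lemma cnt_mul (z : β) (u v : FreeMonoid β) : cnt z (u * v) = cnt z u + cnt z v := by
  simp [cnt, toList_mul, List.count_append]

lemma cnt_of (z y : β) : cnt z (of y) = if y = z then 1 else 0 := by
  simp [cnt, toList_of, List.count_singleton', beq_iff_eq]

lemma cnt_pow (z : β) (u : FreeMonoid β) (k : ℕ) : cnt z (u ^ k) = k * cnt z u := by
  induction k with
  | zero => simp [cnt_one]
  | succ k ih => rw [pow_succ, cnt_mul, ih]; ring

lemma cnt_listProd (z : β) (l : List (FreeMonoid β)) :
    cnt z l.prod = (l.map (cnt z)).sum := by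
  induction l with
  | nil => simp [cnt_one]
  | cons a l ih => rw [List.prod_cons, cnt_mul, List.map_cons, List.sum_cons, ih]

lemma mem_toList_listProd {y : β} : ∀ l : List (FreeMonoid β),
    y ∈ toList l.prod → ∃ u ∈ l, y ∈ toList u := by
  intro l
  induction l with
  | nil => simp [toList_one]
  | cons a l ih =>
    intro hy
    rw [List.prod_cons, toList_mul, List.mem_append] at hy
    rcases hy with hy | hy
    · exact ⟨a, List.mem_cons_self, hy⟩
    · obtain ⟨u, hu, hyu⟩ := ih hy
      exact ⟨u, List.mem_cons_of_mem _ hu, hyu⟩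

lemma toList_of_pow (z : β) (k : ℕ) :
    toList ((of z) ^ k) = List.replicate k z := by
  induction k with
  | zero => simp [toList_one]
  | succ k ih => rw [pow_succ, toList_mul, ih, toList_of, List.replicate_succ']

lemma listSum_range (f : ℕ → ℕ) : ∀ nn : ℕ,
    ((List.range nn).map f).sum = ∑ k ∈ Finset.range nn, f k := by
  intro nn
  induction nn with
  | zero => simp
  | succ nn ih =>
    rw [List.range_succ, List.map_append, List.sum_append, Finset.sum_range_succ, ih]
    simp

/-! ### the endomorphisms -/

/-- the word `z_{i,0}^{C(j,0)} ⋯ z_{i,j}^{C(j,j)}` (Pascal substitution image). -/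
def Wd (i j : ℕ) : FreeMonoid (Fin (off A t + 1)) :=
  ((List.range (j + 1)).map
    (fun k => (of (mkt t A (off A i + 1 + (A i - k)))) ^ (j.choose k))).prod

def img1 (x : Fin (off A t + 1)) : FreeMonoid (Fin (off A t + 1)) :=
  if (x : ℕ) = off A t then 1
  else Wd t A (lvlN t A (x : ℕ))
    (A (lvlN t A (x : ℕ)) + 1 - max 1 ((x : ℕ) - off A (lvlN t A (x : ℕ))))

def img2 (x : Fin (off A t + 1)) : FreeMonoid (Fin (off A t + 1)) :=
  if (x : ℕ) + 1 = off A (lvlN t A (x : ℕ) + 1) then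
    of (mkt t A (off A (lvlN t A (x : ℕ) + 1)))
  else 1

def G1 : Monoid.End (FreeMonoid (Fin (off A t + 1))) := FreeMonoid.lift (img1 t A)

def G2 : Monoid.End (FreeMonoid (Fin (off A t + 1))) := FreeMonoid.lift (img2 t A)

lemma pow_apply_succ {M : Type*} [Monoid M] (g : Monoid.End M) (n : ℕ) (u : M) :
    (g ^ (n + 1)) u = (g ^ n) (g u) := by
  have : ((g ^ (n + 1) : Monoid.End M) : M → M) u = (g^[n + 1]) u := by
    rw [Monoid.End.coe_pow]
  rw [this, Function.iterate_succ_apply, ← Monoid.End.coe_pow]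

lemma pow_apply_zero {M : Type*} [Monoid M] (g : Monoid.End M) (u : M) :
    (g ^ 0) u = u := rfl

/-! ### letters of images -/

lemma toList_Wd_mem {i j : ℕ} {y : Fin (off A t + 1)} (hy : y ∈ toList (Wd t A i j)) :
    ∃ k ≤ j, y = mkt t A (off A i + 1 + (A i - k)) := by
  obtain ⟨u, hu, hyu⟩ := mem_toList_listProd _ hy
  rw [List.mem_map] at hu
  obtain ⟨k, hk, rfl⟩ := hu
  rw [List.mem_range] at hk
  rw [toList_of_pow, List.mem_replicate] at hyu
  exact ⟨k, by omega, hyu.2⟩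

lemma enc_le {i k : ℕ} (hi : i < t) (hk : k ≤ A i) : off A i + 1 + (A i - k) ≤ off A t := by
  have h1 : off A (i + 1) ≤ off A t := off_mono A hi
  have h2 := off_succ A i
  omega

lemma img1_letters {x : Fin (off A t + 1)} (hx : (x : ℕ) < off A t) :
    ∀ y ∈ toList (img1 t A x),
      off A (lvlN t A (x : ℕ)) < (y : ℕ) ∧ (y : ℕ) < off A (lvlN t A (x : ℕ) + 1) ∧
        (x : ℕ) ≤ (y : ℕ) := by
  intro y hy
  obtain ⟨hlt, hx2⟩ := lvlN_lt t A hx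
  have hx1 : off A (lvlN t A (x : ℕ)) ≤ (x : ℕ) := off_lvlN_le t A _
  rw [img1, if_neg (by omega)] at hy
  obtain ⟨k, hk, rfl⟩ := toList_Wd_mem t A hy
  have h1m : 1 ≤ max 1 ((x : ℕ) - off A (lvlN t A (x : ℕ))) := le_max_left _ _
  have hkA : k ≤ A (lvlN t A (x : ℕ)) := by omega
  have hv := mkt_val t A (enc_le t A hlt hkA)
  have hsucc := off_succ A (lvlN t A (x : ℕ))
  refine ⟨by omega, by omega, ?_⟩
  rcases Nat.eq_zero_or_pos ((x : ℕ) - off A (lvlN t A (x : ℕ))) with hp | hp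
  · omega
  · rw [max_eq_right hp] at hk
    omega

lemma letters_G1 {i : ℕ} (hi : i < t) (u : FreeMonoid (Fin (off A t + 1)))
    (hu : ∀ y ∈ toList u, off A i < (y : ℕ) ∧ (y : ℕ) < off A (i + 1)) :
    ∀ y ∈ toList (G1 t A u), off A i < (y : ℕ) ∧ (y : ℕ) < off A (i + 1) := by
  intro y hy
  replace hy : y ∈ toList ((FreeMonoid.lift (img1 t A)) u) := hy
  rw [lift_apply] at hy
  obtain ⟨u', hu', hyu⟩ := mem_toList_listProd _ hy
  rw [List.mem_map] at hu'
  obtain ⟨x, hx, rfl⟩ := hu'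
  obtain ⟨hx1, hx2⟩ := hu x hx
  have hxt : (x : ℕ) < off A t := lt_of_lt_of_le hx2 (off_mono A hi)
  have hlv : lvlN t A (x : ℕ) = i := lvlN_eq t A (le_of_lt hi) (le_of_lt hx1) hx2
  obtain ⟨h1, h2, _⟩ := img1_letters t A hxt y hyu
  rw [hlv] at h1 h2
  exact ⟨h1, h2⟩

lemma letters_G1_pow {i : ℕ} (hi : i < t) (n : ℕ) :
    ∀ u : FreeMonoid (Fin (off A t + 1)),
      (∀ y ∈ toList u, off A i < (y : ℕ) ∧ (y : ℕ) < off A (i + 1)) →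
      ∀ y ∈ toList ((G1 t A ^ n) u), off A i < (y : ℕ) ∧ (y : ℕ) < off A (i + 1) := by
  induction n with
  | zero => intro u hu; exact hu
  | succ n ih =>
    intro u hu
    rw [pow_apply_succ]
    exact ih _ (letters_G1 t A hi u hu)

lemma img1_enc {i j : ℕ} (hi : i < t) (hj : j ≤ A i) :
    img1 t A (mkt t A (off A i + 1 + (A i - j))) = Wd t A i j := by
  have hv : ((mkt t A (off A i + 1 + (A i - j)) : Fin _) : ℕ) = off A i + 1 + (A i - j) :=
    mkt_val t A (enc_le t A hi hj)
  have hsucc := off_succ A i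
  have h1t : off A (i + 1) ≤ off A t := off_mono A hi
  have hlv : lvlN t A (off A i + 1 + (A i - j)) = i :=
    lvlN_eq t A (le_of_lt hi) (by omega) (by omega)
  rw [img1, hv, if_neg (by omega), hlv]
  congr 1
  have : max 1 (off A i + 1 + (A i - j) - off A i) = 1 + (A i - j) := by
    rw [max_eq_right (by omega)]; omega
  rw [this]
  omega

lemma img1_off {i : ℕ} (hi : i < t) :
    img1 t A (mkt t A (off A i)) = Wd t A i (A i) := by
  have hoff : off A i ≤ off A t := off_mono A (le_of_lt hi)
  have hsucc := off_succ A i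
  have hv : ((mkt t A (off A i) : Fin _) : ℕ) = off A i := mkt_val t A hoff
  have hne : off A i ≠ off A t := fun h => by
    have := off_strictMono A hi; omega
  have hlv : lvlN t A (off A i) = i := lvlN_eq t A (le_of_lt hi) le_rfl (by omega)
  rw [img1, hv, if_neg hne, hlv]
  congr 1
  simp

lemma cnt_hom_Wd (i j : ℕ) (F : FreeMonoid (Fin (off A t + 1)) →* FreeMonoid (Fin (off A t + 1)))
    (z : Fin (off A t + 1)) :
    cnt z (F (Wd t A i j)) =
      ∑ k ∈ Finset.range (j + 1),
        j.choose k * cnt z (F (of (mkt t A (off A i + 1 + (A i - k))))) := by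
  rw [Wd, map_list_prod, cnt_listProd, List.map_map, List.map_map, ← listSum_range]
  congr 1
  apply List.map_congr_left
  intro k _
  simp only [Function.comp_apply, map_pow, cnt_pow]

lemma cnt_G1_pow {i : ℕ} (hi : i < t) :
    ∀ n : ℕ, ∀ j ≤ A i,
      cnt (mkt t A (off A i + 1 + A i)) ((G1 t A ^ n) (of (mkt t A (off A i + 1 + (A i - j))))) =
        n ^ j := by
  intro n
  induction n with
  | zero =>
    intro j hj
    rw [pow_apply_zero, cnt_of]
    have hv1 : ((mkt t A (off A i + 1 + (A i - j)) : Fin _) : ℕ) = off A i + 1 + (A i - j) :=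
      mkt_val t A (enc_le t A hi hj)
    have hv2 : ((mkt t A (off A i + 1 + A i) : Fin _) : ℕ) = off A i + 1 + A i := by
      have hsucc := off_succ A i
      have h1t : off A (i + 1) ≤ off A t := off_mono A hi
      apply mkt_val t A
      omega
    rcases Nat.eq_zero_or_pos j with hj0 | hj0
    · subst hj0
      simp
    · rw [if_neg, Nat.zero_pow hj0]
      intro h
      have := congrArg (fun z : Fin (off A t + 1) => (z : ℕ)) h
      simp only [hv1, hv2] at this
      omega
  | succ n ih =>
    intro j hj
    rw [pow_apply_succ]
    have : G1 t A (of (mkt t A (off A i + 1 + (A i - j)))) = Wd t A i j := by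
      exact img1_enc t A hi hj
    have hW : cnt (mkt t A (off A i + 1 + A i)) ((G1 t A ^ n) (Wd t A i j)) =
        ∑ k ∈ Finset.range (j + 1), j.choose k * cnt (mkt t A (off A i + 1 + A i))
          ((G1 t A ^ n) (of (mkt t A (off A i + 1 + (A i - k))))) :=
      cnt_hom_Wd t A i j (G1 t A ^ n) _
    rw [this, hW]
    have hsum : ∀ k ∈ Finset.range (j + 1),
        j.choose k * cnt (mkt t A (off A i + 1 + A i))
          ((G1 t A ^ n) (of (mkt t A (off A i + 1 + (A i - k))))) = n ^ k * j.choose k := by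
      intro k hk
      rw [Finset.mem_range] at hk
      rw [ih k (by omega)]
      ring
    rw [Finset.sum_congr rfl hsum]
    have := add_pow (R := ℕ) n 1 j
    simp only [one_pow, mul_one, Nat.cast_id] at this
    rw [← this]

/-! ### collapse under G2 -/

lemma G2_collapse {i : ℕ} (hi : i < t) :
    ∀ l : List (Fin (off A t + 1)),
      (∀ y ∈ l, off A i < (y : ℕ) ∧ (y : ℕ) < off A (i + 1)) →
      G2 t A (ofList l) =
        (of (mkt t A (off A (i + 1)))) ^ (l.count (mkt t A (off A i + 1 + A i))) := by
  intro l
  induction l with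
  | nil => intro _; simp [ofList_nil]
  | cons y l ih =>
    intro hl
    obtain ⟨hy1, hy2⟩ := hl y (List.mem_cons_self)
    have hrest := fun z hz => hl z (List.mem_cons_of_mem _ hz)
    rw [ofList_cons, map_mul, ih hrest]
    have hsucc := off_succ A i
    have h1t : off A (i + 1) ≤ off A t := off_mono A hi
    have hlv : lvlN t A (y : ℕ) = i := lvlN_eq t A (le_of_lt hi) (le_of_lt hy1) hy2
    have hz0v : ((mkt t A (off A i + 1 + A i) : Fin _) : ℕ) = off A i + 1 + A i :=
      mkt_val t A (by omega)
    have hG2y : G2 t A (of y) = img2 t A y := rfl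
    by_cases hc : (y : ℕ) + 1 = off A (i + 1)
    · have hyz : y = mkt t A (off A i + 1 + A i) := by
        apply Fin.ext
        rw [hz0v]; omega
      have : img2 t A y = of (mkt t A (off A (i + 1))) := by
        rw [img2, hlv, if_pos hc]
      rw [hG2y, this, List.count_cons, if_pos (by rw [hyz]; simp)]
      rw [pow_succ']
    · have hyz : y ≠ mkt t A (off A i + 1 + A i) := by
        intro h
        have := congrArg (fun z : Fin (off A t + 1) => (z : ℕ)) h
        simp only [hz0v] at this
        omega
      have : img2 t A y = 1 := by
        rw [img2, hlv, if_neg hc]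
      rw [hG2y, this, one_mul, List.count_cons, if_neg (by simpa using hyz), add_zero]

/-- the key per-level computation -/
lemma key_step {i : ℕ} (hi : i < t) {n : ℕ} (hn : 0 < n) :
    G2 t A ((G1 t A ^ n) (of (mkt t A (off A i)))) =
      (of (mkt t A (off A (i + 1)))) ^ (n ^ A i) := by
  obtain ⟨n', rfl⟩ : ∃ n', n = n' + 1 := ⟨n - 1, by omega⟩
  have hstart : (G1 t A ^ (n' + 1)) (of (mkt t A (off A i))) =
      (G1 t A ^ (n' + 1)) (of (mkt t A (off A i + 1 + (A i - A i)))) := by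
    rw [pow_apply_succ, pow_apply_succ]
    congr 1
    exact (img1_off t A hi).trans (img1_enc t A hi le_rfl).symm
  rw [hstart]
  have hsucc := off_succ A i
  have hlet : ∀ y ∈ toList ((G1 t A ^ (n' + 1)) (of (mkt t A (off A i + 1 + (A i - A i))))),
      off A i < (y : ℕ) ∧ (y : ℕ) < off A (i + 1) := by
    apply letters_G1_pow t A hi
    intro y hy
    rw [toList_of, List.mem_singleton] at hy
    subst hy
    rw [mkt_val t A (enc_le t A hi (by omega))]
    omega
  have := G2_collapse t A hi (toList ((G1 t A ^ (n' + 1)) (of (mkt t A (off A i + 1 + (A i - A i)))))) hlet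
  rw [ofList_toList] at this
  rw [this]
  congr 1
  have := cnt_G1_pow t A hi (n' + 1) (A i) le_rfl
  rw [cnt] at this
  exact this

/-! ### assembling the M-triple (appended later) -/

@[simp] lemma G1_of (x : Fin (off A t + 1)) : G1 t A (of x) = img1 t A x := rfl

@[simp] lemma G2_of (x : Fin (off A t + 1)) : G2 t A (of x) = img2 t A x := rfl

lemma lvlN_off {i : ℕ} (hi : i ≤ t) : lvlN t A (off A i) = i :=
  lvlN_eq t A hi le_rfl (off_strictMono A (Nat.lt_succ_self i))

lemma lvl_plus_le {x : Fin (off A t + 1)}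
    (hc : (x : ℕ) + 1 = off A (lvlN t A (x : ℕ) + 1)) : lvlN t A (x : ℕ) + 1 ≤ t := by
  have h1 := lvlN_le t A (x : ℕ)
  have hx := Nat.lt_succ_iff.mp x.isLt
  by_contra hcon
  have heq : lvlN t A (x : ℕ) = t := by omega
  rw [heq, off_succ] at hc
  omega


end Stmt2

namespace Stmt2

variable (t : ℕ) (A : ℕ → ℕ)

open FreeMonoid

def triple : MTriple t (Fin (off A t + 1)) where
  g1 := G1 t A
  g2 := G2 t A
  lvl := fun x => lvlN t A (x : ℕ)
  lvl_mono := by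
    intro x y h
    exact Nat.findGreatest_mono (fun k hk => le_trans hk (Fin.le_def.mp h)) le_rfl
  lvl_le := fun x => lvlN_le t A _
  lvl_surj := by
    intro i hi
    refine ⟨mkt t A (off A i), ?_⟩
    show lvlN t A ((mkt t A (off A i) : Fin (off A t + 1)) : ℕ) = i
    rw [mkt_val t A (off_mono A hi)]
    exact lvlN_off t A hi
  tri_g1 := by
    intro x y hxy hmem
    rw [G1_of] at hmem
    have hx := Nat.lt_succ_iff.mp x.isLt
    by_cases hxt : (x : ℕ) = off A t
    · rw [img1, if_pos hxt] at hmem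
      simp [toList_one] at hmem
    · obtain ⟨_, _, h3⟩ := img1_letters t A (by omega) y hmem
      exact absurd (Fin.lt_def.mp hxy) (by omega)
  tri_g2 := by
    intro x y hxy hmem
    rw [G2_of, img2] at hmem
    by_cases hc : (x : ℕ) + 1 = off A (lvlN t A (x : ℕ) + 1)
    · rw [if_pos hc] at hmem
      rw [toList_of, List.mem_singleton] at hmem
      subst hmem
      have hle : lvlN t A (x : ℕ) + 1 ≤ t := lvl_plus_le t A hc
      have hv := mkt_val t A (off_mono A hle)
      exact absurd (Fin.lt_def.mp hxy) (by omega)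
    · rw [if_neg hc] at hmem
      simp [toList_one] at hmem
  last := ⟨off A t, Nat.lt_succ_self _⟩
  last_top := fun x => Fin.le_def.mpr (Nat.lt_succ_iff.mp x.isLt)
  lvl_last := by
    intro x
    constructor
    · intro h
      replace h : lvlN t A (x : ℕ) = t := h
      have h0 := off_lvlN_le t A (x : ℕ)
      rw [h] at h0
      have hx := Nat.lt_succ_iff.mp x.isLt
      exact Fin.ext (show (x : ℕ) = off A t by omega)
    · intro h
      subst h
      show lvlN t A _ = t
      exact lvlN_off t A le_rfl
  g1_lvl := by
    intro x y hmem
    rw [G1_of] at hmem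
    have hx := Nat.lt_succ_iff.mp x.isLt
    by_cases hxt : (x : ℕ) = off A t
    · rw [img1, if_pos hxt] at hmem
      simp [toList_one] at hmem
    · obtain ⟨h1, h2, _⟩ := img1_letters t A (by omega) y hmem
      obtain ⟨hlt, _⟩ := lvlN_lt t A (x := (x : ℕ)) (by omega)
      show lvlN t A (y : ℕ) = lvlN t A (x : ℕ)
      exact lvlN_eq t A (le_of_lt hlt) (le_of_lt h1) h2
  g2_lvl := by
    intro x hx y hmem
    replace hx : lvlN t A (x : ℕ) < t := hx
    rw [G2_of, img2] at hmem
    by_cases hc : (x : ℕ) + 1 = off A (lvlN t A (x : ℕ) + 1)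
    · rw [if_pos hc] at hmem
      rw [toList_of, List.mem_singleton] at hmem
      subst hmem
      have hle : lvlN t A (x : ℕ) + 1 ≤ t := hx
      show lvlN t A _ = _
      rw [mkt_val t A (off_mono A hle)]
      exact lvlN_off t A hle
    · rw [if_neg hc] at hmem
      simp [toList_one] at hmem
  g2_sq := by
    intro x
    rw [G2_of, img2]
    by_cases hc : (x : ℕ) + 1 = off A (lvlN t A (x : ℕ) + 1)
    · rw [if_pos hc, G2_of]
      have hle : lvlN t A (x : ℕ) + 1 ≤ t := lvl_plus_le t A hc
      have hv := mkt_val t A (off_mono A hle)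
      have hlv : lvlN t A ((mkt t A (off A (lvlN t A (x : ℕ) + 1)) : Fin _) : ℕ)
          = lvlN t A (x : ℕ) + 1 := by
        rw [hv]; exact lvlN_off t A hle
      rw [img2, hlv, if_neg]
      rw [hv, off_succ A (lvlN t A (x : ℕ) + 1)]
      omega
    · rw [if_neg hc, map_one]
  g1_last := by
    rw [G1_of, img1, if_pos rfl]
  g2_last := by
    rw [G2_of, img2, if_neg]
    have hlv : lvlN t A ((⟨off A t, Nat.lt_succ_self _⟩ : Fin (off A t + 1)) : ℕ) = t :=
      lvlN_off t A le_rfl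
    rw [hlv, off_succ]
    omega

end Stmt2


/-- every monomial with coefficient 1 is computable by an M-triple. -/
theorem statement2 (t : ℕ) (ht : 0 < t) (a : Fin t → ℕ) :
    ∃ (m : ℕ) (T : MTriple t (Fin m)),
      ComputableBy T (fun n => ∏ i, n i ^ a i) := by
  classical
  set A : ℕ → ℕ := fun k => if h : k < t then a ⟨k, h⟩ else 0 with hAdef
  refine ⟨Stmt2.off A t + 1, Stmt2.triple t A, ?_⟩
  rw [ComputableBy]
  refine ⟨FreeMonoid.of (Stmt2.mkt t A (Stmt2.off A 0)), ?_, ?_⟩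
  · intro y hy
    rw [FreeMonoid.toList_of, List.mem_singleton] at hy
    subst hy
    show Stmt2.lvlN t A _ = 0
    rw [Stmt2.mkt_val t A (Stmt2.off_mono A (Nat.zero_le t))]
    exact Stmt2.lvlN_off t A (Nat.zero_le t)
  · intro n hn
    set N : ℕ → ℕ := fun k => if h : k < t then n ⟨k, h⟩ else 1 with hNdef
    have main : ∀ i ≤ t, ((List.finRange t).take i).foldl
        (fun u j => (Stmt2.triple t A).g2 (((Stmt2.triple t A).g1 ^ n j) u))
        (FreeMonoid.of (Stmt2.mkt t A (Stmt2.off A 0))) =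
        (FreeMonoid.of (Stmt2.mkt t A (Stmt2.off A i))) ^ (∏ k ∈ Finset.range i, N k ^ A k) := by
      intro i
      induction i with
      | zero => intro _; simp
      | succ i ih =>
        intro hit
        have hi : i < t := hit
        have hget : (List.finRange t)[i]? = some ⟨i, hi⟩ := by
          rw [List.getElem?_eq_getElem (by simpa using hi)]
          congr 1
          apply Fin.ext
          simp [List.getElem_finRange]
        have htake : (List.finRange t).take (i + 1)
            = (List.finRange t).take i ++ [(⟨i, hi⟩ : Fin t)] := by
          rw [List.take_succ, hget]
          rfl
        rw [htake, List.foldl_append, ih (le_of_lt hi)]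
        simp only [List.foldl_cons, List.foldl_nil]
        show Stmt2.G2 t A ((Stmt2.G1 t A ^ n ⟨i, hi⟩) _) = _
        rw [map_pow, map_pow, Stmt2.key_step t A hi (hn ⟨i, hi⟩), ← pow_mul]
        congr 1
        rw [Finset.prod_range_succ]
        have hN : N i = n ⟨i, hi⟩ := dif_pos hi
        have hA : A i = a ⟨i, hi⟩ := dif_pos hi
        rw [hN, hA]
        ring
    have hfin := main t le_rfl
    rw [List.take_of_length_le (by simp)] at hfin
    rw [hfin]
    have hlast : Stmt2.mkt t A (Stmt2.off A t) = (Stmt2.triple t A).last := by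
      apply Fin.ext
      show min (Stmt2.off A t) (Stmt2.off A t) = Stmt2.off A t
      exact min_self _
    rw [hlast]
    congr 1
    rw [← Fin.prod_univ_eq_prod_range (fun k => N k ^ A k) t]
    apply Finset.prod_congr rfl
    intro i _
    show N (i : ℕ) ^ A (i : ℕ) = n i ^ a i
    rw [hNdef, hAdef]
    simp [i.isLt]
end

section
/- Let t be a positive integer, let F = (A,f1,f2) and G = (B,g1,g2) be M-triples of dimension t with A ∩ B = ∅, let p, q : ℤ₊^t → ℤ₊ be maps such that p is computable by F and q is computable by G, and let α, β be positive integers. Then there exists an M-triple of dimension t by which the map αp + βq is computable. -/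
set_option linter.unusedSectionVars false

namespace S3

def rk {γ : Type} [Fintype γ] [LinearOrder γ] (x : γ) : ℕ :=
  ((monoEquivOfFin γ rfl).symm x : Fin _).val

lemma rk_lt_iff {γ : Type} [Fintype γ] [LinearOrder γ] {x y : γ} :
    rk x < rk y ↔ x < y := by
  rw [rk, rk, ← Fin.lt_def, OrderIso.lt_iff_lt]

lemma rk_inj {γ : Type} [Fintype γ] [LinearOrder γ] {x y : γ} (h : rk x = rk y) : x = y := by
  rcases lt_trichotomy x y with hl | he | hl
  · exact absurd (rk_lt_iff.2 hl) (by omega)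
  · exact he
  · exact absurd (rk_lt_iff.2 hl) (by omega)

variable {t : ℕ} {α β : Type} [Fintype α] [LinearOrder α] [Fintype β] [LinearOrder β]

inductive CC (F : MTriple t α) (G : MTriple t β) : Type where
  | a (x : α) (hx : x ≠ F.last) : CC F G
  | b (y : β) (hy : y ≠ G.last) : CC F G
  | e : CC F G
  deriving DecidableEq, Fintype

variable (F : MTriple t α) (G : MTriple t β)

def clvl : CC F G → ℕ
  | .a x _ => F.lvl x
  | .b y _ => G.lvl y
  | .e => t

def key2 : CC F G → ℕ ×ₗ ℕ
  | .a x _ => toLex (0, rk x)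
  | .b y _ => toLex (1, rk y)
  | .e => toLex (2, 0)

def key : CC F G → ℕ ×ₗ (ℕ ×ₗ ℕ) := fun c => toLex (clvl F G c, key2 F G c)

lemma key_inj : Function.Injective (key F G) := by
  intro c c' h
  have h1 := congrArg (fun z : ℕ ×ₗ (ℕ ×ₗ ℕ) => (ofLex z).1) h
  have h2 := congrArg (fun z : ℕ ×ₗ (ℕ ×ₗ ℕ) => (ofLex (ofLex z).2).1) h
  have h3 := congrArg (fun z : ℕ ×ₗ (ℕ ×ₗ ℕ) => (ofLex (ofLex z).2).2) h
  cases c <;> cases c' <;>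
    simp only [key, key2, clvl, ofLex_toLex] at h1 h2 h3 <;>
    first
      | rfl
      | (cases rk_inj h3; rfl)
      | omega

noncomputable instance : LinearOrder (CC F G) := LinearOrder.lift' (key F G) (key_inj F G)

lemma cc_le_iff (c c' : CC F G) : c ≤ c' ↔ key F G c ≤ key F G c' := Iff.rfl
lemma cc_lt_iff (c c' : CC F G) : c < c' ↔ key F G c < key F G c' := Iff.rfl

lemma clvl_mono : Monotone (clvl F G) := by
  intro c c' h
  rw [cc_le_iff] at h
  simp only [key, Prod.Lex.le_iff] at h
  rcases h with h' | h'
  · exact le_of_lt h'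
  · exact le_of_eq h'.1

lemma lt_of_clvl_lt {c c' : CC F G} (h : clvl F G c < clvl F G c') : c < c' := by
  rw [cc_lt_iff]
  simp only [key, Prod.Lex.lt_iff]
  exact Or.inl h

lemma lvl_lt_t {x : α} (hx : x ≠ F.last) : F.lvl x < t :=
  lt_of_le_of_ne (F.lvl_le x) (fun h => hx ((F.lvl_last x).mp h))

lemma lvl_lt_t' {y : β} (hy : y ≠ G.last) : G.lvl y < t :=
  lt_of_le_of_ne (G.lvl_le y) (fun h => hy ((G.lvl_last y).mp h))

lemma aa_lt {x x' : α} {hx : x ≠ F.last} {hx' : x' ≠ F.last}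
    (h : (CC.a x hx : CC F G) < CC.a x' hx') :
    F.lvl x < F.lvl x' ∨ (F.lvl x = F.lvl x' ∧ x < x') := by
  rw [cc_lt_iff] at h
  simp only [key, key2, clvl, Prod.Lex.lt_iff] at h
  rcases h with h' | ⟨h1, h2⟩
  · exact Or.inl h'
  · rcases h2 with h3 | ⟨h3, h4⟩
    · simp at h3
    · exact Or.inr ⟨h1, rk_lt_iff.1 h4⟩

lemma bb_lt {y y' : β} {hy : y ≠ G.last} {hy' : y' ≠ G.last}
    (h : (CC.b y hy : CC F G) < CC.b y' hy') :
    G.lvl y < G.lvl y' ∨ (G.lvl y = G.lvl y' ∧ y < y') := by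
  rw [cc_lt_iff] at h
  simp only [key, key2, clvl, Prod.Lex.lt_iff] at h
  rcases h with h' | ⟨h1, h2⟩
  · exact Or.inl h'
  · rcases h2 with h3 | ⟨h3, h4⟩
    · simp at h3
    · exact Or.inr ⟨h1, rk_lt_iff.1 h4⟩

lemma ab_not_lt {x : α} {y : β} {hx : x ≠ F.last} {hy : y ≠ G.last}
    (hl : G.lvl y = F.lvl x) : ¬ ((CC.b y hy : CC F G) < CC.a x hx) := by
  intro h
  rw [cc_lt_iff] at h
  simp only [key, key2, clvl, Prod.Lex.lt_iff] at h
  rcases h with h' | ⟨h1, h2⟩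
  · simp only [ofLex_toLex] at h'; omega
  · rcases h2 with h3 | ⟨h3, h4⟩ <;> simp at h3

open FreeMonoid

/-- embedding of letters -/
def ja : α → CC F G := fun x => if h : x = F.last then CC.e else CC.a x h

def jb : β → CC F G := fun y => if h : y = G.last then CC.e else CC.b y h

lemma clvl_ja (x : α) : clvl F G (ja F G x) = F.lvl x := by
  rw [ja]; split
  · rename_i h; rw [clvl, h, (F.lvl_last F.last).2 rfl]
  · rfl

lemma clvl_jb (y : β) : clvl F G (jb F G y) = G.lvl y := by
  rw [jb]; split
  · rename_i h; rw [clvl, h, (G.lvl_last G.last).2 rfl]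
  · rfl

/-- embedding monoid homs -/
def phi : FreeMonoid α →* FreeMonoid (CC F G) := FreeMonoid.map (ja F G)
def psi : FreeMonoid β →* FreeMonoid (CC F G) := FreeMonoid.map (jb F G)

def u1 : CC F G → FreeMonoid (CC F G)
  | .a x _ => phi F G (F.g1 (of x))
  | .b y _ => psi F G (G.g1 (of y))
  | .e => 1

def u2 : CC F G → FreeMonoid (CC F G)
  | .a x _ => phi F G (F.g2 (of x))
  | .b y _ => psi F G (G.g2 (of y))
  | .e => 1

def Tg1 : Monoid.End (FreeMonoid (CC F G)) := FreeMonoid.lift (u1 F G)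
def Tg2 : Monoid.End (FreeMonoid (CC F G)) := FreeMonoid.lift (u2 F G)

lemma Tg1_of (c : CC F G) : Tg1 F G (of c) = u1 F G c := rfl
lemma Tg2_of (c : CC F G) : Tg2 F G (of c) = u2 F G c := rfl

lemma comm1 (w : FreeMonoid α) : Tg1 F G (phi F G w) = phi F G (F.g1 w) := by
  have : (Tg1 F G : FreeMonoid (CC F G) →* _).comp (phi F G)
      = (phi F G).comp (F.g1 : FreeMonoid α →* _) := by
    apply FreeMonoid.hom_eq
    intro x
    show Tg1 F G (phi F G (of x)) = phi F G (F.g1 (of x))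
    rw [phi, FreeMonoid.map_of]
    by_cases h : x = F.last
    · subst h
      rw [show ja F G F.last = CC.e from dif_pos rfl, Tg1_of, u1, F.g1_last, map_one]
    · rw [show ja F G x = CC.a x h from dif_neg h, Tg1_of]
      rfl
  exact DFunLike.congr_fun this w

lemma comm1' (w : FreeMonoid β) : Tg1 F G (psi F G w) = psi F G (G.g1 w) := by
  have : (Tg1 F G : FreeMonoid (CC F G) →* _).comp (psi F G)
      = (psi F G).comp (G.g1 : FreeMonoid β →* _) := by
    apply FreeMonoid.hom_eq
    intro y
    show Tg1 F G (psi F G (of y)) = psi F G (G.g1 (of y))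
    rw [psi, FreeMonoid.map_of]
    by_cases h : y = G.last
    · subst h
      rw [show jb F G G.last = CC.e from dif_pos rfl, Tg1_of, u1, G.g1_last, map_one]
    · rw [show jb F G y = CC.b y h from dif_neg h, Tg1_of]
      rfl
  exact DFunLike.congr_fun this w

lemma comm2 (w : FreeMonoid α) : Tg2 F G (phi F G w) = phi F G (F.g2 w) := by
  have : (Tg2 F G : FreeMonoid (CC F G) →* _).comp (phi F G)
      = (phi F G).comp (F.g2 : FreeMonoid α →* _) := by
    apply FreeMonoid.hom_eq
    intro x
    show Tg2 F G (phi F G (of x)) = phi F G (F.g2 (of x))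
    rw [phi, FreeMonoid.map_of]
    by_cases h : x = F.last
    · subst h
      rw [show ja F G F.last = CC.e from dif_pos rfl, Tg2_of, u2, F.g2_last, map_one]
    · rw [show ja F G x = CC.a x h from dif_neg h, Tg2_of]
      rfl
  exact DFunLike.congr_fun this w

lemma comm2' (w : FreeMonoid β) : Tg2 F G (psi F G w) = psi F G (G.g2 w) := by
  have : (Tg2 F G : FreeMonoid (CC F G) →* _).comp (psi F G)
      = (psi F G).comp (G.g2 : FreeMonoid β →* _) := by
    apply FreeMonoid.hom_eq
    intro y
    show Tg2 F G (psi F G (of y)) = psi F G (G.g2 (of y))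
    rw [psi, FreeMonoid.map_of]
    by_cases h : y = G.last
    · subst h
      rw [show jb F G G.last = CC.e from dif_pos rfl, Tg2_of, u2, G.g2_last, map_one]
    · rw [show jb F G y = CC.b y h from dif_neg h, Tg2_of]
      rfl
  exact DFunLike.congr_fun this w


/-! ### membership lemmas -/

lemma mem_phi {w : FreeMonoid α} {c : CC F G} (h : c ∈ toList (phi F G w)) :
    ∃ z ∈ toList w, ja F G z = c := by
  rw [phi, FreeMonoid.toList_map] at h
  exact List.mem_map.1 h

lemma mem_psi {w : FreeMonoid β} {c : CC F G} (h : c ∈ toList (psi F G w)) :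
    ∃ z ∈ toList w, jb F G z = c := by
  rw [psi, FreeMonoid.toList_map] at h
  exact List.mem_map.1 h

/-! ### the combined M-triple -/

def TT : MTriple t (CC F G) where
  g1 := Tg1 F G
  g2 := Tg2 F G
  lvl := clvl F G
  lvl_mono := clvl_mono F G
  lvl_le := by
    intro c
    cases c with
    | a x hx => exact le_of_lt (lvl_lt_t F hx)
    | b y hy => exact le_of_lt (lvl_lt_t' G hy)
    | e => exact le_refl t
  lvl_surj := by
    intro i hi
    rcases eq_or_lt_of_le hi with h | h
    · exact ⟨CC.e, h.symm⟩
    · obtain ⟨x, hx⟩ := F.lvl_surj i (le_of_lt h)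
      have hne : x ≠ F.last := by
        intro he; subst he
        rw [(F.lvl_last F.last).2 rfl] at hx; omega
      exact ⟨CC.a x hne, hx⟩
  tri_g1 := by
    intro c y hlt hy
    cases c with
    | a x hx =>
      rw [Tg1_of] at hy
      simp only [u1] at hy
      obtain ⟨z, hz, rfl⟩ := mem_phi F G hy
      have hlz := F.g1_lvl x z hz
      have hxlt := lvl_lt_t F hx
      have hzne : z ≠ F.last := by
        intro he; subst he
        rw [(F.lvl_last F.last).2 rfl] at hlz; omega
      rw [show ja F G z = CC.a z hzne from dif_neg hzne] at hlt
      rcases aa_lt F G hlt with h | ⟨_, h⟩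
      · omega
      · exact F.tri_g1 x z h hz
    | b y' hy' =>
      rw [Tg1_of] at hy
      simp only [u1] at hy
      obtain ⟨z, hz, rfl⟩ := mem_psi F G hy
      have hlz := G.g1_lvl y' z hz
      have hylt := lvl_lt_t' G hy'
      have hzne : z ≠ G.last := by
        intro he; subst he
        rw [(G.lvl_last G.last).2 rfl] at hlz; omega
      rw [show jb F G z = CC.b z hzne from dif_neg hzne] at hlt
      rcases bb_lt F G hlt with h | ⟨_, h⟩
      · omega
      · exact G.tri_g1 y' z h hz
    | e =>
      rw [Tg1_of] at hy
      simp only [u1, toList_one] at hy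
      exact List.not_mem_nil hy
  tri_g2 := by
    intro c y hlt hy
    have hmono := clvl_mono F G (le_of_lt hlt)
    cases c with
    | a x hx =>
      rw [Tg2_of] at hy
      simp only [u2] at hy
      obtain ⟨z, hz, rfl⟩ := mem_phi F G hy
      have hlz := F.g2_lvl x (lvl_lt_t F hx) z hz
      rw [clvl_ja] at hmono
      simp only [clvl] at hmono
      omega
    | b y' hy' =>
      rw [Tg2_of] at hy
      simp only [u2] at hy
      obtain ⟨z, hz, rfl⟩ := mem_psi F G hy
      have hlz := G.g2_lvl y' (lvl_lt_t' G hy') z hz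
      rw [clvl_jb] at hmono
      simp only [clvl] at hmono
      omega
    | e =>
      rw [Tg2_of] at hy
      simp only [u2, toList_one] at hy
      exact List.not_mem_nil hy
  last := CC.e
  last_top := by
    intro c
    cases c with
    | a x hx => exact le_of_lt (lt_of_clvl_lt F G (by simpa [clvl] using lvl_lt_t F hx))
    | b y hy => exact le_of_lt (lt_of_clvl_lt F G (by simpa [clvl] using lvl_lt_t' G hy))
    | e => exact le_refl _
  lvl_last := by
    intro c
    cases c with
    | a x hx =>
      simp only [clvl]
      constructor
      · intro h; exact absurd h (Nat.ne_of_lt (lvl_lt_t F hx))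
      · intro h; cases h
    | b y hy =>
      simp only [clvl]
      constructor
      · intro h; exact absurd h (Nat.ne_of_lt (lvl_lt_t' G hy))
      · intro h; cases h
    | e => simp [clvl]
  g1_lvl := by
    intro c y hy
    cases c with
    | a x hx =>
      rw [Tg1_of] at hy
      simp only [u1] at hy
      obtain ⟨z, hz, rfl⟩ := mem_phi F G hy
      rw [clvl_ja, F.g1_lvl x z hz]; rfl
    | b y' hy' =>
      rw [Tg1_of] at hy
      simp only [u1] at hy
      obtain ⟨z, hz, rfl⟩ := mem_psi F G hy
      rw [clvl_jb, G.g1_lvl y' z hz]; rfl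
    | e =>
      rw [Tg1_of] at hy
      simp only [u1, toList_one] at hy
      exact absurd hy List.not_mem_nil
  g2_lvl := by
    intro c hc y hy
    cases c with
    | a x hx =>
      rw [Tg2_of] at hy
      simp only [u2] at hy
      obtain ⟨z, hz, rfl⟩ := mem_phi F G hy
      rw [clvl_ja, F.g2_lvl x (lvl_lt_t F hx) z hz]; rfl
    | b y' hy' =>
      rw [Tg2_of] at hy
      simp only [u2] at hy
      obtain ⟨z, hz, rfl⟩ := mem_psi F G hy
      rw [clvl_jb, G.g2_lvl y' (lvl_lt_t' G hy') z hz]; rfl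
    | e =>
      simp only [clvl] at hc
      omega
  g2_sq := by
    intro c
    cases c with
    | a x hx =>
      rw [Tg2_of]
      simp only [u2]
      rw [comm2, F.g2_sq, map_one]
    | b y hy =>
      rw [Tg2_of]
      simp only [u2]
      rw [comm2', G.g2_sq, map_one]
    | e =>
      rw [Tg2_of]
      simp only [u2]
      rw [map_one]
  g1_last := by rw [Tg1_of]; rfl
  g2_last := by rw [Tg2_of]; rfl

/-! ### generic fold lemmas -/

section fold

variable {γ : Type} [Fintype γ] [LinearOrder γ]

lemma end_pow_apply (g : Monoid.End (FreeMonoid γ)) (k : ℕ) (u : FreeMonoid γ) :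
    (g ^ (k + 1)) u = (g ^ k) (g u) := by
  rw [pow_succ]; rfl

lemma mem_toList_pow {u : FreeMonoid γ} {k : ℕ} {y : γ}
    (h : y ∈ toList (u ^ k)) : y ∈ toList u := by
  induction k with
  | zero => rw [pow_zero] at h; exact absurd h List.not_mem_nil
  | succ n ih =>
    rw [pow_succ, toList_mul, List.mem_append] at h
    rcases h with h | h
    · exact ih h
    · exact h

lemma fold_mul (g1 g2 : Monoid.End (FreeMonoid γ)) (n : Fin t → ℕ) (l : List (Fin t)) :
    ∀ u v : FreeMonoid γ,
      l.foldl (fun u i => g2 ((g1 ^ n i) u)) (u * v)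
        = l.foldl (fun u i => g2 ((g1 ^ n i) u)) u
          * l.foldl (fun u i => g2 ((g1 ^ n i) u)) v := by
  induction l with
  | nil => intro u v; rfl
  | cons i l ih =>
    intro u v
    simp only [List.foldl_cons]
    rw [map_mul (g1 ^ n i), map_mul g2, ih]

lemma fold_one (g1 g2 : Monoid.End (FreeMonoid γ)) (n : Fin t → ℕ) (l : List (Fin t)) :
    l.foldl (fun u i => g2 ((g1 ^ n i) u)) 1 = 1 := by
  induction l with
  | nil => rfl
  | cons i l ih =>
    simp only [List.foldl_cons]
    rw [map_one (g1 ^ n i), map_one g2, ih]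

lemma fold_pow (g1 g2 : Monoid.End (FreeMonoid γ)) (n : Fin t → ℕ) (l : List (Fin t))
    (u : FreeMonoid γ) (k : ℕ) :
    l.foldl (fun u i => g2 ((g1 ^ n i) u)) (u ^ k)
      = (l.foldl (fun u i => g2 ((g1 ^ n i) u)) u) ^ k := by
  induction k with
  | zero => rw [pow_zero, pow_zero]; exact fold_one g1 g2 n l
  | succ m ih => rw [pow_succ, pow_succ, fold_mul g1 g2 n l, ih]

end fold

/-! ### fold commutation for the combined triple -/

lemma pow_comm1 (k : ℕ) (w : FreeMonoid α) :
    ((Tg1 F G) ^ k) (phi F G w) = phi F G ((F.g1 ^ k) w) := by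
  induction k generalizing w with
  | zero => rfl
  | succ m ih => rw [end_pow_apply, end_pow_apply, comm1, ih]

lemma pow_comm1' (k : ℕ) (w : FreeMonoid β) :
    ((Tg1 F G) ^ k) (psi F G w) = psi F G ((G.g1 ^ k) w) := by
  induction k generalizing w with
  | zero => rfl
  | succ m ih => rw [end_pow_apply, end_pow_apply, comm1', ih]

lemma fold_comm (n : Fin t → ℕ) (l : List (Fin t)) :
    ∀ w : FreeMonoid α,
      l.foldl (fun u i => Tg2 F G (((Tg1 F G) ^ n i) u)) (phi F G w)
        = phi F G (l.foldl (fun u i => F.g2 ((F.g1 ^ n i) u)) w) := by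
  induction l with
  | nil => intro w; rfl
  | cons i l ih =>
    intro w
    simp only [List.foldl_cons]
    rw [pow_comm1, comm2, ih]

lemma fold_comm' (n : Fin t → ℕ) (l : List (Fin t)) :
    ∀ w : FreeMonoid β,
      l.foldl (fun u i => Tg2 F G (((Tg1 F G) ^ n i) u)) (psi F G w)
        = psi F G (l.foldl (fun u i => G.g2 ((G.g1 ^ n i) u)) w) := by
  induction l with
  | nil => intro w; rfl
  | cons i l ih =>
    intro w
    simp only [List.foldl_cons]
    rw [pow_comm1', comm2', ih]

/-! ### combined computability -/

lemma comb {p q : (Fin t → ℕ) → ℕ} (hp : ComputableBy F p) (hq : ComputableBy G q)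
    (a b : ℕ) : ComputableBy (TT F G) (fun n => a * p n + b * q n) := by
  obtain ⟨wF, hwF0, hwF⟩ := hp
  obtain ⟨wG, hwG0, hwG⟩ := hq
  refine ⟨(phi F G wF) ^ a * (psi F G wG) ^ b, ?_, ?_⟩
  · intro y hy
    rw [toList_mul, List.mem_append] at hy
    rcases hy with hy | hy
    · obtain ⟨z, hz, rfl⟩ := mem_phi F G (mem_toList_pow hy)
      show clvl F G _ = 0
      rw [clvl_ja, hwF0 z hz]
    · obtain ⟨z, hz, rfl⟩ := mem_psi F G (mem_toList_pow hy)
      show clvl F G _ = 0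
      rw [clvl_jb, hwG0 z hz]
  · intro n hn
    simp only [show (TT F G).g2 = Tg2 F G from rfl, show (TT F G).g1 = Tg1 F G from rfl,
      show (TT F G).last = CC.e from rfl]
    rw [fold_mul (Tg1 F G) (Tg2 F G) n, fold_pow, fold_pow, fold_comm, fold_comm',
      hwF n hn, hwG n hn, map_pow, map_pow]
    rw [phi, psi, FreeMonoid.map_of, FreeMonoid.map_of,
      show ja F G F.last = CC.e from dif_pos rfl, show jb F G G.last = CC.e from dif_pos rfl,
      ← pow_mul, ← pow_mul, ← pow_add]
    ring_nf


/-! ### transport to Fin m -/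

section transport

variable {γ : Type} [Fintype γ] [LinearOrder γ]

noncomputable def E0 (γ : Type) [Fintype γ] [LinearOrder γ] : Fin (Fintype.card γ) ≃o γ :=
  monoEquivOfFin γ rfl

noncomputable def mf (γ : Type) [Fintype γ] [LinearOrder γ] :
    FreeMonoid (Fin (Fintype.card γ)) →* FreeMonoid γ :=
  FreeMonoid.map (E0 γ)

noncomputable def mg (γ : Type) [Fintype γ] [LinearOrder γ] :
    FreeMonoid γ →* FreeMonoid (Fin (Fintype.card γ)) :=
  FreeMonoid.map (E0 γ).symm

lemma mg_mf (w : FreeMonoid (Fin (Fintype.card γ))) : mg γ (mf γ w) = w := by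
  rw [mf, mg, FreeMonoid.map_map,
    show (⇑(E0 γ).symm ∘ ⇑(E0 γ)) = id from funext fun i => (E0 γ).symm_apply_apply i,
    FreeMonoid.map_id]
  rfl

lemma mf_mg (w : FreeMonoid γ) : mf γ (mg γ w) = w := by
  rw [mf, mg, FreeMonoid.map_map,
    show (⇑(E0 γ) ∘ ⇑(E0 γ).symm) = id from funext fun i => (E0 γ).apply_symm_apply i,
    FreeMonoid.map_id]
  rfl

variable (T : MTriple t γ)

noncomputable def TF : MTriple t (Fin (Fintype.card γ)) where
  g1 := (mg γ).comp ((T.g1 : FreeMonoid γ →* FreeMonoid γ).comp (mf γ))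
  g2 := (mg γ).comp ((T.g2 : FreeMonoid γ →* FreeMonoid γ).comp (mf γ))
  lvl := fun i => T.lvl (E0 γ i)
  lvl_mono := fun i j h => T.lvl_mono ((E0 γ).monotone h)
  lvl_le := fun i => T.lvl_le _
  lvl_surj := by
    intro i hi
    obtain ⟨x, hx⟩ := T.lvl_surj i hi
    refine ⟨(E0 γ).symm x, ?_⟩
    show T.lvl (E0 γ ((E0 γ).symm x)) = i
    rw [(E0 γ).apply_symm_apply]; exact hx
  tri_g1 := by
    intro i j hlt hj
    have hj' : j ∈ (toList (T.g1 (mf γ (of i)))).map ⇑(E0 γ).symm := hj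
    obtain ⟨z, hz, hzj⟩ := List.mem_map.1 hj'
    have hze : z = E0 γ j := by rw [← hzj, (E0 γ).apply_symm_apply]
    subst hze
    have : mf γ (of i) = of (E0 γ i) := rfl
    rw [this] at hz
    exact T.tri_g1 (E0 γ i) (E0 γ j) ((E0 γ).lt_iff_lt.2 hlt) hz
  tri_g2 := by
    intro i j hlt hj
    have hj' : j ∈ (toList (T.g2 (mf γ (of i)))).map ⇑(E0 γ).symm := hj
    obtain ⟨z, hz, hzj⟩ := List.mem_map.1 hj'
    have hze : z = E0 γ j := by rw [← hzj, (E0 γ).apply_symm_apply]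
    subst hze
    have : mf γ (of i) = of (E0 γ i) := rfl
    rw [this] at hz
    exact T.tri_g2 (E0 γ i) (E0 γ j) ((E0 γ).lt_iff_lt.2 hlt) hz
  last := (E0 γ).symm T.last
  last_top := by
    intro i
    have := T.last_top (E0 γ i)
    rw [← (E0 γ).apply_symm_apply T.last, (E0 γ).le_iff_le] at this
    exact this
  lvl_last := by
    intro i
    rw [T.lvl_last]
    constructor
    · intro h
      rw [← h, (E0 γ).symm_apply_apply]
    · intro h
      rw [h, (E0 γ).apply_symm_apply]
  g1_lvl := by
    intro i j hj
    have hj' : j ∈ (toList (T.g1 (mf γ (of i)))).map ⇑(E0 γ).symm := hj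
    obtain ⟨z, hz, hzj⟩ := List.mem_map.1 hj'
    have hze : z = E0 γ j := by rw [← hzj, (E0 γ).apply_symm_apply]
    subst hze
    have : mf γ (of i) = of (E0 γ i) := rfl
    rw [this] at hz
    exact T.g1_lvl (E0 γ i) (E0 γ j) hz
  g2_lvl := by
    intro i hi j hj
    have hj' : j ∈ (toList (T.g2 (mf γ (of i)))).map ⇑(E0 γ).symm := hj
    obtain ⟨z, hz, hzj⟩ := List.mem_map.1 hj'
    have hze : z = E0 γ j := by rw [← hzj, (E0 γ).apply_symm_apply]
    subst hze
    have : mf γ (of i) = of (E0 γ i) := rfl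
    rw [this] at hz
    exact T.g2_lvl (E0 γ i) hi (E0 γ j) hz
  g2_sq := by
    intro i
    show mg γ (T.g2 (mf γ (mg γ (T.g2 (mf γ (of i)))))) = 1
    rw [mf_mg, show mf γ (of i) = of (E0 γ i) from rfl, T.g2_sq, map_one]
  g1_last := by
    show mg γ (T.g1 (mf γ (of ((E0 γ).symm T.last)))) = 1
    rw [show mf γ (of ((E0 γ).symm T.last)) = of (E0 γ ((E0 γ).symm T.last)) from rfl,
      (E0 γ).apply_symm_apply, T.g1_last, map_one]
  g2_last := by
    show mg γ (T.g2 (mf γ (of ((E0 γ).symm T.last)))) = 1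
    rw [show mf γ (of ((E0 γ).symm T.last)) = of (E0 γ ((E0 γ).symm T.last)) from rfl,
      (E0 γ).apply_symm_apply, T.g2_last, map_one]

lemma TF_pow (k : ℕ) (u : FreeMonoid (Fin (Fintype.card γ))) :
    ((TF T).g1 ^ k) u = mg γ ((T.g1 ^ k) (mf γ u)) := by
  induction k generalizing u with
  | zero => exact (mg_mf u).symm
  | succ m ih =>
    rw [end_pow_apply, end_pow_apply, ih]
    show mg γ ((T.g1 ^ m) (mf γ (mg γ (T.g1 (mf γ u))))) = _
    rw [mf_mg]

lemma TF_fold (n : Fin t → ℕ) (l : List (Fin t)) :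
    ∀ w : FreeMonoid γ,
      l.foldl (fun u i => (TF T).g2 (((TF T).g1 ^ n i) u)) (mg γ w)
        = mg γ (l.foldl (fun u i => T.g2 ((T.g1 ^ n i) u)) w) := by
  induction l with
  | nil => intro w; rfl
  | cons i l ih =>
    intro w
    simp only [List.foldl_cons]
    have : (TF T).g2 (((TF T).g1 ^ n i) (mg γ w)) = mg γ (T.g2 ((T.g1 ^ n i) w)) := by
      rw [TF_pow, mf_mg]
      show mg γ (T.g2 (mf γ (mg γ ((T.g1 ^ n i) w)))) = _
      rw [mf_mg]
    rw [this, ih]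

lemma transport (f : (Fin t → ℕ) → ℕ) (h : ComputableBy T f) :
    ∃ (m : ℕ) (T' : MTriple t (Fin m)), ComputableBy T' f := by
  obtain ⟨w, hw0, hw⟩ := h
  refine ⟨Fintype.card γ, TF T, mg γ w, ?_, ?_⟩
  · intro j hj
    have hj' : j ∈ (toList w).map ⇑(E0 γ).symm := hj
    obtain ⟨z, hz, hzj⟩ := List.mem_map.1 hj'
    have hze : z = E0 γ j := by rw [← hzj, (E0 γ).apply_symm_apply]
    subst hze
    show T.lvl (E0 γ j) = 0
    exact hw0 (E0 γ j) hz
  · intro n hn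
    rw [TF_fold, hw n hn, map_pow]
    rfl

end transport

end S3

/-- positive ℕ-linear combinations of maps computable by M-triples of
the same dimension (over disjoint alphabets, modelled here by two distinct alphabet
types) are computable by an M-triple. -/
theorem statement3 (t : ℕ) (ht : 0 < t)
    (α β : Type) [Fintype α] [LinearOrder α] [Fintype β] [LinearOrder β]
    (F : MTriple t α) (G : MTriple t β)
    (p q : (Fin t → ℕ) → ℕ)
    (hp_pos : ∀ n : Fin t → ℕ, (∀ i, 0 < n i) → 0 < p n)
    (hq_pos : ∀ n : Fin t → ℕ, (∀ i, 0 < n i) → 0 < q n)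
    (hp : ComputableBy F p) (hq : ComputableBy G q)
    (a b : ℕ) (ha : 0 < a) (hb : 0 < b) :
    ∃ (m : ℕ) (T : MTriple t (Fin m)),
      ComputableBy T (fun n => a * p n + b * q n) := by
  exact S3.transport (S3.TT F G) _ (S3.comb F G hp hq a b)
end

section
/- Let p(x1,…,xt) be a nonzero polynomial in t variables with nonnegative integer coefficients (so p takes positive values on positive integer arguments). Then there exists an M-triple G of dimension t such that the map (n1,…,nt) ↦ p(n1,…,nt) from ℤ₊^t to ℤ₊ is computable by G. -/
open FreeMonoid

lemma count_end_list {α : Type} [DecidableEq α] (g : Monoid.End (FreeMonoid α)) (l : List α) (y : α) :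
    (toList (g (ofList l))).count y = (l.map (fun x => (toList (g (of x))).count y)).sum := by
  induction l with
  | nil => simp [show (ofList ([] : List α)) = 1 from rfl]
  | cons x xs ih =>
      have : ofList (x :: xs) = of x * ofList xs := rfl
      rw [this, map_mul]
      simp [toList_mul, List.count_append, ih]

lemma count_end {α : Type} [DecidableEq α] (g : Monoid.End (FreeMonoid α)) (w : FreeMonoid α) (y : α) :
    (toList (g w)).count y = ((toList w).map (fun x => (toList (g (of x))).count y)).sum := by
  have := count_end_list g (toList w) y
  simpa using this

lemma mem_end {α : Type} [DecidableEq α] (g : Monoid.End (FreeMonoid α)) (w : FreeMonoid α) (y : α) :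
    y ∈ toList (g w) ↔ ∃ x ∈ toList w, y ∈ toList (g (of x)) := by
  induction' h : toList w with x xs ih generalizing w
  · have : w = 1 := by apply FreeMonoid.toList.injective; simp [h]
    simp [this]
  · have hw : w = of x * ofList xs := by apply FreeMonoid.toList.injective; simp [h]
    subst hw
    rw [map_mul, toList_mul, List.mem_append, ih (ofList xs) (by simp)]
    simp

lemma map_sum_count {α : Type} [Fintype α] [DecidableEq α] (l : List α) (h : α → ℕ) :
    (l.map h).sum = ∑ x : α, l.count x * h x := by
  induction l with
  | nil => simp
  | cons a l ih =>
      simp only [List.map_cons, List.sum_cons, ih, List.count_cons]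
      have : ∀ x : α, (l.count x + if (a == x) = true then 1 else 0) * h x
          = l.count x * h x + (if a = x then h x else 0) := by
        intro x; by_cases hx : a = x <;> simp [hx] <;> ring
      simp only [this, Finset.sum_add_distrib, Finset.sum_ite_eq, Finset.mem_univ, if_true]
      ring
        
lemma count_end' {α : Type} [Fintype α] [DecidableEq α] (g : Monoid.End (FreeMonoid α)) (w : FreeMonoid α) (y : α) :
    (toList (g w)).count y = ∑ x : α, (toList w).count x * (toList (g (of x))).count y := by
  rw [count_end, map_sum_count]

lemma pow_apply_succ {α : Type} (g : Monoid.End (FreeMonoid α)) (n : ℕ) (w : FreeMonoid α) :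
    (g ^ (n+1)) w = (g ^ n) (g w) := by
  rw [pow_succ]; rfl


lemma choose_shift (m j : ℕ) :
    (m + 1) * Nat.choose m j = (j + 1) * Nat.choose m j + (j + 1) * Nat.choose m (j + 1) := by
  have h := Nat.add_one_mul_choose_eq m j
  rw [Nat.choose_succ_succ] at h
  calc (m+1) * Nat.choose m j = Nat.succ m * Nat.choose m j := rfl
    _ = (Nat.choose m j + Nat.choose m (j+1)) * (j+1) := by rw [h]
    _ = _ := by ring

lemma mul_step {t : ℕ} (i : Fin t) (m : Fin t → ℕ) (L : List (Fin t → ℕ)) :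
    (L.map (fun j => ∏ i', Nat.choose (m i') (j i'))).sum * (m i + 1) =
    ((L.flatMap (fun j => List.replicate (j i + 1) j
        ++ List.replicate (j i + 1) (Function.update j i (j i + 1)))).map
      (fun j => ∏ i', Nat.choose (m i') (j i'))).sum := by
  induction L with
  | nil => simp
  | cons j L ih =>
      simp only [List.map_cons, List.sum_cons, List.flatMap_cons, List.map_append,
        List.sum_append, Nat.add_mul, ih, List.map_replicate, List.sum_replicate, smul_eq_mul]
      congr 1
      rw [Finset.prod_eq_mul_prod_sdiff_singleton_of_mem (Finset.mem_univ i)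
        (fun i' => Nat.choose (m i') (j i'))]
      rw [Finset.prod_eq_mul_prod_sdiff_singleton_of_mem (Finset.mem_univ i)
        (fun i' => Nat.choose (m i') (Function.update j i (j i + 1) i'))]
      have hrest : (∏ i' ∈ Finset.univ \ {i}, Nat.choose (m i') (Function.update j i (j i + 1) i'))
          = ∏ i' ∈ Finset.univ \ {i}, Nat.choose (m i') (j i') := by
        refine Finset.prod_congr rfl (fun x hx => ?_)
        rw [Function.update_of_ne (by simp at hx; exact hx)]
      rw [hrest, Function.update_self]
      have := choose_shift (m i) (j i)
      set P := ∏ i' ∈ Finset.univ \ {i}, Nat.choose (m i') (j i')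
      calc Nat.choose (m i) (j i) * P * (m i + 1)
          = ((m i + 1) * Nat.choose (m i) (j i)) * P := by ring
        _ = ((j i + 1) * Nat.choose (m i) (j i) + (j i + 1) * Nat.choose (m i) (j i + 1)) * P := by rw [this]
        _ = _ := by ring

lemma rep_exists (t : ℕ) (p : MvPolynomial (Fin t) ℕ) :
    ∃ L : List (Fin t → ℕ), ∀ m : Fin t → ℕ,
      MvPolynomial.eval (fun i => m i + 1) p
        = (L.map (fun j => ∏ i, Nat.choose (m i) (j i))).sum := by
  induction p using MvPolynomial.induction_on with
  | C a =>
      refine ⟨List.replicate a (fun _ => 0), fun m => ?_⟩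
      simp [List.map_replicate, List.sum_replicate]
  | add p q hp hq =>
      obtain ⟨L1, h1⟩ := hp; obtain ⟨L2, h2⟩ := hq
      exact ⟨L1 ++ L2, fun m => by simp [h1, h2]⟩
  | mul_X p i hp =>
      obtain ⟨L, hL⟩ := hp
      refine ⟨L.flatMap (fun j => List.replicate (j i + 1) j
        ++ List.replicate (j i + 1) (Function.update j i (j i + 1))), fun m => ?_⟩
      rw [map_mul, hL, MvPolynomial.eval_X]
      exact mul_step i m L


namespace S4

def mm (t N K : ℕ) : ℕ := t*(N+1)*K + 1

def enc (N K i r l : ℕ) : ℕ := (i*(N+1)+r)*K + l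

variable (t N K : ℕ) (k : ℕ → ℕ → ℕ)

def toF (v : ℕ) : Fin (mm t N K) := ⟨v % mm t N K, Nat.mod_lt _ (Nat.succ_pos _)⟩

def iIdx (x : ℕ) : ℕ := x / ((N+1)*K)
def rIdx (x : ℕ) : ℕ := (x/K) % (N+1)
def lIdx (x : ℕ) : ℕ := x % K
def kk (x : ℕ) : ℕ := k (rIdx N K x) (iIdx N K x)

def f1 (x : Fin (mm t N K)) : FreeMonoid (Fin (mm t N K)) :=
  if x.val = t*(N+1)*K then 1
  else if rIdx N K x.val < N ∧ lIdx K x.val ≤ kk N K k x.val + 1 then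
    if lIdx K x.val = 0 then .of (toF t N K (x.val+1))
    else if lIdx K x.val = kk N K k x.val + 1 then .of x
    else .of x * .of (toF t N K (x.val+1))
  else .of x

def f2 (x : Fin (mm t N K)) : FreeMonoid (Fin (mm t N K)) :=
  if x.val ≠ t*(N+1)*K ∧ rIdx N K x.val < N ∧ lIdx K x.val = kk N K k x.val + 1 then
    if iIdx N K x.val + 1 < t then .of (toF t N K (enc N K (iIdx N K x.val+1) (rIdx N K x.val) 0))
    else .of (toF t N K (t*(N+1)*K))
  else 1

def g1 : Monoid.End (FreeMonoid (Fin (mm t N K))) := FreeMonoid.lift (f1 t N K k)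
def g2 : Monoid.End (FreeMonoid (Fin (mm t N K))) := FreeMonoid.lift (f2 t N K k)

def lvl (x : Fin (mm t N K)) : ℕ := iIdx N K x.val

section decode
variable (hK : 2 ≤ K)


lemma enc_lt {i r l : ℕ} (hi : i < t) (hr : r < N+1) (hl : l < K) :
    enc N K i r l < t*(N+1)*K := by
  unfold enc
  have h1 : i*(N+1)+r+1 ≤ t*(N+1) := by nlinarith
  have h2 : (i*(N+1)+r)*K + l < (i*(N+1)+r+1)*K := by nlinarith
  have h3 : (i*(N+1)+r+1)*K ≤ t*(N+1)*K := Nat.mul_le_mul_right K h1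
  omega

lemma toF_val {v : ℕ} (hv : v < mm t N K) : (toF t N K v).val = v := Nat.mod_eq_of_lt hv

lemma enc_mod_K {i r l : ℕ} (hl : l < K) : lIdx K (enc N K i r l) = l := by
  unfold lIdx enc
  rw [Nat.add_comm, Nat.add_mul_mod_self_right, Nat.mod_eq_of_lt hl]

lemma enc_div_K {i r l : ℕ} (hK : 0 < K) (hl : l < K) : enc N K i r l / K = i*(N+1)+r := by
  unfold enc
  rw [Nat.add_comm, Nat.add_mul_div_right _ _ (by omega : 0 < K), Nat.div_eq_of_lt hl]
  omega

lemma enc_rIdx {i r l : ℕ} (hK : 0 < K) (hr : r < N+1) (hl : l < K) : rIdx N K (enc N K i r l) = r := by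
  unfold rIdx
  rw [enc_div_K N K hK hl, Nat.add_comm, Nat.add_mul_mod_self_right, Nat.mod_eq_of_lt hr]

lemma enc_iIdx {i r l : ℕ} (hK : 0 < K) (hr : r < N+1) (hl : l < K) : iIdx N K (enc N K i r l) = i := by
  unfold iIdx
  have h : enc N K i r l = (r*K+l) + i * ((N+1)*K) := by unfold enc; ring
  rw [h, Nat.add_mul_div_right _ _ (Nat.mul_pos (by omega : 0 < N+1) hK)]
  have : r*K + l < (N+1)*K := by nlinarith
  rw [Nat.div_eq_of_lt this]; omega

lemma decode {x : ℕ} (hK : 0 < K) (hx : x < t*(N+1)*K) :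
    iIdx N K x < t ∧ rIdx N K x < N+1 ∧ lIdx K x < K ∧
      x = enc N K (iIdx N K x) (rIdx N K x) (lIdx K x) := by
  have hK0 : 0 < K := hK
  refine ⟨?_, Nat.mod_lt _ (by omega : 0 < N+1), Nat.mod_lt _ hK0, ?_⟩
  · unfold iIdx
    rw [Nat.div_lt_iff_lt_mul (Nat.mul_pos (by omega : 0 < N+1) hK)]
    calc x < t*(N+1)*K := hx
      _ = t * ((N+1)*K) := by ring
  · unfold enc rIdx lIdx iIdx
    have h1 : x / K / (N+1) = x / ((N+1)*K) := by
      rw [Nat.div_div_eq_div_mul, Nat.mul_comm]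
    rw [← h1]
    have h2 : (x/K/(N+1))*(N+1) + (x/K)%(N+1) = x / K := by
      rw [Nat.mul_comm]; exact Nat.div_add_mod _ _
    have h3 : (x/K)*K + x % K = x := by rw [Nat.mul_comm]; exact Nat.div_add_mod _ _
    rw [h2, h3]
    
end decode

section eval
variable (hK : 2 ≤ K) (hk : ∀ r i, r < N → i < t → k r i + 2 ≤ K)


def encF (i r l : ℕ) : Fin (mm t N K) := toF t N K (enc N K i r l)


lemma lastF_val : (toF t N K (t*(N+1)*K)).val = t*(N+1)*K :=
  toF_val t N K (Nat.lt_succ_self _)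

lemma encF_val {i r l : ℕ} (hi : i < t) (hr : r < N+1) (hl : l < K) :
    (encF t N K i r l).val = enc N K i r l :=
  toF_val t N K (by have := enc_lt t N K hi hr hl; unfold mm; omega)

lemma f1_seed {i r : ℕ} (hi : i < t) (hr : r < N) (hki : k r i + 2 ≤ K) :
    f1 t N K k (encF t N K i r 0) = .of (encF t N K i r 1) := by
  have h0 : (0:ℕ) < K := by omega
  have hv := encF_val t N K hi (by omega : r < N+1) h0
  have hlt := enc_lt t N K hi (by omega : r < N+1) h0
  unfold f1
  rw [hv, enc_rIdx N K (by omega : 0 < K) (by omega : r < N+1) h0, enc_mod_K N K h0]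
  unfold kk
  rw [enc_rIdx N K (by omega : 0 < K) (by omega : r < N+1) h0, enc_iIdx N K (by omega : 0 < K) (by omega : r < N+1) h0]
  have : enc N K i r 0 + 1 = enc N K i r 1 := by unfold enc; ring
  simp only [if_neg (show ¬ enc N K i r 0 = t*(N+1)*K by omega),
    if_pos (show r < N ∧ 0 ≤ k r i + 1 by omega), if_pos rfl, this]
  rfl

lemma f1_chain {i r l : ℕ} (hi : i < t) (hr : r < N) (hki : k r i + 2 ≤ K)
    (hl1 : 1 ≤ l) (hl2 : l ≤ k r i) :
    f1 t N K k (encF t N K i r l) = .of (encF t N K i r l) * .of (encF t N K i r (l+1)) := by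
  have hlK : l < K := by omega
  have hv := encF_val t N K hi (by omega : r < N+1) hlK
  have hlt := enc_lt t N K hi (by omega : r < N+1) hlK
  unfold f1
  rw [hv, enc_rIdx N K (by omega : 0 < K) (by omega : r < N+1) hlK, enc_mod_K N K hlK]
  unfold kk
  rw [enc_rIdx N K (by omega : 0 < K) (by omega : r < N+1) hlK, enc_iIdx N K (by omega : 0 < K) (by omega : r < N+1) hlK]
  have : enc N K i r l + 1 = enc N K i r (l+1) := by unfold enc; ring
  simp only [if_neg (show ¬ enc N K i r l = t*(N+1)*K by omega),
    if_pos (show r < N ∧ l ≤ k r i + 1 by omega),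
    if_neg (show ¬ l = 0 by omega), if_neg (show ¬ l = k r i + 1 by omega), this]
  rfl

lemma f1_top {i r : ℕ} (hi : i < t) (hr : r < N) (hki : k r i + 2 ≤ K) :
    f1 t N K k (encF t N K i r (k r i + 1)) = .of (encF t N K i r (k r i + 1)) := by
  have hlK : k r i + 1 < K := by omega
  have hv := encF_val t N K hi (by omega : r < N+1) hlK
  have hlt := enc_lt t N K hi (by omega : r < N+1) hlK
  unfold f1
  rw [hv, enc_rIdx N K (by omega : 0 < K) (by omega : r < N+1) hlK, enc_mod_K N K hlK]
  unfold kk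
  rw [enc_rIdx N K (by omega : 0 < K) (by omega : r < N+1) hlK, enc_iIdx N K (by omega : 0 < K) (by omega : r < N+1) hlK]
  simp only [if_neg (show ¬ enc N K i r (k r i + 1) = t*(N+1)*K by omega),
    if_pos (show r < N ∧ k r i + 1 ≤ k r i + 1 by omega),
    if_neg (show ¬ k r i + 1 = 0 by omega), if_pos rfl]
  simp

def tgtF (i r : ℕ) : Fin (mm t N K) :=
  if i + 1 < t then encF t N K (i+1) r 0 else toF t N K (t*(N+1)*K)

lemma f2_top {i r : ℕ} (hi : i < t) (hr : r < N) (hki : k r i + 2 ≤ K) :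
    f2 t N K k (encF t N K i r (k r i + 1)) = .of (tgtF t N K i r) := by
  have hlK : k r i + 1 < K := by omega
  have hv := encF_val t N K hi (by omega : r < N+1) hlK
  have hlt := enc_lt t N K hi (by omega : r < N+1) hlK
  unfold f2 tgtF
  rw [hv, enc_rIdx N K (by omega : 0 < K) (by omega : r < N+1) hlK, enc_mod_K N K hlK]
  unfold kk
  rw [enc_rIdx N K (by omega : 0 < K) (by omega : r < N+1) hlK, enc_iIdx N K (by omega : 0 < K) (by omega : r < N+1) hlK]
  rw [if_pos ⟨by omega, hr, rfl⟩]
  split_ifs <;> rfl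

lemma f2_not_top (x : Fin (mm t N K))
    (h : ¬ (x.val ≠ t*(N+1)*K ∧ rIdx N K x.val < N ∧ lIdx K x.val = kk N K k x.val + 1)) :
    f2 t N K k x = 1 := by
  unfold f2; rw [if_neg h]

end eval

section structural
variable (hK : 2 ≤ K) (hk : ∀ r i, r < N → i < t → k r i + 2 ≤ K)

lemma iIdx_eq (x : ℕ) : iIdx N K x = (x / K) / (N+1) := by
  unfold iIdx; rw [Nat.div_div_eq_div_mul, Nat.mul_comm]

lemma last_iIdx (hK0 : 0 < K) : iIdx N K (t*(N+1)*K) = t := by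
  unfold iIdx
  rw [show t*(N+1)*K = t*((N+1)*K) by ring,
    Nat.mul_div_cancel _ (Nat.mul_pos (by omega : 0 < N+1) hK0)]

include hK hk in
lemma mem_f1 (x : Fin (mm t N K)) :
    ∀ y ∈ FreeMonoid.toList (f1 t N K k x), x.val ≤ y.val ∧ y.val / K = x.val / K := by
  intro y hy
  have hK0 : 0 < K := by omega
  by_cases h1 : x.val = t*(N+1)*K
  · unfold f1 at hy; rw [if_pos h1] at hy; simp [FreeMonoid.toList_one] at hy
  · have hx : x.val < t*(N+1)*K := by have := x.isLt; unfold mm at this; omega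
    obtain ⟨hi, hr, hl, hx'⟩ := decode t N K hK0 hx
    unfold f1 at hy
    rw [if_neg h1] at hy
    by_cases h2 : rIdx N K x.val < N ∧ lIdx K x.val ≤ kk N K k x.val + 1
    · rw [if_pos h2] at hy
      have hkK : k (rIdx N K x.val) (iIdx N K x.val) + 2 ≤ K := hk _ _ h2.1 hi
      by_cases h3 : lIdx K x.val = 0
      · rw [if_pos h3] at hy
        simp only [FreeMonoid.toList_of, List.mem_singleton] at hy
        subst hy
        have hb : x.val + 1 < mm t N K := by unfold mm; omega
        rw [toF_val t N K hb]
        have k1 : x.val / K = iIdx N K x.val * (N+1) + rIdx N K x.val := by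
          conv_lhs => rw [hx']
          exact enc_div_K N K hK0 hl
        have k2 : (x.val + 1) / K = iIdx N K x.val * (N+1) + rIdx N K x.val := by
          have : x.val + 1 = enc N K (iIdx N K x.val) (rIdx N K x.val) 1 := by
            conv_lhs => rw [hx', h3]
            unfold enc; ring
          rw [this]
          exact enc_div_K N K hK0 (by omega)
        exact ⟨by omega, by omega⟩
      · rw [if_neg h3] at hy
        by_cases h4 : lIdx K x.val = kk N K k x.val + 1
        · rw [if_pos h4] at hy
          simp only [FreeMonoid.toList_of, List.mem_singleton] at hy
          subst hy; exact ⟨le_refl _, rfl⟩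
        · rw [if_neg h4] at hy
          simp only [FreeMonoid.toList_mul, FreeMonoid.toList_of, List.mem_append,
            List.mem_singleton] at hy
          rcases hy with rfl | rfl
          · exact ⟨le_refl _, rfl⟩
          · have hlk : lIdx K x.val + 1 < K := by unfold kk at h4 h2; omega
            have hb : x.val + 1 < mm t N K := by unfold mm; omega
            rw [toF_val t N K hb]
            have k1 : x.val / K = iIdx N K x.val * (N+1) + rIdx N K x.val := by
              conv_lhs => rw [hx']
              exact enc_div_K N K hK0 hl
            have k2 : (x.val + 1) / K = iIdx N K x.val * (N+1) + rIdx N K x.val := by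
              have : x.val + 1 = enc N K (iIdx N K x.val) (rIdx N K x.val) (lIdx K x.val + 1) := by
                conv_lhs => rw [hx']
                unfold enc; ring
              rw [this]
              exact enc_div_K N K hK0 hlk
            exact ⟨by omega, by omega⟩
    · rw [if_neg h2] at hy
      simp only [FreeMonoid.toList_of, List.mem_singleton] at hy
      subst hy; exact ⟨le_refl _, rfl⟩

include hK in
lemma mem_f2 (x : Fin (mm t N K)) :
    ∀ y ∈ FreeMonoid.toList (f2 t N K k x),
      x.val < y.val ∧ iIdx N K y.val = iIdx N K x.val + 1 := by
  intro y hy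
  have hK0 : 0 < K := by omega
  unfold f2 at hy
  by_cases h1 : x.val ≠ t*(N+1)*K ∧ rIdx N K x.val < N ∧ lIdx K x.val = kk N K k x.val + 1
  · rw [if_pos h1] at hy
    have hx : x.val < t*(N+1)*K := by have := x.isLt; unfold mm at this; omega
    obtain ⟨hi, hr, hl, hx'⟩ := decode t N K hK0 hx
    by_cases h2 : iIdx N K x.val + 1 < t
    · rw [if_pos h2] at hy
      simp only [FreeMonoid.toList_of, List.mem_singleton] at hy
      subst hy
      have henc := enc_lt t N K (i := iIdx N K x.val + 1) (r := rIdx N K x.val) (l := 0) h2 hr hK0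
      rw [toF_val t N K (by unfold mm; omega)]
      refine ⟨?_, enc_iIdx N K hK0 hr hK0⟩
      · conv_lhs => rw [hx']
        unfold enc
        nlinarith [hl, hr]
    · rw [if_neg h2] at hy
      simp only [FreeMonoid.toList_of, List.mem_singleton] at hy
      subst hy
      rw [lastF_val t N K, last_iIdx t N K (by omega : 0 < K)]
      exact ⟨by omega, by omega⟩
  · rw [if_neg h1] at hy
    simp [FreeMonoid.toList_one] at hy

end structural
section triple
variable (ht : 0 < t) (hK : 2 ≤ K) (hk : ∀ r i, r < N → i < t → k r i + 2 ≤ K)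

lemma g1_of (x : Fin (mm t N K)) :
    g1 t N K k (FreeMonoid.of x) = f1 t N K k x := rfl

lemma g2_of (x : Fin (mm t N K)) :
    g2 t N K k (FreeMonoid.of x) = f2 t N K k x := rfl

def lastF : Fin (mm t N K) := toF t N K (t*(N+1)*K)

include hK in
lemma lvl_last_iff (x : Fin (mm t N K)) :
    iIdx N K x.val = t ↔ x = lastF t N K := by
  have hK0 : 0 < K := by omega
  constructor
  · intro h
    have h1 : t * ((N+1)*K) ≤ x.val := by
      rw [← Nat.le_div_iff_mul_le (Nat.mul_pos (by omega : 0 < N+1) hK0)]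
      unfold iIdx at h; omega
    have h2 : x.val < mm t N K := x.isLt
    have h3 : t * ((N+1)*K) = t*(N+1)*K := by ring
    apply Fin.ext
    rw [lastF, lastF_val t N K]
    unfold mm at h2; omega
  · rintro rfl
    rw [lastF, lastF_val t N K]
    exact last_iIdx t N K hK0

include hK hk in
def triple : MTriple t (Fin (mm t N K)) where
  g1 := g1 t N K k
  g2 := g2 t N K k
  lvl := fun x => iIdx N K x.val
  lvl_mono := by
    intro x y hxy
    exact Nat.div_le_div_right hxy
  lvl_le := by
    intro x
    show iIdx N K x.val ≤ t
    have h2 : x.val < (t+1) * ((N+1)*K) := by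
      have := x.isLt; unfold mm at this; nlinarith
    have := (Nat.div_lt_iff_lt_mul (Nat.mul_pos (by omega : 0 < N+1) (by omega : 0 < K))).mpr h2
    unfold iIdx; omega
  lvl_surj := by
    intro i hi
    rcases Nat.lt_or_ge i t with h | h
    · exact ⟨encF t N K i 0 0, by
        show iIdx N K (encF t N K i 0 0).val = i
        rw [encF, toF_val t N K (by
          have := enc_lt t N K (l := 0) h (by omega : 0 < N+1) (by omega)
          unfold mm; omega)]
        exact enc_iIdx N K (by omega) (by omega : 0 < N+1) (by omega)⟩
    · exact ⟨lastF t N K, by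
        show iIdx N K (lastF t N K).val = i
        rw [lastF, lastF_val t N K, last_iIdx t N K (by omega)]; omega⟩
  tri_g1 := by
    intro x y hyx hy
    rw [g1_of] at hy
    have := (mem_f1 t N K k hK hk x y hy).1
    exact absurd hyx (by rw [Fin.lt_def]; omega)
  tri_g2 := by
    intro x y hyx hy
    rw [g2_of] at hy
    have := (mem_f2 t N K k hK x y hy).1
    exact absurd hyx (by rw [Fin.lt_def]; omega)
  last := lastF t N K
  last_top := by
    intro x
    have h2 : x.val < mm t N K := x.isLt
    rw [Fin.le_def, lastF, lastF_val t N K]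
    unfold mm at h2; omega
  lvl_last := lvl_last_iff t N K hK
  g1_lvl := by
    intro x y hy
    rw [g1_of] at hy
    have h := (mem_f1 t N K k hK hk x y hy).2
    show iIdx N K y.val = iIdx N K x.val
    rw [iIdx_eq, iIdx_eq, h]
  g2_lvl := by
    intro x _ y hy
    rw [g2_of] at hy
    exact (mem_f2 t N K k hK x y hy).2
  g2_sq := by
    intro x
    rw [g2_of]
    have hK0 : 0 < K := by omega
    by_cases h1 : x.val ≠ t*(N+1)*K ∧ rIdx N K x.val < N ∧ lIdx K x.val = kk N K k x.val + 1
    · have hx : x.val < t*(N+1)*K := by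
        have := x.isLt; unfold mm at this; omega
      obtain ⟨hi, hr, hl, hx'⟩ := decode t N K hK0 hx
      unfold f2
      rw [if_pos h1]
      by_cases h2 : iIdx N K x.val + 1 < t
      · rw [if_pos h2, g2_of]
        apply f2_not_top
        have hv : (toF t N K (enc N K (iIdx N K x.val + 1) (rIdx N K x.val) 0)).val
            = enc N K (iIdx N K x.val + 1) (rIdx N K x.val) 0 := by
          apply toF_val
          have := enc_lt t N K (l := 0) h2 hr hK0
          unfold mm; omega
        rw [hv, enc_mod_K N K hK0]
        push_neg
        intro _ _
        omega
      · rw [if_neg h2, g2_of]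
        apply f2_not_top
        rw [lastF_val t N K]
        push_neg
        intro h; exact absurd rfl h
    · rw [f2_not_top t N K k x h1, map_one]
  g1_last := by
    rw [g1_of]
    unfold f1
    rw [lastF, lastF_val t N K, if_pos rfl]
  g2_last := by
    rw [g2_of]
    apply f2_not_top
    rw [lastF, lastF_val t N K]
    push_neg
    intro h; exact absurd rfl h

end triple

section counting
variable (hK : 2 ≤ K) (hk : ∀ r i, r < N → i < t → k r i + 2 ≤ K)

omit hK hk in
lemma g1_pow_apply (n : ℕ) (u : FreeMonoid (Fin (mm t N K))) :
    (g1 t N K k ^ (n+1)) u = (g1 t N K k ^ n) (g1 t N K k u) :=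
  pow_apply_succ _ n u

include hK hk in
lemma mem_g1_pow (n : ℕ) (x : Fin (mm t N K)) :
    ∀ y ∈ FreeMonoid.toList ((g1 t N K k ^ n) (FreeMonoid.of x)), y.val / K = x.val / K := by
  induction n generalizing x with
  | zero => intro y hy; simp only [pow_zero] at hy
            rw [show ((1 : Monoid.End (FreeMonoid (Fin (mm t N K)))) (FreeMonoid.of x)) = FreeMonoid.of x from rfl] at hy
            simp only [FreeMonoid.toList_of, List.mem_singleton] at hy; subst hy; rfl
  | succ n ih =>
      intro y hy
      rw [g1_pow_apply, g1_of] at hy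
      obtain ⟨z, hz, hyz⟩ := (mem_end _ _ _).mp hy
      have h1 := (mem_f1 t N K k hK hk x z hz).2
      have h2 := ih z y hyz
      omega

include hK hk in
lemma count_g1_pow_zero (n : ℕ) {x y : Fin (mm t N K)} (h : y.val / K ≠ x.val / K) :
    (FreeMonoid.toList ((g1 t N K k ^ n) (FreeMonoid.of x))).count y = 0 :=
  List.count_eq_zero_of_not_mem (fun hmem => h (mem_g1_pow t N K k hK hk n x y hmem))

include hK hk in
lemma count_chain {i r : ℕ} (hi : i < t) (hr : r < N) (n : ℕ) :
    ∀ l, 1 ≤ l → l ≤ k r i + 1 →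
    (FreeMonoid.toList ((g1 t N K k ^ n) (FreeMonoid.of (encF t N K i r l)))).count
        (encF t N K i r (k r i + 1)) = Nat.choose n (k r i + 1 - l) := by
  have hki := hk r i hr hi
  induction n with
  | zero =>
      intro l hl1 hl2
      simp only [pow_zero]
      rw [show ((1 : Monoid.End (FreeMonoid (Fin (mm t N K)))) (FreeMonoid.of (encF t N K i r l)))
          = FreeMonoid.of (encF t N K i r l) from rfl]
      rw [FreeMonoid.toList_of]
      by_cases h : l = k r i + 1
      · subst h
        simp [Nat.sub_self]
      · have hne : encF t N K i r l ≠ encF t N K i r (k r i + 1) := by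
          intro hcontra
          apply_fun Fin.val at hcontra
          rw [encF_val t N K hi (by omega : r < N+1) (by omega : l < K),
            encF_val t N K hi (by omega : r < N+1) (by omega : k r i + 1 < K)] at hcontra
          unfold enc at hcontra; omega
        rw [List.count_singleton']
        rw [if_neg (by simpa using hne), Nat.choose_eq_zero_of_lt (by omega)]
  | succ n ih =>
      intro l hl1 hl2
      rw [g1_pow_apply, g1_of]
      by_cases h : l = k r i + 1
      · subst h
        rw [f1_top t N K k hi hr hki, ih _ hl1 hl2]
        simp [Nat.sub_self]
      · rw [f1_chain t N K k hi hr hki hl1 (by omega), map_mul, FreeMonoid.toList_mul,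
          List.count_append, ih l hl1 hl2, ih (l+1) (by omega) (by omega)]
        have e1 : k r i + 1 - l = (k r i - l) + 1 := by omega
        have e2 : k r i + 1 - (l+1) = k r i - l := by omega
        rw [e1, e2, Nat.choose_succ_succ']
        omega

include hK hk in
lemma count_seed {i r : ℕ} (hi : i < t) (hr : r < N) (n : ℕ) (hn : 1 ≤ n) :
    (FreeMonoid.toList ((g1 t N K k ^ n) (FreeMonoid.of (encF t N K i r 0)))).count
        (encF t N K i r (k r i + 1)) = Nat.choose (n-1) (k r i) := by
  obtain ⟨m, rfl⟩ : ∃ m, n = m + 1 := ⟨n - 1, by omega⟩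
  rw [g1_pow_apply, g1_of, f1_seed t N K k hi hr (hk r i hr hi),
    count_chain t N K k hK hk hi hr m 1 (le_refl _) (by omega)]
  simp

include hK hk in
lemma count_step {i r : ℕ} (hi : i < t) (hr : r < N) (n : ℕ) (hn : 1 ≤ n)
    (y : Fin (mm t N K)) :
    (FreeMonoid.toList ((g2 t N K k) ((g1 t N K k ^ n) (FreeMonoid.of (encF t N K i r 0))))).count y
      = if y = tgtF t N K i r then Nat.choose (n-1) (k r i) else 0 := by
  have hK0 : 0 < K := by omega
  have hki := hk r i hr hi
  have hcomp : (g2 t N K k) ((g1 t N K k ^ n) (FreeMonoid.of (encF t N K i r 0)))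
      = (g2 t N K k * g1 t N K k ^ n) (FreeMonoid.of (encF t N K i r 0)) := rfl
  rw [count_end']
  simp only [g2_of]
  have hseedval : (encF t N K i r 0).val = enc N K i r 0 :=
    encF_val t N K hi (by omega) hK0
  have ha0val : (encF t N K i r (k r i + 1)).val = enc N K i r (k r i + 1) :=
    encF_val t N K hi (by omega) (by omega)
  rw [Finset.sum_eq_single (encF t N K i r (k r i + 1))]
  · rw [count_seed t N K k hK hk hi hr n hn, f2_top t N K k hi hr hki, FreeMonoid.toList_of,
      List.count_singleton']
    by_cases hy : y = tgtF t N K i r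
    · rw [if_pos hy, if_pos (by simp [hy]), mul_one]
    · rw [if_neg hy, if_neg (by simpa using (Ne.symm hy)), mul_zero]
  · intro b _ hbne
    by_cases hb : b.val / K = (encF t N K i r 0).val / K
    · -- b is in the block; since b ≠ a0, f2 b = 1
      have hdiv : (encF t N K i r 0).val / K = i*(N+1)+r := by
        rw [hseedval]; exact enc_div_K N K hK0 hK0
      have hrIdx : rIdx N K b.val = r := by
        unfold rIdx
        rw [hb, hdiv, Nat.add_comm, Nat.add_mul_mod_self_right, Nat.mod_eq_of_lt (by omega)]
      have hiIdx : iIdx N K b.val = i := by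
        rw [iIdx_eq, hb, hdiv, Nat.add_comm,
          Nat.add_mul_div_right _ _ (by omega : 0 < N+1), Nat.div_eq_of_lt (by omega)]
        omega
      have hf2 : f2 t N K k b = 1 := by
        apply f2_not_top
        intro hcond
        apply hbne
        have hlval : lIdx K b.val = k r i + 1 := by
          have := hcond.2.2
          unfold kk at this
          rw [hrIdx, hiIdx] at this
          exact this
        apply Fin.ext
        rw [ha0val]
        have hsplit : b.val = (b.val / K) * K + b.val % K := by
          rw [Nat.mul_comm]; exact (Nat.div_add_mod _ _).symm
        unfold lIdx at hlval
        rw [hsplit, hb, hdiv, hlval]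
        rfl
      rw [hf2]
      simp
    · rw [count_g1_pow_zero t N K k hK hk n hb, zero_mul]
  · intro h
    exact absurd (Finset.mem_univ _) h

end counting

section main
variable (nn : ℕ → ℕ)

def tgt' (i r : ℕ) : Fin (mm t N K) :=
  if i < t then encF t N K i r 0 else lastF t N K

def W : ℕ → FreeMonoid (Fin (mm t N K))
  | 0 => FreeMonoid.ofList ((List.range N).map (fun r => encF t N K 0 r 0))
  | (i+1) => g2 t N K k ((g1 t N K k ^ (nn i)) (W i))

def P (i r : ℕ) : ℕ := ∏ i' ∈ Finset.range i, Nat.choose (nn i' - 1) (k r i')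

lemma count_map_range {α : Type} [DecidableEq α] (M : ℕ) (f : ℕ → α) (y : α) :
    ((List.range M).map f).count y = ∑ r ∈ Finset.range M, if y = f r then 1 else 0 := by
  induction M with
  | zero => simp
  | succ M ih =>
      rw [List.range_succ, List.map_append, List.count_append, ih, Finset.sum_range_succ]
      simp only [List.map_singleton, List.count_singleton']
      by_cases h : y = f M
      · rw [if_pos h, if_pos (by simp [h])]
      · rw [if_neg h, if_neg (by simpa using (Ne.symm h))]

variable (hK : 2 ≤ K) (hk : ∀ r i, r < N → i < t → k r i + 2 ≤ K) (ht : 0 < t)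
  (hn : ∀ i, i < t → 1 ≤ nn i)

include hK hk ht hn in
lemma count_W : ∀ i, i ≤ t → ∀ y : Fin (mm t N K),
    (FreeMonoid.toList (W t N K k nn i)).count y
      = ∑ r ∈ Finset.range N, if y = tgt' t N K i r then P k nn i r else 0 := by
  intro i
  induction i with
  | zero =>
      intro _ y
      show (FreeMonoid.toList (FreeMonoid.ofList ((List.range N).map (fun r => encF t N K 0 r 0)))).count y = _
      rw [FreeMonoid.toList_ofList, count_map_range]
      refine Finset.sum_congr rfl (fun r _ => ?_)
      rw [tgt', if_pos ht, P]
      simp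
  | succ i ih =>
      intro hi1 y
      have hi : i < t := by omega
      rw [show W t N K k nn (i+1) = (g2 t N K k * g1 t N K k ^ nn i) (W t N K k nn i) from rfl,
        count_end']
      have step1 : ∀ x : Fin (mm t N K),
          (FreeMonoid.toList (W t N K k nn i)).count x *
            (FreeMonoid.toList ((g2 t N K k * g1 t N K k ^ nn i) (FreeMonoid.of x))).count y
          = ∑ r ∈ Finset.range N, (if x = tgt' t N K i r then P k nn i r else 0) *
              (FreeMonoid.toList ((g2 t N K k * g1 t N K k ^ nn i) (FreeMonoid.of x))).count y := by
        intro x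
        rw [ih (by omega) x, Finset.sum_mul]
      rw [Finset.sum_congr rfl (fun x _ => step1 x), Finset.sum_comm]
      refine Finset.sum_congr rfl (fun r hr => ?_)
      have hrN : r < N := Finset.mem_range.mp hr
      rw [Finset.sum_eq_single (tgt' t N K i r)]
      · rw [if_pos rfl]
        have htg : tgt' t N K i r = encF t N K i r 0 := by rw [tgt', if_pos hi]
        have hcs : (FreeMonoid.toList ((g2 t N K k * g1 t N K k ^ nn i)
            (FreeMonoid.of (tgt' t N K i r)))).count y
            = if y = tgtF t N K i r then Nat.choose (nn i - 1) (k r i) else 0 := by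
          rw [htg]
          exact count_step t N K k hK hk hi hrN (nn i) (hn i hi) y
        rw [hcs]
        have htgt2 : tgtF t N K i r = tgt' t N K (i+1) r := by
          rw [tgtF, tgt', lastF]
        rw [htgt2, mul_ite, mul_zero]
        by_cases hy : y = tgt' t N K (i+1) r
        · rw [if_pos hy, if_pos hy, P, P, Finset.prod_range_succ]
        · rw [if_neg hy, if_neg hy]
      · intro b _ hbne
        rw [if_neg hbne, zero_mul]
      · intro h
        exact absurd (Finset.mem_univ _) h

lemma toList_of_pow {α : Type} (x : α) (c : ℕ) :
    FreeMonoid.toList (FreeMonoid.of x ^ c) = List.replicate c x := by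
  induction c with
  | zero => simp [FreeMonoid.toList_one]
  | succ c ih =>
      rw [pow_succ, FreeMonoid.toList_mul, ih, FreeMonoid.toList_of, List.replicate_succ']

lemma eq_pow_of_all_eq {α : Type} [DecidableEq α] (w : FreeMonoid α) (e : α)
    (h : ∀ y ∈ FreeMonoid.toList w, y = e) :
    w = FreeMonoid.of e ^ ((FreeMonoid.toList w).count e) := by
  apply FreeMonoid.toList.injective
  rw [toList_of_pow, List.count_eq_length.mpr (fun b hb => (h b hb).symm)]
  exact List.eq_replicate_of_mem h

include hK hk ht hn in
lemma W_final :
    W t N K k nn t = FreeMonoid.of (lastF t N K) ^ (∑ r ∈ Finset.range N, P k nn t r) := by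
  have hcnt := count_W t N K k nn hK hk ht hn t (le_refl t)
  have htgt : ∀ r, tgt' t N K t r = lastF t N K := fun r => by
    rw [tgt', if_neg (lt_irrefl t)]
  have hc : (FreeMonoid.toList (W t N K k nn t)).count (lastF t N K)
      = ∑ r ∈ Finset.range N, P k nn t r := by
    rw [hcnt]
    exact Finset.sum_congr rfl (fun r _ => by rw [htgt r, if_pos rfl])
  rw [← hc]
  apply eq_pow_of_all_eq
  intro y hy
  by_contra hne
  have h0 : (FreeMonoid.toList (W t N K k nn t)).count y = 0 := by
    rw [hcnt]
    refine Finset.sum_eq_zero (fun r _ => ?_)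
    rw [htgt r, if_neg hne]
  have := List.count_pos_iff.mpr hy
  omega

end main

lemma map_sum_getD {β : Type} (L : List β) (dd : β) (g : β → ℕ) :
    (L.map g).sum = ∑ r ∈ Finset.range L.length, g (L.getD r dd) := by
  induction L with
  | nil => simp
  | cons b L ih =>
      rw [List.map_cons, List.sum_cons, ih, List.length_cons, Finset.sum_range_succ']
      simp [List.getD_cons_succ, List.getD_cons_zero, Nat.add_comm]

end S4

theorem statement4' (t : ℕ) (ht : 0 < t) (p : MvPolynomial (Fin t) ℕ) (hp : p ≠ 0) :
    ∃ (m : ℕ) (T : MTriple t (Fin m)),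
      ComputableBy T (fun n => MvPolynomial.eval n p) := by
  classical
  obtain ⟨L, hL⟩ := rep_exists t p
  obtain ⟨kf, hkf⟩ : ∃ kf : ℕ → ℕ → ℕ,
      ∀ r i (h : i < t), kf r i = (L.getD r (fun _ => 0)) ⟨i, h⟩ :=
    ⟨fun r i => if h : i < t then (L.getD r (fun _ => 0)) ⟨i, h⟩ else 0,
      fun r i h => dif_pos h⟩
  set N := L.length with hN
  obtain ⟨K, hK, hk⟩ : ∃ K, 2 ≤ K ∧ ∀ r i, r < N → i < t → kf r i + 2 ≤ K := by
    refine ⟨2 + (L.map (fun j => ∑ i, j i)).sum, Nat.le_add_right 2 _, ?_⟩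
    intro r i hr hi
    have hr' : r < L.length := hr
    have h2 : L.getD r (fun _ => 0) ∈ L := by
      rw [List.getD_eq_getElem L _ hr']
      exact List.getElem_mem _
    have h3 : (L.getD r (fun _ => 0)) ⟨i,hi⟩ ≤ ∑ i', (L.getD r (fun _ => 0)) i' :=
      Finset.single_le_sum (fun _ _ => Nat.zero_le _) (Finset.mem_univ _)
    have h4 : (∑ i', (L.getD r (fun _ => 0)) i') ≤ (L.map (fun j => ∑ i', j i')).sum :=
      List.single_le_sum (fun _ _ => Nat.zero_le _) _ (List.mem_map_of_mem h2)
    have h1 := hkf r i hi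
    rw [h1, Nat.add_comm]
    exact Nat.add_le_add_left (le_trans h3 h4) 2
  refine ⟨S4.mm t N K, S4.triple t N K kf hK hk, ?_⟩
  refine ⟨FreeMonoid.ofList ((List.range N).map (fun r => S4.encF t N K 0 r 0)), ?_, ?_⟩
  · intro y hy
    rw [FreeMonoid.toList_ofList] at hy
    obtain ⟨r, hr, rfl⟩ := List.mem_map.mp hy
    have hrN : r < N := List.mem_range.mp hr
    show S4.iIdx N K (S4.encF t N K 0 r 0).val = 0
    rw [S4.encF_val t N K ht (by omega) (by omega)]
    exact S4.enc_iIdx N K (by omega) (by omega) (by omega)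
  · intro n hpos
    obtain ⟨nn, hnn⟩ : ∃ nn : ℕ → ℕ, ∀ i (h : i < t), nn i = n ⟨i,h⟩ :=
      ⟨fun i => if h : i < t then n ⟨i,h⟩ else 1, fun i h => dif_pos h⟩
    have hn : ∀ i, i < t → 1 ≤ nn i := by
      intro i hi
      rw [hnn i hi]
      exact hpos ⟨i,hi⟩
    have hfold : ∀ j, j ≤ t → ((List.finRange t).take j).foldl
        (fun u i => (S4.triple t N K kf hK hk).g2 (((S4.triple t N K kf hK hk).g1 ^ n i) u))
        (FreeMonoid.ofList ((List.range N).map (fun r => S4.encF t N K 0 r 0)))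
          = S4.W t N K kf nn j := by
      intro j
      induction j with
      | zero => intro _; rw [List.take_zero, List.foldl_nil]; rfl
      | succ j ih =>
          intro hj
          have hjt : j < t := by omega
          have htake : (List.finRange t).take (j+1)
              = (List.finRange t).take j ++ [(⟨j, hjt⟩ : Fin t)] := by
            rw [List.take_succ]
            congr 1
            simp [List.getElem?_eq_getElem, hjt]
          rw [htake, List.foldl_append, List.foldl_cons, List.foldl_nil, ih (by omega)]
          have hnnj : nn j = n ⟨j, hjt⟩ := hnn j hjt
          show S4.g2 t N K kf ((S4.g1 t N K kf ^ n ⟨j, hjt⟩) (S4.W t N K kf nn j)) = _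
          rw [show S4.W t N K kf nn (j+1)
              = S4.g2 t N K kf ((S4.g1 t N K kf ^ nn j) (S4.W t N K kf nn j)) from rfl, hnnj]
    have htake_all : (List.finRange t).take t = List.finRange t :=
      List.take_of_length_le (by simp)
    rw [← htake_all, hfold t (le_refl t), S4.W_final t N K kf nn hK hk ht hn]
    have hsum : (∑ r ∈ Finset.range N, S4.P kf nn t r) = MvPolynomial.eval n p := by
      have hL0 := hL (fun i => n i - 1)
      have he : (fun i => (n i - 1) + 1) = n := funext (fun i => Nat.succ_pred_eq_of_pos (hpos i))
      rw [he] at hL0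
      rw [hL0, S4.map_sum_getD L (fun _ => 0) _]
      refine Finset.sum_congr rfl (fun r hr => ?_)
      have hP : S4.P kf nn t r = ∏ i' ∈ Finset.range t, Nat.choose (nn i' - 1) (kf r i') := rfl
      rw [hP, ← Fin.prod_univ_eq_prod_range (fun i' => Nat.choose (nn i' - 1) (kf r i')) t]
      refine Finset.prod_congr rfl (fun i _ => ?_)
      rw [hnn i.val i.isLt, hkf r i.val i.isLt]
    rw [hsum]
    rfl

/-- every nonzero polynomial with nonnegative integer coefficients is
computable by an M-triple. -/
theorem statement4 (t : ℕ) (ht : 0 < t) (p : MvPolynomial (Fin t) ℕ) (hp : p ≠ 0) :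
    ∃ (m : ℕ) (T : MTriple t (Fin m)),
      ComputableBy T (fun n => MvPolynomial.eval n p) := by
  exact statement4' t ht p hp
end

section
/- Let t ≥ 2 be an integer and let p(x1,…,xt) and q(x1,…,xt) be polynomials with nonnegative integer coefficients taking positive values on positive integer arguments. Then there exist a finite ordered alphabet D and upper triangular endomorphisms g1, g2 of the free monoid D* such that, writing H for the submonoid of End(D*) generated by g1 and g2, o for the endomorphism of D* mapping every letter to the empty word, and Prod(n1,…,nα) = g1^{n1} g2 g1^{n2} g2 ⋯ g1^{nα} g2, for all positive integers n and s the following three conditions are equivalent: (i) there exist positive integers n3,…,nt with p(n,s,n3,…,nt) = q(n,s,n3,…,nt); (ii) there exists h ∈ H with g2² Prod(n,s) h = g2³ Prod(n,s) h ≠ o; (iii) there exist h1, h2 ∈ H with g2² Prod(n,s) h1 = g2³ Prod(n,s) h2 ≠ o. -/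
/-- The endomorphism `o` mapping every letter (hence every word) to the empty word. -/
def oEnd (α : Type) : Monoid.End (FreeMonoid α) :=
  { toFun := fun _ => 1
    map_one' := rfl
    map_mul' := fun _ _ => (one_mul (1 : FreeMonoid α)).symm }

namespace S5



/-! ### Generic FreeMonoid helpers -/

/-- Parikh multiset of a word. -/
def mz {α : Type*} (w : FreeMonoid α) : Multiset α := (FreeMonoid.toList w : Multiset α)

@[simp] lemma mz_one {α : Type*} : mz (1 : FreeMonoid α) = 0 := rfl

@[simp] lemma mz_of {α : Type*} (a : α) : mz (FreeMonoid.of a) = {a} := rfl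

@[simp] lemma mz_mul {α : Type*} (u v : FreeMonoid α) : mz (u * v) = mz u + mz v := by
  simp [mz, FreeMonoid.toList_mul]

lemma mz_pow {α : Type*} (w : FreeMonoid α) (k : ℕ) : mz (w ^ k) = k • mz w := by
  induction k with
  | zero => simp
  | succ k ih => rw [pow_succ, mz_mul, ih, succ_nsmul]

lemma mz_listProd {α : Type*} (L : List (FreeMonoid α)) :
    mz L.prod = (L.map mz).sum := by
  induction L with
  | nil => simp
  | cons a L ih => simp [ih]

lemma mem_mz {α : Type*} {a : α} {w : FreeMonoid α} :
    a ∈ mz w ↔ a ∈ FreeMonoid.toList w := by simp [mz]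

/-- The "abelianized action" of an endomorphism on Parikh multisets. -/
def bindHom {α : Type*} (g : Monoid.End (FreeMonoid α)) : Multiset α →+ Multiset α where
  toFun s := s.bind (fun a => mz (g (FreeMonoid.of a)))
  map_zero' := Multiset.zero_bind _
  map_add' u v := Multiset.add_bind u v _

@[simp] lemma bindHom_singleton {α : Type*} (g : Monoid.End (FreeMonoid α)) (a : α) :
    bindHom g {a} = mz (g (FreeMonoid.of a)) := by
  simp [bindHom, Multiset.singleton_bind]

lemma mz_endo {α : Type*} (g : Monoid.End (FreeMonoid α)) (w : FreeMonoid α) :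
    mz (g w) = bindHom g (mz w) := by
  induction w using FreeMonoid.recOn with
  | one => simp
  | of_mul a w ih => rw [map_mul, mz_mul, mz_mul, map_add, ih, mz_of, bindHom_singleton]

lemma toList_pow_of {α : Type*} (a : α) (k : ℕ) :
    FreeMonoid.toList ((FreeMonoid.of a) ^ k) = List.replicate k a := by
  induction k with
  | zero => rfl
  | succ k ih => rw [pow_succ', FreeMonoid.toList_mul, ih]; simp [List.replicate_succ]

@[simp] lemma mz_pow_of {α : Type*} (a : α) (k : ℕ) :
    mz ((FreeMonoid.of a) ^ k) = k • ({a} : Multiset α) := by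
  rw [mz_pow]; simp

lemma pow_of_inj {α : Type*} (a : α) {k l : ℕ}
    (h : (FreeMonoid.of a) ^ k = (FreeMonoid.of a) ^ l) : k = l := by
  have := congrArg (fun w => (FreeMonoid.toList w).length) h
  simpa [toList_pow_of] using this

/-- If every letter of `w` is mapped by `g` to a power of `of c`, then `g w` is a power. -/
lemma endo_pow_letter {α : Type*} (g : Monoid.End (FreeMonoid α)) (c : α)
    (w : FreeMonoid α) (h : ∀ a ∈ FreeMonoid.toList w, ∃ k, g (FreeMonoid.of a) = (FreeMonoid.of c) ^ k) :
    ∃ K, g w = (FreeMonoid.of c) ^ K := by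
  induction w using FreeMonoid.recOn with
  | one => exact ⟨0, by simp⟩
  | of_mul a w ih =>
    obtain ⟨k, hk⟩ := h a (by simp [FreeMonoid.toList_mul])
    obtain ⟨K, hK⟩ := ih (fun b hb => h b (by simp [FreeMonoid.toList_mul, hb]))
    exact ⟨k + K, by rw [map_mul, hk, hK, pow_add]⟩

lemma nsmul_mem_iff {α : Type*} {a b : α} {k : ℕ} : a ∈ k • ({b} : Multiset α) ↔ k ≠ 0 ∧ a = b := by
  rw [Multiset.nsmul_singleton, Multiset.mem_replicate]

variable {t : ℕ} (p q : MvPolynomial (Fin t) ℕ)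

/-! ### Polynomial data -/

def F (b : Bool) : MvPolynomial (Fin t) ℕ := bif b then q else p

def EB : ℕ := p.totalDegree ⊔ q.totalDegree

def NN (b : Bool) : ℕ := ((F p q b).support).card

noncomputable def dec (b : Bool) (j : Fin (NN p q b)) : Fin t →₀ ℕ :=
  ((F p q b).support.equivFin.symm j : _)

noncomputable def cf (b : Bool) (j : Fin (NN p q b)) : ℕ := MvPolynomial.coeff (dec p q b j) (F p q b)

lemma dec_mem (b : Bool) (j : Fin (NN p q b)) : dec p q b j ∈ (F p q b).support :=
  ((F p q b).support.equivFin.symm j).2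

lemma cf_pos (b : Bool) (j : Fin (NN p q b)) : 0 < cf p q b j := by
  have := dec_mem p q b j
  rw [MvPolynomial.mem_support_iff] at this
  exact Nat.pos_of_ne_zero this

lemma dec_le (b : Bool) (j : Fin (NN p q b)) (i : Fin t) : dec p q b j i ≤ EB p q := by
  have h1 : ((dec p q b j).sum fun _ e => e) ≤ (F p q b).totalDegree :=
    MvPolynomial.le_totalDegree (dec_mem p q b j)
  have h2 : dec p q b j i ≤ ((dec p q b j).sum fun _ e => e) := by
    by_cases hi : i ∈ (dec p q b j).support
    · exact Finset.single_le_sum (f := fun i => dec p q b j i) (fun _ _ => Nat.zero_le _) hi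
    · simp [Finsupp.notMem_support_iff.mp hi]
  have h3 : (F p q b).totalDegree ≤ EB p q := by
    cases b <;> simp [F, EB, le_sup_left, le_sup_right]
  omega

lemma eval_formula (b : Bool) (m : Fin t → ℕ) :
    MvPolynomial.eval m (F p q b) = ∑ j : Fin (NN p q b), cf p q b j * ∏ i, m i ^ dec p q b j i := by
  rw [MvPolynomial.eval_eq']
  rw [← Finset.sum_attach ((F p q b).support) (fun d => MvPolynomial.coeff d (F p q b) * ∏ i, m i ^ d i)]
  exact Fintype.sum_equiv ((F p q b).support.equivFin) _ _ (fun d => by simp [cf, dec])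

/-- Partial monomial value on a list of read values (default 1 for unread variables). -/
def pv (γ : Fin t →₀ ℕ) (v : List ℕ) : ℕ := ∏ i : Fin t, (v.getD i 1) ^ (γ i)

@[simp] lemma pv_nil (γ : Fin t →₀ ℕ) : pv γ [] = 1 := by simp [pv]

lemma getD_pos {v : List ℕ} (hv : ∀ a ∈ v, 0 < a) (i : ℕ) : 0 < v.getD i 1 := by
  rcases Nat.lt_or_ge i v.length with h | h
  · rw [List.getD_eq_getElem _ _ h]; exact hv _ (List.getElem_mem h)
  · rw [List.getD_eq_default _ _ h]; exact one_pos

lemma pv_pos (γ : Fin t →₀ ℕ) {v : List ℕ} (hv : ∀ a ∈ v, 0 < a) : 0 < pv γ v :=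
  Finset.prod_pos (fun i _ => pow_pos (getD_pos hv i) _)

lemma pv_append (γ : Fin t →₀ ℕ) (v : List ℕ) (x : ℕ) (hL : v.length < t) :
    pv γ (v ++ [x]) = pv γ v * x ^ (γ ⟨v.length, hL⟩) := by
  classical
  set L : Fin t := ⟨v.length, hL⟩ with hLdef
  unfold pv
  rw [← Finset.mul_prod_erase Finset.univ _ (Finset.mem_univ L),
      ← Finset.mul_prod_erase Finset.univ (fun i : Fin t => (v.getD (i:ℕ) 1) ^ γ i) (Finset.mem_univ L)]
  have h1 : ((v ++ [x]).getD (L : ℕ) 1) = x := by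
    rw [List.getD_append_right v [x] 1 _ (le_refl _)]; simp [hLdef]
  have h2 : (v.getD (L : ℕ) 1) = 1 := List.getD_eq_default _ _ (le_refl _)
  have h3 : ∀ i ∈ Finset.univ.erase L, ((v ++ [x]).getD (i : ℕ) 1) ^ γ i = (v.getD (i : ℕ) 1) ^ γ i := by
    intro i hi
    have hne : (i : ℕ) ≠ v.length := fun h => (Finset.mem_erase.mp hi).1 (Fin.ext h)
    rcases Nat.lt_or_ge (i : ℕ) v.length with h | h
    · rw [List.getD_append v [x] 1 _ h]
    · have h' : v.length < (i : ℕ) := by omega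
      rw [List.getD_append_right v [x] 1 _ (le_of_lt h'), List.getD_eq_default _ _ h,
        List.getD_eq_default]
      simp; omega
  rw [Finset.prod_congr rfl h3, h1, h2]
  ring

lemma F_ne_zero (b : Bool) (hp : 0 < MvPolynomial.eval (fun _ => 1) p)
    (hq : 0 < MvPolynomial.eval (fun _ => 1) q) : NN p q b ≠ 0 := by
  have hne : F p q b ≠ 0 := by
    cases b
    · intro h; simp only [F, Bool.cond_false] at h; rw [h] at hp; simp at hp
    · intro h; simp only [F, Bool.cond_true] at h; rw [h] at hq; simp at hq
  simpa [NN, Finset.card_eq_zero, MvPolynomial.support_eq_empty] using hne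

/-! ### The alphabet -/

abbrev Blk (m e : ℕ) := Fin (t+1) × Fin 2 × Fin m × Fin (e+1)

abbrev LamC := Fin 4 ⊕ ((Blk (t := t) (NN p q false) (EB p q)) ⊕
    (Unit ⊕ ((Blk (t := t) (NN p q true) (EB p q)) ⊕ Fin 3)))

/-- The alphabet (wrapped in a structure to avoid instance leakage from `Sum`). -/
@[ext] structure Lam where
  c : LamC p q

instance : DecidableEq (Lam p q) :=
  fun a b => decidable_of_iff (a.c = b.c) ⟨fun h => by cases a; cases b; simpa using h,
    fun h => by rw [h]⟩

def lamEquiv : LamC p q ≃ Lam p q where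
  toFun := Lam.mk
  invFun := Lam.c
  left_inv _ := rfl
  right_inv a := by cases a; rfl

instance : Fintype (Lam p q) := Fintype.ofEquiv _ (lamEquiv p q)

def lS : Lam p q := ⟨Sum.inl 0⟩
def lS1 : Lam p q := ⟨Sum.inl 1⟩
def lT : Lam p q := ⟨Sum.inl 2⟩
def lP0 : Lam p q := ⟨Sum.inl 3⟩
def lQ0 : Lam p q := ⟨Sum.inr (Sum.inr (Sum.inl ()))⟩
def lseed : Bool → Lam p q
  | false => lP0 p q
  | true => lQ0 p q
def lact : (b : Bool) → Fin (t+1) → Fin (NN p q b) → Fin (EB p q + 1) → Lam p q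
  | false, i, j, e => ⟨Sum.inr (Sum.inl (i, 1, j, e))⟩
  | true, i, j, e => ⟨Sum.inr (Sum.inr (Sum.inr (Sum.inl (i, 1, j, e))))⟩
def lfresh : (b : Bool) → Fin (t+1) → Fin (NN p q b) → Lam p q
  | false, i, j => ⟨Sum.inr (Sum.inl (i, 0, j, 0))⟩
  | true, i, j => ⟨Sum.inr (Sum.inr (Sum.inr (Sum.inl (i, 0, j, 0))))⟩
def lsk : Bool → Lam p q
  | false => ⟨Sum.inr (Sum.inr (Sum.inr (Sum.inr 0)))⟩
  | true => ⟨Sum.inr (Sum.inr (Sum.inr (Sum.inr 1)))⟩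
def lA : Lam p q := ⟨Sum.inr (Sum.inr (Sum.inr (Sum.inr 2)))⟩

def BC : ℕ := NN p q false + NN p q true + 1

def rk : Lam p q → ℕ × ℕ × ℕ × ℕ
  | ⟨Sum.inl c⟩ => ((c : ℕ), 0, 0, 0)
  | ⟨Sum.inr (Sum.inl (i, ph, j, e))⟩ => (4, (i : ℕ), (ph : ℕ) * BC p q + (j : ℕ), (e : ℕ))
  | ⟨Sum.inr (Sum.inr (Sum.inl _))⟩ => (5, 0, 0, 0)
  | ⟨Sum.inr (Sum.inr (Sum.inr (Sum.inl (i, ph, j, e))))⟩ =>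
      (6, (i : ℕ), (ph : ℕ) * BC p q + (j : ℕ), (e : ℕ))
  | ⟨Sum.inr (Sum.inr (Sum.inr (Sum.inr c)))⟩ => (7 + (c : ℕ), 0, 0, 0)

def enc (a : Lam p q) : ℕ ×ₗ (ℕ ×ₗ (ℕ ×ₗ ℕ)) :=
  toLex ((rk p q a).1, toLex ((rk p q a).2.1, toLex ((rk p q a).2.2.1, (rk p q a).2.2.2)))

lemma jBC {b : Bool} (j : Fin (NN p q b)) : (j : ℕ) < BC p q := by
  have := j.isLt; unfold BC; cases b <;> omega

lemma enc_inj : Function.Injective (enc p q) := by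
  intro a b h
  have hrk : rk p q a = rk p q b := by
    unfold enc at h
    have h1 := congrArg (fun x => (ofLex x).1) h
    have h2 := congrArg (fun x => (ofLex (ofLex x).2).1) h
    have h3 := congrArg (fun x => (ofLex (ofLex (ofLex x).2).2).1) h
    have h4 := congrArg (fun x => (ofLex (ofLex (ofLex x).2).2).2) h
    simp at h1 h2 h3 h4
    exact Prod.ext h1 (Prod.ext h2 (Prod.ext h3 h4))
  clear h
  rcases a with ⟨c | ⟨i, ph, j, e⟩ | u | ⟨i, ph, j, e⟩ | c⟩ <;>
    rcases b with ⟨c' | ⟨i', ph', j', e'⟩ | u' | ⟨i', ph', j', e'⟩ | c'⟩ <;>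
    simp only [rk, Prod.mk.injEq] at hrk <;>
    (try simp only [Lam.mk.injEq, Sum.inl.injEq, Sum.inr.injEq, Prod.mk.injEq]) <;>
    (try (exfalso; omega))
  · exact Fin.ext (by omega)
  · have hj := jBC p q j; have hj' := jBC p q j'
    have hph : (ph : ℕ) = 0 ∨ (ph : ℕ) = 1 := by omega
    have hph' : (ph' : ℕ) = 0 ∨ (ph' : ℕ) = 1 := by omega
    rcases hph with hh | hh <;> rcases hph' with hh' | hh' <;> rw [hh, hh'] at hrk <;>
      simp only [zero_mul, one_mul, zero_add] at hrk <;>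
      exact ⟨Fin.ext (by omega), Fin.ext (by omega), Fin.ext (by omega), Fin.ext (by omega)⟩
  · have hj := jBC p q j; have hj' := jBC p q j'
    have hph : (ph : ℕ) = 0 ∨ (ph : ℕ) = 1 := by omega
    have hph' : (ph' : ℕ) = 0 ∨ (ph' : ℕ) = 1 := by omega
    rcases hph with hh | hh <;> rcases hph' with hh' | hh' <;> rw [hh, hh'] at hrk <;>
      simp only [zero_mul, one_mul, zero_add] at hrk <;>
      exact ⟨Fin.ext (by omega), Fin.ext (by omega), Fin.ext (by omega), Fin.ext (by omega)⟩
  · exact Fin.ext (by omega)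

noncomputable instance instLO : LinearOrder (Lam p q) := LinearOrder.lift' (enc p q) (enc_inj p q)

lemma le_iff_enc {a b : Lam p q} : a ≤ b ↔ enc p q a ≤ enc p q b := by
  show (instLO p q).le a b ↔ _
  exact Iff.rfl
lemma lt_iff_enc {a b : Lam p q} : a < b ↔ enc p q a < enc p q b := by
  rw [lt_iff_le_not_ge, lt_iff_le_not_ge, le_iff_enc, le_iff_enc]


/-! ### The morphisms -/

def stF (i : ℕ) : Fin (t+1) := ⟨min i t, by omega⟩

noncomputable def dex (b : Bool) (j : Fin (NN p q b)) (i : ℕ) : ℕ :=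
  if h : i - 1 < t then dec p q b j ⟨i - 1, h⟩ else 0

noncomputable def actRow (b : Bool) (i : Fin (t+1)) (j : Fin (NN p q b)) : FreeMonoid (Lam p q) :=
  ((List.finRange (EB p q + 1)).map (fun e => FreeMonoid.of (lact p q b i j e))).prod

noncomputable def chooseRow (b : Bool) (i : Fin (t+1)) (j : Fin (NN p q b))
    (e : Fin (EB p q + 1)) : FreeMonoid (Lam p q) :=
  ((List.finRange (EB p q + 1)).map
    (fun e' => (FreeMonoid.of (lact p q b i j e')) ^ (Nat.choose (e' : ℕ) (e : ℕ)))).prod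

noncomputable def seedW (b : Bool) : FreeMonoid (Lam p q) :=
  ((List.finRange (NN p q b)).map (fun j => (actRow p q b (stF 1) j) ^ (cf p q b j))).prod

noncomputable def img1 : Lam p q → FreeMonoid (Lam p q)
  | ⟨Sum.inl c⟩ => if c = 3 then seedW p q false else FreeMonoid.of ⟨Sum.inl c⟩
  | ⟨Sum.inr (Sum.inl (i, ph, j, e))⟩ =>
      if ph = 0 then actRow p q false i j else chooseRow p q false i j e
  | ⟨Sum.inr (Sum.inr (Sum.inl _))⟩ => seedW p q true
  | ⟨Sum.inr (Sum.inr (Sum.inr (Sum.inl (i, ph, j, e))))⟩ =>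
      if ph = 0 then actRow p q true i j else chooseRow p q true i j e
  | ⟨Sum.inr (Sum.inr (Sum.inr (Sum.inr c)))⟩ => FreeMonoid.of ⟨Sum.inr (Sum.inr (Sum.inr (Sum.inr c)))⟩

noncomputable def img2 : Lam p q → FreeMonoid (Lam p q)
  | ⟨Sum.inl c⟩ =>
      if c = 0 then FreeMonoid.of (lS1 p q)
      else if c = 1 then FreeMonoid.of (lT p q) * FreeMonoid.of (lP0 p q)
      else if c = 2 then FreeMonoid.of (lT p q)
      else FreeMonoid.of (lQ0 p q)
  | ⟨Sum.inr (Sum.inl (i, ph, j, e))⟩ =>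
      if ph = 0 then FreeMonoid.of (lsk p q false)
      else if (e : ℕ) = dex p q false j i then
        (if (i : ℕ) = t then FreeMonoid.of (lA p q)
         else FreeMonoid.of (lfresh p q false (stF ((i : ℕ)+1)) j))
      else 1
  | ⟨Sum.inr (Sum.inr (Sum.inl _))⟩ => FreeMonoid.of (lQ0 p q)
  | ⟨Sum.inr (Sum.inr (Sum.inr (Sum.inl (i, ph, j, e))))⟩ =>
      if ph = 0 then FreeMonoid.of (lsk p q true)
      else if (e : ℕ) = dex p q true j i then
        (if (i : ℕ) = t then FreeMonoid.of (lA p q)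
         else FreeMonoid.of (lfresh p q true (stF ((i : ℕ)+1)) j))
      else 1
  | ⟨Sum.inr (Sum.inr (Sum.inr (Sum.inr c)))⟩ => FreeMonoid.of ⟨Sum.inr (Sum.inr (Sum.inr (Sum.inr c)))⟩

noncomputable def gg1 : Monoid.End (FreeMonoid (Lam p q)) := FreeMonoid.lift (img1 p q)
noncomputable def gg2 : Monoid.End (FreeMonoid (Lam p q)) := FreeMonoid.lift (img2 p q)

@[simp] lemma gg1_of (a : Lam p q) : gg1 p q (FreeMonoid.of a) = img1 p q a :=
  FreeMonoid.lift_eval_of _ a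
@[simp] lemma gg2_of (a : Lam p q) : gg2 p q (FreeMonoid.of a) = img2 p q a :=
  FreeMonoid.lift_eval_of _ a

/-- image computation lemmas -/
lemma img1_act (b : Bool) (i : Fin (t+1)) (j : Fin (NN p q b)) (e : Fin (EB p q + 1)) :
    img1 p q (lact p q b i j e) = chooseRow p q b i j e := by
  cases b <;> simp [img1, lact]
lemma img1_fresh (b : Bool) (i : Fin (t+1)) (j : Fin (NN p q b)) :
    img1 p q (lfresh p q b i j) = actRow p q b i j := by
  cases b <;> simp [img1, lfresh]
lemma img1_seed (b : Bool) : img1 p q (lseed p q b) = seedW p q b := by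
  cases b <;> simp [img1, lseed, lP0, lQ0]
lemma img1_sk (b : Bool) : img1 p q (lsk p q b) = FreeMonoid.of (lsk p q b) := by
  cases b <;> simp [img1, lsk]
@[simp] lemma img1_A : img1 p q (lA p q) = FreeMonoid.of (lA p q) := by simp [img1, lA]
@[simp] lemma img1_S : img1 p q (lS p q) = FreeMonoid.of (lS p q) := by simp [img1, lS]
@[simp] lemma img1_S1 : img1 p q (lS1 p q) = FreeMonoid.of (lS1 p q) := by simp [img1, lS1]
@[simp] lemma img1_T : img1 p q (lT p q) = FreeMonoid.of (lT p q) := by simp [img1, lT]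

lemma img2_act (b : Bool) (i : Fin (t+1)) (j : Fin (NN p q b)) (e : Fin (EB p q + 1)) :
    img2 p q (lact p q b i j e) =
      if (e : ℕ) = dex p q b j i then
        (if (i : ℕ) = t then FreeMonoid.of (lA p q)
         else FreeMonoid.of (lfresh p q b (stF ((i : ℕ)+1)) j))
      else 1 := by
  cases b <;> simp [img2, lact]
lemma img2_fresh (b : Bool) (i : Fin (t+1)) (j : Fin (NN p q b)) :
    img2 p q (lfresh p q b i j) = FreeMonoid.of (lsk p q b) := by
  cases b <;> simp [img2, lfresh]
lemma img2_sk (b : Bool) : img2 p q (lsk p q b) = FreeMonoid.of (lsk p q b) := by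
  cases b <;> simp [img2, lsk]
@[simp] lemma img2_A : img2 p q (lA p q) = FreeMonoid.of (lA p q) := by simp [img2, lA]
@[simp] lemma img2_S : img2 p q (lS p q) = FreeMonoid.of (lS1 p q) := by simp [img2, lS]
@[simp] lemma img2_S1 : img2 p q (lS1 p q) = FreeMonoid.of (lT p q) * FreeMonoid.of (lP0 p q) := by
  simp [img2, lS1]
@[simp] lemma img2_T : img2 p q (lT p q) = FreeMonoid.of (lT p q) := by simp [img2, lT]
@[simp] lemma img2_P0 : img2 p q (lP0 p q) = FreeMonoid.of (lQ0 p q) := by simp [img2, lP0]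
@[simp] lemma img2_Q0 : img2 p q (lQ0 p q) = FreeMonoid.of (lQ0 p q) := by simp [img2, lQ0]
lemma img2_seed (b : Bool) : img2 p q (lseed p q b) = FreeMonoid.of (lQ0 p q) := by
  cases b <;> simp [lseed]

/-! ### membership helpers -/

lemma mem_toList_prod_map {β : Type*} {l : List β} {f : β → FreeMonoid (Lam p q)} {x : Lam p q}
    (h : x ∈ FreeMonoid.toList ((l.map f).prod)) : ∃ b ∈ l, x ∈ FreeMonoid.toList (f b) := by
  induction l with
  | nil => simp [FreeMonoid.toList] at h; cases h
  | cons a l ih =>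
    rw [List.map_cons, List.prod_cons, FreeMonoid.toList_mul, List.mem_append] at h
    rcases h with h | h
    · exact ⟨a, List.mem_cons_self .., h⟩
    · obtain ⟨b, hb, hx⟩ := ih h
      exact ⟨b, List.mem_cons_of_mem _ hb, hx⟩

lemma mem_toList_pow {x : Lam p q} {w : FreeMonoid (Lam p q)} {k : ℕ}
    (h : x ∈ FreeMonoid.toList (w ^ k)) : 0 < k ∧ x ∈ FreeMonoid.toList w := by
  induction k with
  | zero => simp [FreeMonoid.toList] at h; cases h
  | succ k ih =>
    rw [pow_succ, FreeMonoid.toList_mul, List.mem_append] at h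
    rcases h with h | h
    · rcases Nat.eq_zero_or_pos k with rfl | hk
      · simp [FreeMonoid.toList] at h; cases h
      · exact ⟨Nat.succ_pos _, (ih h).2⟩
    · exact ⟨Nat.succ_pos _, h⟩

/-! ### triangularity -/

def UT (g : Monoid.End (FreeMonoid (Lam p q))) : Prop :=
  ∀ a : Lam p q, ∀ x ∈ FreeMonoid.toList (g (FreeMonoid.of a)), a ≤ x

def rkLe (u v : ℕ × ℕ × ℕ × ℕ) : Prop :=
  u.1 < v.1 ∨ (u.1 = v.1 ∧ (u.2.1 < v.2.1 ∨ (u.2.1 = v.2.1 ∧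
    (u.2.2.1 < v.2.2.1 ∨ (u.2.2.1 = v.2.2.1 ∧ u.2.2.2 ≤ v.2.2.2)))))

lemma le_rk {a b : Lam p q} (h : rkLe (rk p q a) (rk p q b)) : a ≤ b := by
  rw [le_iff_enc]; unfold enc
  rw [Prod.Lex.le_iff]
  rcases h with h | ⟨h1, h⟩
  · exact Or.inl h
  refine Or.inr ⟨h1, ?_⟩
  rw [Prod.Lex.le_iff]
  rcases h with h | ⟨h2, h⟩
  · exact Or.inl h
  refine Or.inr ⟨h2, ?_⟩
  rw [Prod.Lex.le_iff]
  rcases h with h | ⟨h3, h4⟩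
  · exact Or.inl h
  · exact Or.inr ⟨h3, h4⟩

@[simp] lemma rk_lS : rk p q (lS p q) = (0, 0, 0, 0) := rfl
@[simp] lemma rk_lS1 : rk p q (lS1 p q) = (1, 0, 0, 0) := rfl
@[simp] lemma rk_lT : rk p q (lT p q) = (2, 0, 0, 0) := rfl
@[simp] lemma rk_lP0 : rk p q (lP0 p q) = (3, 0, 0, 0) := rfl
@[simp] lemma rk_lQ0 : rk p q (lQ0 p q) = (5, 0, 0, 0) := rfl
@[simp] lemma rk_lA : rk p q (lA p q) = (9, 0, 0, 0) := rfl
@[simp] lemma rk_lsk (b : Bool) : rk p q (lsk p q b) = (cond b 8 7, 0, 0, 0) := by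
  cases b <;> rfl
@[simp] lemma rk_lact (b : Bool) (i : Fin (t+1)) (j : Fin (NN p q b)) (e : Fin (EB p q + 1)) :
    rk p q (lact p q b i j e) = (cond b 6 4, (i : ℕ), BC p q + (j : ℕ), (e : ℕ)) := by
  cases b <;> simp [rk, lact]
@[simp] lemma rk_lfresh (b : Bool) (i : Fin (t+1)) (j : Fin (NN p q b)) :
    rk p q (lfresh p q b i j) = (cond b 6 4, (i : ℕ), (j : ℕ), 0) := by
  cases b <;> simp [rk, lfresh]
@[simp] lemma rk_lseed (b : Bool) : rk p q (lseed p q b) = (cond b 5 3, 0, 0, 0) := by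
  cases b <;> rfl
@[simp] lemma rk_mkH (c : Fin 4) : rk p q ⟨Sum.inl c⟩ = ((c : ℕ), 0, 0, 0) := rfl
@[simp] lemma rk_mkP (i : Fin (t+1)) (ph : Fin 2) (j : Fin (NN p q false)) (e : Fin (EB p q + 1)) :
    rk p q ⟨Sum.inr (Sum.inl (i, ph, j, e))⟩ = (4, (i : ℕ), (ph : ℕ) * BC p q + (j : ℕ), (e : ℕ)) := rfl
@[simp] lemma rk_mkQ (i : Fin (t+1)) (ph : Fin 2) (j : Fin (NN p q true)) (e : Fin (EB p q + 1)) :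
    rk p q ⟨Sum.inr (Sum.inr (Sum.inr (Sum.inl (i, ph, j, e))))⟩
      = (6, (i : ℕ), (ph : ℕ) * BC p q + (j : ℕ), (e : ℕ)) := rfl
@[simp] lemma rk_mkU : rk p q ⟨Sum.inr (Sum.inr (Sum.inl ()))⟩ = (5, 0, 0, 0) := rfl
@[simp] lemma rk_mkT (c : Fin 3) :
    rk p q ⟨Sum.inr (Sum.inr (Sum.inr (Sum.inr c)))⟩ = (7 + (c : ℕ), 0, 0, 0) := rfl
@[simp] lemma stF_val (i : ℕ) : ((stF (t := t) i : Fin (t+1)) : ℕ) = min i t := rfl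

lemma mem_seedW {b : Bool} {x : Lam p q} (hx : x ∈ FreeMonoid.toList (seedW p q b)) :
    ∃ j e, x = lact p q b (stF 1) j e := by
  obtain ⟨j, _, hx⟩ := mem_toList_prod_map p q hx
  obtain ⟨-, hx⟩ := mem_toList_pow p q hx
  obtain ⟨e, _, hx⟩ := mem_toList_prod_map p q hx
  rw [FreeMonoid.toList_of, List.mem_singleton] at hx
  exact ⟨j, e, hx⟩

lemma mem_actRow {b : Bool} {i : Fin (t+1)} {j : Fin (NN p q b)} {x : Lam p q}
    (hx : x ∈ FreeMonoid.toList (actRow p q b i j)) : ∃ e, x = lact p q b i j e := by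
  obtain ⟨e, _, hx⟩ := mem_toList_prod_map p q hx
  rw [FreeMonoid.toList_of, List.mem_singleton] at hx
  exact ⟨e, hx⟩

lemma mem_chooseRow {b : Bool} {i : Fin (t+1)} {j : Fin (NN p q b)} {e : Fin (EB p q + 1)}
    {x : Lam p q} (hx : x ∈ FreeMonoid.toList (chooseRow p q b i j e)) :
    ∃ e' : Fin (EB p q + 1), (e : ℕ) ≤ (e' : ℕ) ∧ x = lact p q b i j e' := by
  obtain ⟨e', _, hx⟩ := mem_toList_prod_map p q hx
  obtain ⟨hpos, hx⟩ := mem_toList_pow p q hx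
  rw [FreeMonoid.toList_of, List.mem_singleton] at hx
  refine ⟨e', ?_, hx⟩
  by_contra hlt
  rw [Nat.choose_eq_zero_of_lt (by omega)] at hpos
  exact absurd hpos (lt_irrefl 0)

lemma UT_gg1 : UT p q (gg1 p q) := by
  intro a x hx
  rw [gg1_of] at hx
  rcases a with ⟨c | ⟨i, ph, j, e⟩ | u | ⟨i, ph, j, e⟩ | c⟩
  · by_cases hc : c = 3
    · subst hc
      simp only [img1, if_pos rfl] at hx
      obtain ⟨j, e, rfl⟩ := mem_seedW p q hx
      exact le_rk p q (by simp [rkLe])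
    · simp only [img1, if_neg hc] at hx
      rw [FreeMonoid.toList_of, List.mem_singleton] at hx
      exact le_of_eq hx.symm
  · simp only [img1] at hx
    by_cases hph : ph = 0
    · subst hph
      rw [if_pos rfl] at hx
      obtain ⟨e', rfl⟩ := mem_actRow p q hx
      have hj := jBC p q (b := false) j
      exact le_rk p q (by simp [rkLe]; omega)
    · have hv : (ph : ℕ) = 1 := by have := ph.isLt; omega
      rw [if_neg hph] at hx
      obtain ⟨e', he', rfl⟩ := mem_chooseRow p q hx
      exact le_rk p q (by simp [rkLe, hv]; omega)
  · simp only [img1] at hx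
    obtain ⟨j, e, rfl⟩ := mem_seedW p q hx
    cases u
    exact le_rk p q (by simp [rkLe])
  · simp only [img1] at hx
    by_cases hph : ph = 0
    · subst hph
      rw [if_pos rfl] at hx
      obtain ⟨e', rfl⟩ := mem_actRow p q hx
      have hj := jBC p q (b := true) j
      exact le_rk p q (by simp [rkLe]; omega)
    · have hv : (ph : ℕ) = 1 := by have := ph.isLt; omega
      rw [if_neg hph] at hx
      obtain ⟨e', he', rfl⟩ := mem_chooseRow p q hx
      exact le_rk p q (by simp [rkLe, hv]; omega)
  · simp only [img1] at hx
    rw [FreeMonoid.toList_of, List.mem_singleton] at hx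
    exact le_of_eq hx.symm

lemma UT_gg2 : UT p q (gg2 p q) := by
  intro a x hx
  rw [gg2_of] at hx
  rcases a with ⟨c | ⟨i, ph, j, e⟩ | u | ⟨i, ph, j, e⟩ | c⟩
  · by_cases h0 : c = 0
    · subst h0
      simp [img2] at hx
      subst hx
      exact le_rk p q (by simp [rkLe])
    · by_cases h1 : c = 1
      · subst h1
        simp [img2] at hx
        rcases hx with rfl | rfl
        · exact le_rk p q (by simp [rkLe])
        · exact le_rk p q (by simp [rkLe])
      · by_cases h2 : c = 2
        · subst h2
          simp [img2] at hx
          subst hx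
          exact le_rk p q (by simp [rkLe])
        · simp only [img2, if_neg h0, if_neg h1, if_neg h2, FreeMonoid.toList_of,
            List.mem_singleton] at hx
          subst hx
          have := c.isLt
          exact le_rk p q (by simp [rkLe]; omega)
  · simp only [img2] at hx
    by_cases hph : ph = 0
    · rw [if_pos hph] at hx
      rw [FreeMonoid.toList_of, List.mem_singleton] at hx
      subst hx
      exact le_rk p q (by simp [rkLe])
    · rw [if_neg hph] at hx
      by_cases he : (e : ℕ) = dex p q false j i
      · rw [if_pos he] at hx
        by_cases hi : (i : ℕ) = t
        · rw [if_pos hi, FreeMonoid.toList_of, List.mem_singleton] at hx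
          subst hx
          exact le_rk p q (by simp [rkLe])
        · rw [if_neg hi, FreeMonoid.toList_of, List.mem_singleton] at hx
          subst hx
          have hi2 := i.isLt
          exact le_rk p q (by simp [rkLe]; omega)
      · rw [if_neg he, FreeMonoid.toList_one] at hx
        exact absurd hx List.not_mem_nil
  · cases u
    simp only [img2] at hx
    rw [FreeMonoid.toList_of, List.mem_singleton] at hx
    subst hx
    exact le_rk p q (by simp [rkLe])
  · simp only [img2] at hx
    by_cases hph : ph = 0
    · rw [if_pos hph] at hx
      rw [FreeMonoid.toList_of, List.mem_singleton] at hx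
      subst hx
      exact le_rk p q (by simp [rkLe])
    · rw [if_neg hph] at hx
      by_cases he : (e : ℕ) = dex p q true j i
      · rw [if_pos he] at hx
        by_cases hi : (i : ℕ) = t
        · rw [if_pos hi, FreeMonoid.toList_of, List.mem_singleton] at hx
          subst hx
          exact le_rk p q (by simp [rkLe])
        · rw [if_neg hi, FreeMonoid.toList_of, List.mem_singleton] at hx
          subst hx
          have hi2 := i.isLt
          exact le_rk p q (by simp [rkLe]; omega)
      · rw [if_neg he, FreeMonoid.toList_one] at hx
        exact absurd hx List.not_mem_nil
  · simp only [img2] at hx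
    rw [FreeMonoid.toList_of, List.mem_singleton] at hx
    exact le_of_eq hx.symm

/-! ### the abstract machine -/

inductive St : Type
  | run (i : ℕ) (v : List ℕ) (x : ℕ)
  | frs (i : ℕ) (v : List ℕ)
  | don (v : List ℕ)
  | ded

def step (T : ℕ) : Bool → St → St
  | true, .run i v x => .run i v (x+1)
  | true, .frs i v => .run i v 1
  | true, .don v => .don v
  | true, .ded => .ded
  | false, .run i v x => if i = T then .don (v ++ [x]) else .frs (i+1) (v ++ [x])
  | false, .frs _ _ => .ded
  | false, .don v => .don v
  | false, .ded => .ded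

def Inv (T : ℕ) : St → Prop
  | .run i v x => 1 ≤ i ∧ i ≤ T ∧ v.length = i - 1 ∧ (∀ a ∈ v, 0 < a) ∧ 0 < x
  | .frs i v => 1 ≤ i ∧ i ≤ T ∧ v.length = i - 1 ∧ (∀ a ∈ v, 0 < a)
  | .don v => v.length = T ∧ (∀ a ∈ v, 0 < a)
  | .ded => True

lemma Inv_step (T : ℕ) (g : Bool) (σ : St) (h : Inv T σ) : Inv T (step T g σ) := by
  cases σ with
  | run i v x =>
    obtain ⟨h1, h2, h3, h4, h5⟩ := h
    cases g
    · simp only [step]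
      split
      next hiT =>
        refine ⟨by simp [h3]; omega, fun a ha => ?_⟩
        rcases List.mem_append.mp ha with ha | ha
        · exact h4 a ha
        · rw [List.mem_singleton] at ha; subst ha; exact h5
      next hiT =>
        refine ⟨by omega, by omega, by simp [h3]; omega, fun a ha => ?_⟩
        rcases List.mem_append.mp ha with ha | ha
        · exact h4 a ha
        · rw [List.mem_singleton] at ha; subst ha; exact h5
    · exact ⟨h1, h2, h3, h4, Nat.succ_pos _⟩
  | frs i v =>
    cases g
    · trivial
    · exact ⟨h.1, h.2.1, h.2.2.1, h.2.2.2, Nat.one_pos⟩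
  | don v => cases g <;> exact h
  | ded => cases g <;> trivial

/-! ### realization of states by words -/

noncomputable def msRun (b : Bool) (i : ℕ) (v : List ℕ) (x : ℕ) : Multiset (Lam p q) :=
  ∑ j : Fin (NN p q b), ∑ e : Fin (EB p q + 1),
    (cf p q b j * pv (dec p q b j) v * x ^ (e : ℕ)) • ({lact p q b (stF i) j e} : Multiset (Lam p q))

noncomputable def msFrs (b : Bool) (i : ℕ) (v : List ℕ) : Multiset (Lam p q) :=
  ∑ j : Fin (NN p q b),
    (cf p q b j * pv (dec p q b j) v) • ({lfresh p q b (stF i) j} : Multiset (Lam p q))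

noncomputable def evalL (b : Bool) (v : List ℕ) : ℕ :=
  MvPolynomial.eval (fun i : Fin t => v.getD (i : ℕ) 1) (F p q b)

def Real (b : Bool) (w : FreeMonoid (Lam p q)) : St → Prop
  | .run i v x => mz w = msRun p q b i v x
  | .frs i v => mz w = msFrs p q b i v
  | .don v => w = (FreeMonoid.of (lA p q)) ^ (evalL p q b v)
  | .ded => ∃ K, 0 < K ∧ mz w = K • ({lsk p q b} : Multiset (Lam p q))

/-! ### multiset computations for images -/

lemma mz_actRow (b : Bool) (i : Fin (t+1)) (j : Fin (NN p q b)) :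
    mz (actRow p q b i j) = ∑ e : Fin (EB p q + 1), ({lact p q b i j e} : Multiset (Lam p q)) := by
  rw [actRow, mz_listProd, Fin.sum_univ_def, List.map_map]
  have hfg : (mz ∘ fun e => FreeMonoid.of (lact p q b i j e)) = fun e => ({lact p q b i j e} : Multiset (Lam p q)) := by
    funext e; simp
  rw [hfg]

lemma mz_chooseRow (b : Bool) (i : Fin (t+1)) (j : Fin (NN p q b)) (e : Fin (EB p q + 1)) :
    mz (chooseRow p q b i j e) =
      ∑ e' : Fin (EB p q + 1),
        (Nat.choose (e' : ℕ) (e : ℕ)) • ({lact p q b i j e'} : Multiset (Lam p q)) := by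
  rw [chooseRow, mz_listProd, Fin.sum_univ_def, List.map_map]
  have hfg : (mz ∘ fun e' => (FreeMonoid.of (lact p q b i j e')) ^ (Nat.choose (e' : ℕ) (e : ℕ)))
      = fun e' : Fin (EB p q + 1) => (Nat.choose (e' : ℕ) (e : ℕ)) • ({lact p q b i j e'} : Multiset (Lam p q)) := by
    funext e'; simp
  rw [hfg]

lemma mz_seedW (b : Bool) :
    mz (seedW p q b) =
      ∑ j : Fin (NN p q b), (cf p q b j) •
        (∑ e : Fin (EB p q + 1), ({lact p q b (stF 1) j e} : Multiset (Lam p q))) := by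
  rw [seedW, mz_listProd, Fin.sum_univ_def, List.map_map]
  have hfg : (mz ∘ fun j => (actRow p q b (stF 1) j) ^ (cf p q b j))
      = fun j => (cf p q b j) • (∑ e : Fin (EB p q + 1), ({lact p q b (stF 1) j e} : Multiset (Lam p q))) := by
    funext j
    simp only [Function.comp_apply, mz_pow, mz_actRow]
  rw [hfg]

lemma dex_eq (b : Bool) (j : Fin (NN p q b)) {i : ℕ} (h2 : i - 1 < t) :
    dex p q b j i = dec p q b j ⟨i - 1, h2⟩ := dif_pos h2

lemma dex_le (b : Bool) (j : Fin (NN p q b)) (i : ℕ) : dex p q b j i ≤ EB p q := by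
  unfold dex
  split
  · exact dec_le p q b j _
  · exact Nat.zero_le _

lemma sum_choose_pow (x e' : ℕ) (h : e' ≤ EB p q) :
    ∑ e : Fin (EB p q + 1), x ^ (e : ℕ) * Nat.choose e' (e : ℕ) = (x + 1) ^ e' := by
  rw [Fin.sum_univ_eq_sum_range (fun e => x ^ e * Nat.choose e' e)]
  have hs : ((x + 1) ^ e' : ℕ) = ∑ m ∈ Finset.range (e' + 1), x ^ m * e'.choose m := by
    rw [add_pow x 1 e']
    exact Finset.sum_congr rfl (fun m _ => by simp)
  rw [hs]
  refine (Finset.sum_subset (Finset.range_subset_range.mpr (by omega)) ?_).symm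
  intro m _ hm
  rw [Finset.mem_range, not_lt] at hm
  rw [Nat.choose_eq_zero_of_lt (by omega), mul_zero]

lemma mem_msRun {b : Bool} {i : ℕ} {v : List ℕ} {x : ℕ} {a : Lam p q}
    (h : a ∈ msRun p q b i v x) : ∃ j e, a = lact p q b (stF i) j e := by
  rw [msRun, Multiset.mem_sum] at h
  obtain ⟨j, -, h⟩ := h
  rw [Multiset.mem_sum] at h
  obtain ⟨e, -, h⟩ := h
  exact ⟨j, e, (nsmul_mem_iff.mp h).2⟩

lemma mem_msFrs {b : Bool} {i : ℕ} {v : List ℕ} {a : Lam p q}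
    (h : a ∈ msFrs p q b i v) : ∃ j, a = lfresh p q b (stF i) j := by
  rw [msFrs, Multiset.mem_sum] at h
  obtain ⟨j, -, h⟩ := h
  exact ⟨j, (nsmul_mem_iff.mp h).2⟩

/-! ### the transition lemma -/

noncomputable def gE (g : Bool) : Monoid.End (FreeMonoid (Lam p q)) := cond g (gg1 p q) (gg2 p q)

lemma Real_step {b : Bool} (g : Bool) {w : FreeMonoid (Lam p q)} {σ : St}
    (hp' : 0 < MvPolynomial.eval (fun _ => 1) p) (hq' : 0 < MvPolynomial.eval (fun _ => 1) q)
    (hR : Real p q b w σ) (hI : Inv t σ) :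
    Real p q b (gE p q g w) (step t g σ) := by
  have hNN : NN p q b ≠ 0 := F_ne_zero p q b hp' hq'
  cases σ with
  | don v =>
    have hw : ∀ g', gE p q g' w = w := by
      intro g'
      rw [show w = (FreeMonoid.of (lA p q)) ^ (evalL p q b v) from hR, map_pow]
      cases g' <;> simp [gE]
    cases g
    · show gE p q false w = (FreeMonoid.of (lA p q)) ^ (evalL p q b v)
      rw [hw]; exact hR
    · show gE p q true w = (FreeMonoid.of (lA p q)) ^ (evalL p q b v)
      rw [hw]; exact hR
  | ded =>
    obtain ⟨K, hK, hmz⟩ := hR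
    have hthis : mz (gE p q g w) = K • ({lsk p q b} : Multiset (Lam p q)) := by
      rw [mz_endo, hmz, map_nsmul, bindHom_singleton]
      cases g <;> simp [gE, img1_sk, img2_sk]
    cases g
    · exact ⟨K, hK, hthis⟩
    · exact ⟨K, hK, hthis⟩
  | frs i v =>
    obtain ⟨hi1, hi2, hlen, hpos⟩ := hI
    cases g
    · -- g2 : poison
      show Real p q b (gE p q false w) St.ded
      refine ⟨∑ j : Fin (NN p q b), cf p q b j * pv (dec p q b j) v, ?_, ?_⟩
      · refine Finset.sum_pos (fun j _ => Nat.mul_pos (cf_pos p q b j) (pv_pos _ hpos)) ?_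
        have : Nonempty (Fin (NN p q b)) := ⟨⟨0, Nat.pos_of_ne_zero hNN⟩⟩
        exact Finset.univ_nonempty
      · rw [mz_endo, hR, msFrs, map_sum]
        rw [Finset.sum_smul]
        refine Finset.sum_congr rfl (fun j _ => ?_)
        rw [map_nsmul, bindHom_singleton]
        simp [gE, img2_fresh]
    · -- g1 : start counting
      show mz (gE p q true w) = msRun p q b i v 1
      rw [mz_endo, hR, msFrs, map_sum, msRun]
      refine Finset.sum_congr rfl (fun j _ => ?_)
      rw [map_nsmul, bindHom_singleton]
      simp only [gE, cond, gg1_of, img1_fresh, mz_actRow]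
      rw [Finset.smul_sum]
      exact Finset.sum_congr rfl (fun e _ => by rw [one_pow, mul_one])
  | run i v x =>
    obtain ⟨hi1, hi2, hlen, hpos, hx⟩ := hI
    have hstF : ((stF i : Fin (t+1)) : ℕ) = i := by simp [stF]; omega
    cases g
    · -- g2 : freeze
      have hbind : ∀ (j : Fin (NN p q b)) (e : Fin (EB p q + 1)),
          mz (img2 p q (lact p q b (stF i) j e)) =
            if (e : ℕ) = dex p q b j i then
              (if i = t then ({lA p q} : Multiset (Lam p q))
               else {lfresh p q b (stF (i+1)) j})
            else 0 := by
        intro j e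
        rw [img2_act, hstF]
        by_cases he : (e : ℕ) = dex p q b j i
        · rw [if_pos he, if_pos he]
          by_cases hit : i = t
          · rw [if_pos hit, if_pos hit]; simp
          · rw [if_neg hit, if_neg hit]; simp
        · rw [if_neg he, if_neg he]; simp
      have hmzw : mz (gE p q false w) =
          ∑ j : Fin (NN p q b),
            (cf p q b j * pv (dec p q b j) (v ++ [x])) •
              (if i = t then ({lA p q} : Multiset (Lam p q))
               else {lfresh p q b (stF (i+1)) j}) := by
        rw [mz_endo, hR, msRun, map_sum]
        refine Finset.sum_congr rfl (fun j _ => ?_)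
        rw [map_sum]
        have hdlt : dex p q b j i ≤ EB p q := dex_le p q b j i
        rw [Finset.sum_eq_single (⟨dex p q b j i, by omega⟩ : Fin (EB p q + 1))]
        · rw [map_nsmul, bindHom_singleton]
          simp only [gE, cond, gg2_of]
          rw [hbind j _]
          rw [if_pos rfl]
          have hlt : v.length < t := by omega
          rw [pv_append (dec p q b j) v x hlt]
          have : dex p q b j i = dec p q b j ⟨v.length, hlt⟩ := by
            rw [dex_eq p q b j (by omega : i - 1 < t)]
            congr 1
            exact Fin.ext (by simp [hlen])
          rw [this, mul_assoc]
        · intro e _ hne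
          rw [map_nsmul, bindHom_singleton]
          simp only [gE, cond, gg2_of]
          rw [hbind j e, if_neg, smul_zero]
          intro hcon
          exact hne (Fin.ext (by simpa using hcon))
        · intro hcon
          exact absurd (Finset.mem_univ _) hcon
      by_cases hit : i = t
      · rw [show step t false (St.run i v x) = St.don (v ++ [x]) from by simp [step, hit]]
        show gE p q false w = (FreeMonoid.of (lA p q)) ^ (evalL p q b (v ++ [x]))
        have hmzw' : mz (gE p q false w) = ∑ j : Fin (NN p q b),
            (cf p q b j * pv (dec p q b j) (v ++ [x])) • ({lA p q} : Multiset (Lam p q)) := by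
          rw [hmzw]
          exact Finset.sum_congr rfl (fun j _ => by rw [if_pos hit])
        have hletters : ∀ a ∈ FreeMonoid.toList w, ∃ k,
            (gE p q false) (FreeMonoid.of a) = (FreeMonoid.of (lA p q)) ^ k := by
          intro a ha
          rw [← mem_mz, hR] at ha
          obtain ⟨j, e, rfl⟩ := mem_msRun p q ha
          rw [gE, cond, gg2_of, img2_act, hstF]
          by_cases he : (e : ℕ) = dex p q b j i
          · rw [if_pos he, if_pos hit]
            exact ⟨1, (pow_one _).symm⟩
          · rw [if_neg he]
            exact ⟨0, (pow_zero _).symm⟩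
        obtain ⟨K, hK⟩ := endo_pow_letter (gE p q false) (lA p q) w hletters
        rw [hK]
        congr 1
        have h1 : (∑ j : Fin (NN p q b),
            cf p q b j * pv (dec p q b j) (v ++ [x])) • ({lA p q} : Multiset (Lam p q))
            = K • ({lA p q} : Multiset (Lam p q)) := by
          rw [Finset.sum_smul, ← hmzw', hK]; simp
        have hcount := congrArg (fun (m : Multiset (Lam p q)) => m.count (lA p q)) h1
        simp only [Multiset.count_nsmul, Multiset.count_singleton_self, mul_one] at hcount
        rw [← hcount, evalL, eval_formula]
        exact Finset.sum_congr rfl (fun j _ => rfl)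
      · rw [show step t false (St.run i v x) = St.frs (i+1) (v ++ [x]) from by simp [step, hit]]
        show mz (gE p q false w) = msFrs p q b (i+1) (v ++ [x])
        rw [hmzw, msFrs]
        exact Finset.sum_congr rfl (fun j _ => by rw [if_neg hit])
    · -- g1 : increment
      show mz (gE p q true w) = msRun p q b i v (x+1)
      rw [mz_endo, hR, msRun, map_sum]
      refine Finset.sum_congr rfl (fun j _ => ?_)
      rw [map_sum]
      have hstep : ∀ e : Fin (EB p q + 1),
          (bindHom (gE p q true))
              ((cf p q b j * pv (dec p q b j) v * x ^ (e : ℕ)) •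
                ({lact p q b (stF i) j e} : Multiset (Lam p q)))
            = ∑ e' : Fin (EB p q + 1),
                (cf p q b j * pv (dec p q b j) v * x ^ (e : ℕ) * Nat.choose (e' : ℕ) (e : ℕ)) •
                  ({lact p q b (stF i) j e'} : Multiset (Lam p q)) := by
        intro e
        rw [map_nsmul, bindHom_singleton]
        simp only [gE, cond, gg1_of, img1_act, mz_chooseRow]
        rw [Finset.smul_sum]
        exact Finset.sum_congr rfl (fun e' _ => by rw [smul_smul])
      rw [Finset.sum_congr rfl (fun e _ => hstep e), Finset.sum_comm]
      refine Finset.sum_congr rfl (fun e' _ => ?_)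
      rw [← Finset.sum_smul]
      congr 1
      have : ∑ e : Fin (EB p q + 1),
          cf p q b j * pv (dec p q b j) v * x ^ (e : ℕ) * Nat.choose (e' : ℕ) (e : ℕ)
          = cf p q b j * pv (dec p q b j) v *
              ∑ e : Fin (EB p q + 1), x ^ (e : ℕ) * Nat.choose (e' : ℕ) (e : ℕ) := by
        rw [Finset.mul_sum]
        exact Finset.sum_congr rfl (fun e _ => by ring)
      rw [this, sum_choose_pow p q x (e' : ℕ) (by have := e'.isLt; omega)]

/-! ### folding words of generators -/

noncomputable def EO : List Bool → Monoid.End (FreeMonoid (Lam p q))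
  | [] => 1
  | g :: r => EO r * gE p q g

lemma EO_cons (g : Bool) (r : List Bool) (w : FreeMonoid (Lam p q)) :
    EO p q (g :: r) w = EO p q r (gE p q g w) := rfl

lemma EO_append (l l' : List Bool) : EO p q (l ++ l') = EO p q l' * EO p q l := by
  induction l with
  | nil => simp [EO]
  | cons g r ih => rw [List.cons_append, EO, EO, ih, mul_assoc]

lemma EO_mem_closure (l : List Bool) :
    EO p q l ∈ Submonoid.closure ({gg1 p q, gg2 p q} : Set (Monoid.End (FreeMonoid (Lam p q)))) := by
  induction l with
  | nil => exact Submonoid.one_mem _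
  | cons g r ih =>
    refine Submonoid.mul_mem _ ih (Submonoid.subset_closure ?_)
    cases g
    · exact Or.inr rfl
    · exact Or.inl rfl

lemma closure_to_EO {h : Monoid.End (FreeMonoid (Lam p q))}
    (hh : h ∈ Submonoid.closure ({gg1 p q, gg2 p q} : Set (Monoid.End (FreeMonoid (Lam p q))))) :
    ∃ l : List Bool, h = EO p q l := by
  obtain ⟨L, hL, hprod⟩ := Submonoid.exists_list_of_mem_closure hh
  subst hprod
  clear hh
  induction L with
  | nil => exact ⟨[], rfl⟩
  | cons x r ih =>
    obtain ⟨l, hl⟩ := ih (fun y hy => hL y (List.mem_cons_of_mem _ hy))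
    have hx := hL x (List.mem_cons_self ..)
    rcases hx with rfl | rfl
    · refine ⟨l ++ [true], ?_⟩
      rw [EO_append, List.prod_cons, hl]
      simp [EO, gE]
    · refine ⟨l ++ [false], ?_⟩
      rw [EO_append, List.prod_cons, hl]
      simp [EO, gE]

def foldSt (T : ℕ) : List Bool → St → St
  | [], σ => σ
  | g :: r, σ => foldSt T r (step T g σ)

lemma Real_fold {b : Bool} (hp' : 0 < MvPolynomial.eval (fun _ => 1) p)
    (hq' : 0 < MvPolynomial.eval (fun _ => 1) q)
    (l : List Bool) {w : FreeMonoid (Lam p q)} {σ : St}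
    (hR : Real p q b w σ) (hI : Inv t σ) :
    Real p q b (EO p q l w) (foldSt t l σ) ∧ Inv t (foldSt t l σ) := by
  induction l generalizing w σ with
  | nil => exact ⟨hR, hI⟩
  | cons g r ih =>
    rw [EO_cons]
    exact ih (Real_step p q g hp' hq' hR hI) (Inv_step t g σ hI)

lemma foldSt_append (T : ℕ) (l l' : List Bool) (σ : St) :
    foldSt T (l ++ l') σ = foldSt T l' (foldSt T l σ) := by
  induction l generalizing σ with
  | nil => rfl
  | cons g r ih => rw [List.cons_append]; exact ih _

lemma foldSt_replicate_true (T k : ℕ) (i : ℕ) (v : List ℕ) (x : ℕ) :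
    foldSt T (List.replicate k true) (St.run i v x) = St.run i v (x + k) := by
  induction k generalizing x with
  | zero => rfl
  | succ k ih =>
    rw [List.replicate_succ]
    show foldSt T (List.replicate k true) (St.run i v (x+1)) = _
    rw [ih]
    congr 1
    omega

lemma foldSt_replicate_true_frs (T k : ℕ) (hk : 0 < k) (i : ℕ) (v : List ℕ) :
    foldSt T (List.replicate k true) (St.frs i v) = St.run i v k := by
  obtain ⟨k', rfl⟩ : ∃ k', k = k' + 1 := ⟨k - 1, by omega⟩
  rw [show k' + 1 = 1 + k' from by omega, List.replicate_add]
  rw [foldSt_append]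
  show foldSt T (List.replicate k' true) (St.run i v 1) = _
  rw [foldSt_replicate_true, Nat.add_comm]

/-- encoding of a value list as a generator word -/
def encode : List ℕ → List Bool
  | [] => []
  | a :: r => List.replicate a true ++ [false] ++ encode r

lemma foldSt_encode (vs : List ℕ) : ∀ (i : ℕ) (v : List ℕ) (x : ℕ),
    1 ≤ i → i + vs.length = t → (∀ a ∈ vs, 0 < a) →
    foldSt t (encode vs) (step t false (St.run i v x)) = St.don ((v ++ [x]) ++ vs) := by
  induction vs with
  | nil =>
    intro i v x h1 h2 _
    have : i = t := by simpa using h2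
    simp [encode, foldSt, step, this]
  | cons a vs ih =>
    intro i v x h1 h2 hpos
    have hit : i ≠ t := by simp at h2; omega
    rw [show step t false (St.run i v x) = St.frs (i+1) (v ++ [x]) from by simp [step, hit]]
    rw [encode, foldSt_append, foldSt_append]
    rw [foldSt_replicate_true_frs t a (hpos a (List.mem_cons_self ..)) _ _]
    show foldSt t (encode vs) (step t false (St.run (i+1) (v ++ [x]) a)) = _
    rw [ih (i+1) (v ++ [x]) a (by omega) (by simp at h2 ⊢; omega)
      (fun y hy => hpos y (List.mem_cons_of_mem _ hy))]
    simp

/-! ### the initial word -/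

noncomputable def uW (b : Bool) (n s : ℕ) : FreeMonoid (Lam p q) :=
  gg2 p q ((gg1 p q ^ s) ((gg2 p q) ((gg1 p q ^ n) (FreeMonoid.of (lseed p q b)))))

lemma EO_replicate_true (k : ℕ) : EO p q (List.replicate k true) = gg1 p q ^ k := by
  induction k with
  | zero => rfl
  | succ k ih => rw [List.replicate_succ, EO, ih, pow_succ]; rfl

lemma realize_seed (b : Bool) :
    Real p q b (gE p q true (FreeMonoid.of (lseed p q b))) (St.run 1 [] 1) := by
  show mz (gE p q true (FreeMonoid.of (lseed p q b))) = msRun p q b 1 [] 1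
  simp only [gE, cond, gg1_of, img1_seed, mz_seedW, msRun]
  refine Finset.sum_congr rfl (fun j _ => ?_)
  rw [Finset.smul_sum]
  refine Finset.sum_congr rfl (fun e _ => ?_)
  rw [pv_nil, one_pow, mul_one, mul_one]

lemma gpow_apply (g : Monoid.End (FreeMonoid (Lam p q))) (k : ℕ) (w : FreeMonoid (Lam p q)) :
    (g ^ (k+1)) w = (g ^ k) (g w) := by
  rw [pow_succ]; rfl

def initSt (T n s : ℕ) : St := step T false (St.run 2 [n] s)

lemma realize_u (ht : 2 ≤ t) (b : Bool) {n s : ℕ} (hn : 0 < n) (hs : 0 < s)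
    (hp' : 0 < MvPolynomial.eval (fun _ => 1) p)
    (hq' : 0 < MvPolynomial.eval (fun _ => 1) q) :
    Real p q b (uW p q b n s) (initSt t n s) ∧ Inv t (initSt t n s) := by
  have h0 : Real p q b ((gg1 p q ^ n) (FreeMonoid.of (lseed p q b))) (St.run 1 [] n) := by
    obtain ⟨n', rfl⟩ : ∃ n', n = n' + 1 := ⟨n - 1, by omega⟩
    rw [gpow_apply]
    have hbase := realize_seed p q b
    have hfold := Real_fold p q hp' hq' (List.replicate n' true)
      (b := b) hbase ⟨le_refl 1, by omega, rfl, by simp, Nat.one_pos⟩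
    rw [foldSt_replicate_true, EO_replicate_true] at hfold
    rw [show 1 + n' = n' + 1 from by omega] at hfold
    exact hfold.1
  have hI0 : Inv t (St.run 1 [] n) := ⟨le_refl 1, by omega, rfl, by simp, hn⟩
  have h1 : Real p q b ((gg2 p q) ((gg1 p q ^ n) (FreeMonoid.of (lseed p q b))))
      (St.frs 2 [n]) := by
    have hh := Real_step p q false hp' hq' h0 hI0
    rw [show step t false (St.run 1 [] n) = St.frs 2 [n] from by
      simp [step]; omega] at hh
    exact hh
  have hI1 : Inv t (St.frs 2 [n]) := ⟨by omega, by omega, rfl, by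
    intro a ha; rw [List.mem_singleton] at ha; subst ha; exact hn⟩
  have h2 : Real p q b ((gg1 p q ^ s) ((gg2 p q) ((gg1 p q ^ n) (FreeMonoid.of (lseed p q b)))))
      (St.run 2 [n] s) := by
    have hfold := Real_fold p q hp' hq' (List.replicate s true) (b := b) h1 hI1
    rw [foldSt_replicate_true_frs t s hs, EO_replicate_true] at hfold
    exact hfold.1
  have hI2 : Inv t (St.run 2 [n] s) := ⟨by omega, by omega, rfl, by
    intro a ha; rw [List.mem_singleton] at ha; subst ha; exact hn, hs⟩
  constructor
  · exact Real_step p q false hp' hq' h2 hI2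
  · exact Inv_step t false _ hI2

/-! ### letter facts and stability -/

lemma end_mul_apply (f g : Monoid.End (FreeMonoid (Lam p q))) (w : FreeMonoid (Lam p q)) :
    (f * g) w = f (g w) := rfl

lemma sq_apply (g : Monoid.End (FreeMonoid (Lam p q))) (w : FreeMonoid (Lam p q)) :
    (g ^ 2) w = g (g w) := by
  rw [pow_two]; rfl

lemma cube_apply (g : Monoid.End (FreeMonoid (Lam p q))) (w : FreeMonoid (Lam p q)) :
    (g ^ 3) w = g (g (g w)) := by
  rw [pow_succ, pow_two]; rfl

lemma gg1_T : gg1 p q (FreeMonoid.of (lT p q)) = FreeMonoid.of (lT p q) := by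
  rw [gg1_of, img1_T]
lemma gg2_T : gg2 p q (FreeMonoid.of (lT p q)) = FreeMonoid.of (lT p q) := by
  rw [gg2_of, img2_T]
lemma gg1_pow_T (k : ℕ) : (gg1 p q ^ k) (FreeMonoid.of (lT p q)) = FreeMonoid.of (lT p q) := by
  induction k with
  | zero => rfl
  | succ k ih => rw [gpow_apply, gg1_T, ih]

lemma closure_fix_lT {h : Monoid.End (FreeMonoid (Lam p q))}
    (hh : h ∈ Submonoid.closure ({gg1 p q, gg2 p q} : Set (Monoid.End (FreeMonoid (Lam p q))))) :
    h (FreeMonoid.of (lT p q)) = FreeMonoid.of (lT p q) := by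
  induction hh using Submonoid.closure_induction with
  | mem x hx => rcases hx with rfl | rfl
                · exact gg1_T p q
                · exact gg2_T p q
  | one => rfl
  | mul a b ha hb iha ihb =>
    show a (b (FreeMonoid.of (lT p q))) = _
    rw [ihb, iha]

/-- stability: applying `gg2` twice to any letter other than `lS` gives a `gg2`-fixed word. -/
lemma gg2_sq_stable (x : Lam p q) (hx : x ≠ lS p q) :
    gg2 p q (gg2 p q (gg2 p q (FreeMonoid.of x))) = gg2 p q (gg2 p q (FreeMonoid.of x)) := by
  have hT : gg2 p q (FreeMonoid.of (lT p q)) = FreeMonoid.of (lT p q) := gg2_T p q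
  have hQ0 : gg2 p q (FreeMonoid.of (lQ0 p q)) = FreeMonoid.of (lQ0 p q) := by
    rw [gg2_of, img2_Q0]
  have hsk : ∀ b, gg2 p q (FreeMonoid.of (lsk p q b)) = FreeMonoid.of (lsk p q b) := by
    intro b; rw [gg2_of, img2_sk]
  have hA : gg2 p q (FreeMonoid.of (lA p q)) = FreeMonoid.of (lA p q) := by
    rw [gg2_of, img2_A]
  rcases x with ⟨c | ⟨i, ph, j, e⟩ | u | ⟨i, ph, j, e⟩ | c⟩
  · by_cases h1 : c = 1
    · subst h1
      have hZ1 : gg2 p q (gg2 p q (FreeMonoid.of (lS1 p q)))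
          = FreeMonoid.of (lT p q) * FreeMonoid.of (lQ0 p q) := by
        rw [gg2_of, img2_S1, map_mul, gg2_of, gg2_of, img2_T, img2_P0]
      show gg2 p q (gg2 p q (gg2 p q (FreeMonoid.of (lS1 p q))))
          = gg2 p q (gg2 p q (FreeMonoid.of (lS1 p q)))
      simp only [hZ1, map_mul, hT, hQ0]
    · by_cases h2 : c = 2
      · subst h2
        show gg2 p q (gg2 p q (gg2 p q (FreeMonoid.of (lT p q))))
            = gg2 p q (gg2 p q (FreeMonoid.of (lT p q)))
        simp only [hT]
      · by_cases h3 : c = 3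
        · subst h3
          show gg2 p q (gg2 p q (gg2 p q (FreeMonoid.of (lP0 p q))))
              = gg2 p q (gg2 p q (FreeMonoid.of (lP0 p q)))
          have hP : gg2 p q (FreeMonoid.of (lP0 p q)) = FreeMonoid.of (lQ0 p q) := by
            rw [gg2_of, img2_P0]
          simp only [hP, hQ0]
        · exfalso
          apply hx
          have hc : c = 0 := by
            have := c.isLt
            have e1 : (c : ℕ) ≠ 1 := fun hh => h1 (Fin.ext hh)
            have e2 : (c : ℕ) ≠ 2 := fun hh => h2 (Fin.ext hh)
            have e3 : (c : ℕ) ≠ 3 := fun hh => h3 (Fin.ext hh)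
            exact Fin.ext (by omega)
          rw [hc]; rfl
  · by_cases hph : ph = 0
    · have h1 : gg2 p q (FreeMonoid.of (⟨Sum.inr (Sum.inl (i, ph, j, e))⟩ : Lam p q))
          = FreeMonoid.of (lsk p q false) := by
        rw [gg2_of]; simp [img2, hph]
      simp only [h1, hsk]
    · have h1 : gg2 p q (FreeMonoid.of (⟨Sum.inr (Sum.inl (i, ph, j, e))⟩ : Lam p q)) =
          (if (e : ℕ) = dex p q false j i then
            (if (i : ℕ) = t then FreeMonoid.of (lA p q)
             else FreeMonoid.of (lfresh p q false (stF ((i : ℕ)+1)) j))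
           else 1) := by
        rw [gg2_of]; simp [img2, hph]
      have hfr : gg2 p q (FreeMonoid.of (lfresh p q false (stF ((i : ℕ)+1)) j))
          = FreeMonoid.of (lsk p q false) := by
        rw [gg2_of, img2_fresh]
      by_cases he : (e : ℕ) = dex p q false j i
      · by_cases hi : (i : ℕ) = t
        · simp only [h1, if_pos he, if_pos hi, hA]
        · simp only [h1, if_pos he, if_neg hi, hfr, hsk]
      · simp only [h1, if_neg he, map_one]
  · cases u
    show gg2 p q (gg2 p q (gg2 p q (FreeMonoid.of (lQ0 p q))))
        = gg2 p q (gg2 p q (FreeMonoid.of (lQ0 p q)))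
    simp only [hQ0]
  · by_cases hph : ph = 0
    · have h1 : gg2 p q (FreeMonoid.of (⟨Sum.inr (Sum.inr (Sum.inr (Sum.inl (i, ph, j, e))))⟩ : Lam p q))
          = FreeMonoid.of (lsk p q true) := by
        rw [gg2_of]; simp [img2, hph]
      simp only [h1, hsk]
    · have h1 : gg2 p q (FreeMonoid.of (⟨Sum.inr (Sum.inr (Sum.inr (Sum.inl (i, ph, j, e))))⟩ : Lam p q)) =
          (if (e : ℕ) = dex p q true j i then
            (if (i : ℕ) = t then FreeMonoid.of (lA p q)
             else FreeMonoid.of (lfresh p q true (stF ((i : ℕ)+1)) j))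
           else 1) := by
        rw [gg2_of]; simp [img2, hph]
      have hfr : gg2 p q (FreeMonoid.of (lfresh p q true (stF ((i : ℕ)+1)) j))
          = FreeMonoid.of (lsk p q true) := by
        rw [gg2_of, img2_fresh]
      by_cases he : (e : ℕ) = dex p q true j i
      · by_cases hi : (i : ℕ) = t
        · simp only [h1, if_pos he, if_pos hi, hA]
        · simp only [h1, if_pos he, if_neg hi, hfr, hsk]
      · simp only [h1, if_neg he, map_one]
  · have h1 : gg2 p q (FreeMonoid.of (⟨Sum.inr (Sum.inr (Sum.inr (Sum.inr c)))⟩ : Lam p q))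
        = FreeMonoid.of (⟨Sum.inr (Sum.inr (Sum.inr (Sum.inr c)))⟩ : Lam p q) := by
      rw [gg2_of]; simp [img2]
    simp only [h1]

/-! ### prefix tracking -/

def VOK (n s : ℕ) : St → Prop
  | .run _ v _ => ∃ r, v = n :: s :: r
  | .frs _ v => ∃ r, v = n :: s :: r
  | .don v => ∃ r, v = n :: s :: r
  | .ded => True

lemma VOK_step (n s T : ℕ) (g : Bool) (σ : St) (h : VOK n s σ) : VOK n s (step T g σ) := by
  cases σ with
  | run i v x =>
    obtain ⟨r, rfl⟩ := h
    cases g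
    · simp only [step]
      split
      · exact ⟨r ++ [x], by simp⟩
      · exact ⟨r ++ [x], by simp⟩
    · exact ⟨r, rfl⟩
  | frs i v =>
    cases g
    · trivial
    · exact h
  | don v => cases g <;> exact h
  | ded => cases g <;> trivial

lemma VOK_fold (n s T : ℕ) (l : List Bool) (σ : St) (h : VOK n s σ) :
    VOK n s (foldSt T l σ) := by
  induction l generalizing σ with
  | nil => exact h
  | cons g r ih => exact ih _ (VOK_step n s T g σ h)

lemma VOK_init (n s T : ℕ) : VOK n s (initSt T n s) := by
  show VOK n s (step T false (St.run 2 [n] s))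
  simp only [step]
  split
  · exact ⟨[], rfl⟩
  · exact ⟨[], rfl⟩

/-! ### evaluating the products at letters -/

lemma W2_apply (n s : ℕ) (h : Monoid.End (FreeMonoid (Lam p q))) (x : Lam p q) :
    (h * (gg2 p q * gg1 p q ^ s * gg2 p q * gg1 p q ^ n * gg2 p q ^ 2)) (FreeMonoid.of x)
    = h (gg2 p q ((gg1 p q ^ s) (gg2 p q ((gg1 p q ^ n)
        (gg2 p q (gg2 p q (FreeMonoid.of x))))))) := by
  rw [show (h * (gg2 p q * gg1 p q ^ s * gg2 p q * gg1 p q ^ n * gg2 p q ^ 2)) (FreeMonoid.of x)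
      = h (gg2 p q ((gg1 p q ^ s) (gg2 p q ((gg1 p q ^ n)
          ((gg2 p q ^ 2) (FreeMonoid.of x)))))) from rfl, sq_apply]

lemma W3_apply (n s : ℕ) (h : Monoid.End (FreeMonoid (Lam p q))) (x : Lam p q) :
    (h * (gg2 p q * gg1 p q ^ s * gg2 p q * gg1 p q ^ n * gg2 p q ^ 3)) (FreeMonoid.of x)
    = h (gg2 p q ((gg1 p q ^ s) (gg2 p q ((gg1 p q ^ n)
        (gg2 p q (gg2 p q (gg2 p q (FreeMonoid.of x)))))))) := by
  rw [show (h * (gg2 p q * gg1 p q ^ s * gg2 p q * gg1 p q ^ n * gg2 p q ^ 3)) (FreeMonoid.of x)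
      = h (gg2 p q ((gg1 p q ^ s) (gg2 p q ((gg1 p q ^ n)
          ((gg2 p q ^ 3) (FreeMonoid.of x)))))) from rfl, cube_apply]

lemma RT_mul (n s : ℕ) (w : FreeMonoid (Lam p q)) :
    gg2 p q ((gg1 p q ^ s) (gg2 p q ((gg1 p q ^ n) (FreeMonoid.of (lT p q) * w))))
    = FreeMonoid.of (lT p q) * gg2 p q ((gg1 p q ^ s) (gg2 p q ((gg1 p q ^ n) w))) := by
  rw [map_mul, gg1_pow_T, map_mul, gg2_T, map_mul, gg1_pow_T, map_mul, gg2_T]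

lemma gg2_sq_S : gg2 p q (gg2 p q (FreeMonoid.of (lS p q)))
    = FreeMonoid.of (lT p q) * FreeMonoid.of (lP0 p q) := by
  rw [gg2_of, img2_S, gg2_of, img2_S1]

lemma gg2_cube_S : gg2 p q (gg2 p q (gg2 p q (FreeMonoid.of (lS p q))))
    = FreeMonoid.of (lT p q) * FreeMonoid.of (lQ0 p q) := by
  rw [gg2_sq_S, map_mul, gg2_T, gg2_of, img2_P0]

lemma W2_at_S (n s : ℕ) (h : Monoid.End (FreeMonoid (Lam p q))) :
    (h * (gg2 p q * gg1 p q ^ s * gg2 p q * gg1 p q ^ n * gg2 p q ^ 2)) (FreeMonoid.of (lS p q))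
    = h (FreeMonoid.of (lT p q)) * h (uW p q false n s) := by
  rw [W2_apply, gg2_sq_S, RT_mul, map_mul]
  rfl

lemma W3_at_S (n s : ℕ) (h : Monoid.End (FreeMonoid (Lam p q))) :
    (h * (gg2 p q * gg1 p q ^ s * gg2 p q * gg1 p q ^ n * gg2 p q ^ 3)) (FreeMonoid.of (lS p q))
    = h (FreeMonoid.of (lT p q)) * h (uW p q true n s) := by
  rw [W3_apply, gg2_cube_S, RT_mul, map_mul]
  rfl

lemma gg2_sq_Q0 : gg2 p q (gg2 p q (FreeMonoid.of (lQ0 p q))) = FreeMonoid.of (lQ0 p q) := by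
  rw [gg2_of, img2_Q0, gg2_of, img2_Q0]

lemma W2_at_Q0 (n s : ℕ) (h : Monoid.End (FreeMonoid (Lam p q))) :
    (h * (gg2 p q * gg1 p q ^ s * gg2 p q * gg1 p q ^ n * gg2 p q ^ 2)) (FreeMonoid.of (lQ0 p q))
    = h (uW p q true n s) := by
  rw [W2_apply, gg2_sq_Q0]
  rfl

lemma W3_at_Q0 (n s : ℕ) (h : Monoid.End (FreeMonoid (Lam p q))) :
    (h * (gg2 p q * gg1 p q ^ s * gg2 p q * gg1 p q ^ n * gg2 p q ^ 3)) (FreeMonoid.of (lQ0 p q))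
    = h (uW p q true n s) := by
  rw [W3_apply, gg2_sq_Q0, show gg2 p q (FreeMonoid.of (lQ0 p q)) = FreeMonoid.of (lQ0 p q)
    from by rw [gg2_of, img2_Q0]]
  rfl

/-! ### shape of realized words -/

lemma real_members {b : Bool} {w : FreeMonoid (Lam p q)} {σ : St}
    (hR : Real p q b w σ) : ∀ a ∈ mz w,
    (∃ i j e, a = lact p q b i j e) ∨ (∃ i j, a = lfresh p q b i j) ∨ a = lsk p q b ∨ a = lA p q := by
  intro a ha
  cases σ with
  | run i v x =>
    rw [hR] at ha
    obtain ⟨j, e, rfl⟩ := mem_msRun p q ha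
    exact Or.inl ⟨_, _, _, rfl⟩
  | frs i v =>
    rw [hR] at ha
    obtain ⟨j, rfl⟩ := mem_msFrs p q ha
    exact Or.inr (Or.inl ⟨_, _, rfl⟩)
  | don v =>
    rw [show w = (FreeMonoid.of (lA p q)) ^ (evalL p q b v) from hR] at ha
    rw [mz_pow_of, nsmul_mem_iff] at ha
    exact Or.inr (Or.inr (Or.inr ha.2))
  | ded =>
    obtain ⟨K, hK, hmz⟩ := hR
    rw [hmz, nsmul_mem_iff] at ha
    exact Or.inr (Or.inr (Or.inl ha.2))

lemma exists_special {b : Bool} {w : FreeMonoid (Lam p q)} {σ : St}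
    (hp' : 0 < MvPolynomial.eval (fun _ => 1) p) (hq' : 0 < MvPolynomial.eval (fun _ => 1) q)
    (hR : Real p q b w σ) (hI : Inv t σ) (hnd : ∀ v, σ ≠ St.don v) :
    ∃ a ∈ mz w,
      (∃ i j e, a = lact p q b i j e) ∨ (∃ i j, a = lfresh p q b i j) ∨ a = lsk p q b := by
  have hNN : NN p q b ≠ 0 := F_ne_zero p q b hp' hq'
  have j0 : Fin (NN p q b) := ⟨0, Nat.pos_of_ne_zero hNN⟩
  cases σ with
  | run i v x =>
    obtain ⟨hi1, hi2, hlen, hpos, hx⟩ := hI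
    refine ⟨lact p q b (stF i) j0 0, ?_, Or.inl ⟨_, _, _, rfl⟩⟩
    rw [hR, msRun]
    rw [Multiset.mem_sum]
    refine ⟨j0, Finset.mem_univ _, ?_⟩
    rw [Multiset.mem_sum]
    refine ⟨0, Finset.mem_univ _, ?_⟩
    rw [nsmul_mem_iff]
    refine ⟨?_, rfl⟩
    have h1 := cf_pos p q b j0
    have h2 := pv_pos (dec p q b j0) hpos
    have h3 : (0 : ℕ) < x ^ ((0 : Fin (EB p q + 1)) : ℕ) := by
      simp
    positivity
  | frs i v =>
    obtain ⟨hi1, hi2, hlen, hpos⟩ := hI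
    refine ⟨lfresh p q b (stF i) j0, ?_, Or.inr (Or.inl ⟨_, _, rfl⟩)⟩
    rw [hR, msFrs]
    rw [Multiset.mem_sum]
    refine ⟨j0, Finset.mem_univ _, ?_⟩
    rw [nsmul_mem_iff]
    refine ⟨?_, rfl⟩
    have h1 := cf_pos p q b j0
    have h2 := pv_pos (dec p q b j0) hpos
    positivity
  | don v => exact absurd rfl (hnd v)
  | ded =>
    obtain ⟨K, hK, hmz⟩ := hR
    refine ⟨lsk p q b, ?_, Or.inr (Or.inr rfl)⟩
    rw [hmz, nsmul_mem_iff]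
    exact ⟨by omega, rfl⟩

lemma PQ_disjoint (a : Lam p q)
    (hP : (∃ i j e, a = lact p q false i j e) ∨ (∃ i j, a = lfresh p q false i j) ∨ a = lsk p q false) :
    ¬ ((∃ i j e, a = lact p q true i j e) ∨ (∃ i j, a = lfresh p q true i j)
        ∨ a = lsk p q true ∨ a = lA p q) := by
  rcases hP with ⟨i, j, e, rfl⟩ | ⟨i, j, rfl⟩ | rfl <;>
    rintro (⟨i', j', e', hh⟩ | ⟨i', j', hh⟩ | hh | hh) <;>
    simp [lact, lfresh, lsk, lA] at hh

lemma QP_disjoint_A (a : Lam p q)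
    (hQ : (∃ i j e, a = lact p q true i j e) ∨ (∃ i j, a = lfresh p q true i j) ∨ a = lsk p q true) :
    a ≠ lA p q := by
  rcases hQ with ⟨i, j, e, rfl⟩ | ⟨i, j, rfl⟩ | rfl <;> simp [lact, lfresh, lsk, lA]

/-! ### main lemmas (pre-transport) -/

lemma word_cancel {a b : FreeMonoid (Lam p q)} {x : Lam p q}
    (h : FreeMonoid.of x * a = FreeMonoid.of x * b) : a = b := by
  have h1 := congrArg FreeMonoid.toList h
  rw [FreeMonoid.toList_mul, FreeMonoid.toList_mul, FreeMonoid.toList_of] at h1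
  simp only [List.singleton_append, List.cons.injEq, true_and] at h1
  have h2 : FreeMonoid.ofList (FreeMonoid.toList a) = FreeMonoid.ofList (FreeMonoid.toList b) := by
    rw [h1]
  rwa [FreeMonoid.ofList_toList, FreeMonoid.ofList_toList] at h2

lemma main_forward (ht : 2 ≤ t) {n s : ℕ} (hn : 0 < n) (hs : 0 < s)
    (hp' : 0 < MvPolynomial.eval (fun _ => 1) p) (hq' : 0 < MvPolynomial.eval (fun _ => 1) q)
    (m : Fin t → ℕ) (hmpos : ∀ i, 0 < m i) (hm0 : m ⟨0, by omega⟩ = n) (hm1 : m ⟨1, by omega⟩ = s)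
    (hpq : MvPolynomial.eval m p = MvPolynomial.eval m q) :
    ∃ h ∈ Submonoid.closure ({gg1 p q, gg2 p q} : Set (Monoid.End (FreeMonoid (Lam p q)))),
      h * (gg2 p q * gg1 p q ^ s * gg2 p q * gg1 p q ^ n * gg2 p q ^ 2)
        = h * (gg2 p q * gg1 p q ^ s * gg2 p q * gg1 p q ^ n * gg2 p q ^ 3) := by
  classical
  set vs : List ℕ := List.ofFn (fun k : Fin (t-2) => m ⟨(k : ℕ) + 2, by have := k.isLt; omega⟩)
    with hvs
  have hvs_len : vs.length = t - 2 := by simp [hvs]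
  have hvs_pos : ∀ a ∈ vs, 0 < a := by
    intro a ha
    rw [hvs, List.mem_ofFn] at ha
    obtain ⟨k, rfl⟩ := ha
    exact hmpos _
  refine ⟨EO p q (encode vs), EO_mem_closure p q _, ?_⟩
  have hfold : foldSt t (encode vs) (initSt t n s) = St.don (([n] ++ [s]) ++ vs) :=
    foldSt_encode vs 2 [n] s (by omega) (by rw [hvs_len]; omega) hvs_pos
  have hgetD : (fun i : Fin t => ((n :: s :: vs).getD (i : ℕ) 1)) = m := by
    funext i
    rcases i with ⟨iv, hiv⟩
    match iv, hiv with
    | 0, hh => exact hm0.symm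
    | 1, hh => exact hm1.symm
    | (k+2), hh =>
      show vs.getD k 1 = m ⟨k+2, hh⟩
      rw [List.getD_eq_getElem _ _ (by rw [hvs_len]; omega)]
      simp only [hvs, List.getElem_ofFn]
  have key : ∀ b, EO p q (encode vs) (uW p q b n s)
      = (FreeMonoid.of (lA p q)) ^ (MvPolynomial.eval m (F p q b)) := by
    intro b
    obtain ⟨hR, hI⟩ := realize_u p q ht b hn hs hp' hq'
    have h2 := (Real_fold p q hp' hq' (encode vs) hR hI).1
    rw [hfold] at h2
    have h3 : EO p q (encode vs) (uW p q b n s)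
        = (FreeMonoid.of (lA p q)) ^ (evalL p q b (([n] ++ [s]) ++ vs)) := h2
    rw [h3]
    congr 1
    rw [evalL]
    rw [show (([n] ++ [s]) ++ vs) = n :: s :: vs from by simp]
    rw [hgetD]
  apply FreeMonoid.hom_eq
  intro x
  show (_ : Monoid.End (FreeMonoid (Lam p q))) (FreeMonoid.of x) = (_ : Monoid.End (FreeMonoid (Lam p q))) (FreeMonoid.of x)
  by_cases hx : x = lS p q
  · subst hx
    rw [W2_at_S, W3_at_S, key false, key true]
    have hFeq : MvPolynomial.eval m (F p q false) = MvPolynomial.eval m (F p q true) := by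
      simpa [F] using hpq
    rw [hFeq]
  · rw [W2_apply, W3_apply, gg2_sq_stable p q x hx]

lemma oEnd_apply (w : FreeMonoid (Lam p q)) : (oEnd (Lam p q)) w = 1 := rfl

lemma W2_ne_o {n s : ℕ} (h : Monoid.End (FreeMonoid (Lam p q)))
    (hcl : h ∈ Submonoid.closure ({gg1 p q, gg2 p q} : Set (Monoid.End (FreeMonoid (Lam p q))))) :
    h * (gg2 p q * gg1 p q ^ s * gg2 p q * gg1 p q ^ n * gg2 p q ^ 2) ≠ oEnd (Lam p q) := by
  intro heq
  have happ := congrArg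
    (fun g : Monoid.End (FreeMonoid (Lam p q)) => g (FreeMonoid.of (lS p q))) heq
  rw [W2_at_S, closure_fix_lT p q hcl, oEnd_apply] at happ
  have h1 := congrArg FreeMonoid.toList happ
  rw [FreeMonoid.toList_mul, FreeMonoid.toList_of, FreeMonoid.toList_one] at h1
  simp at h1

lemma main_backward (ht : 2 ≤ t) {n s : ℕ} (hn : 0 < n) (hs : 0 < s)
    (hp' : 0 < MvPolynomial.eval (fun _ => 1) p) (hq' : 0 < MvPolynomial.eval (fun _ => 1) q)
    {h1 h2 : Monoid.End (FreeMonoid (Lam p q))}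
    (hcl1 : h1 ∈ Submonoid.closure ({gg1 p q, gg2 p q} : Set (Monoid.End (FreeMonoid (Lam p q)))))
    (hcl2 : h2 ∈ Submonoid.closure ({gg1 p q, gg2 p q} : Set (Monoid.End (FreeMonoid (Lam p q)))))
    (heq : h1 * (gg2 p q * gg1 p q ^ s * gg2 p q * gg1 p q ^ n * gg2 p q ^ 2)
        = h2 * (gg2 p q * gg1 p q ^ s * gg2 p q * gg1 p q ^ n * gg2 p q ^ 3)) :
    ∃ m : Fin t → ℕ, (∀ i, 0 < m i) ∧ m ⟨0, by omega⟩ = n ∧ m ⟨1, by omega⟩ = s ∧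
      MvPolynomial.eval m p = MvPolynomial.eval m q := by
  obtain ⟨l1, rfl⟩ := closure_to_EO p q hcl1
  obtain ⟨l2, rfl⟩ := closure_to_EO p q hcl2
  have hES : EO p q l1 (uW p q false n s) = EO p q l2 (uW p q true n s) := by
    have happ := congrArg
      (fun g : Monoid.End (FreeMonoid (Lam p q)) => g (FreeMonoid.of (lS p q))) heq
    rw [W2_at_S, W3_at_S, closure_fix_lT p q (EO_mem_closure p q l1),
      closure_fix_lT p q (EO_mem_closure p q l2)] at happ
    exact word_cancel p q happ
  have hEQ : EO p q l1 (uW p q true n s) = EO p q l2 (uW p q true n s) := by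
    have happ := congrArg
      (fun g : Monoid.End (FreeMonoid (Lam p q)) => g (FreeMonoid.of (lQ0 p q))) heq
    rw [W2_at_Q0, W3_at_Q0] at happ
    exact happ
  obtain ⟨hRf, hIf⟩ := realize_u p q ht false hn hs hp' hq'
  obtain ⟨hRt, hIt⟩ := realize_u p q ht true hn hs hp' hq'
  obtain ⟨hRf1, hI1⟩ := Real_fold p q hp' hq' l1 hRf hIf
  obtain ⟨hRt1, -⟩ := Real_fold p q hp' hq' l1 hRt hIt
  obtain ⟨hRt2, hI2⟩ := Real_fold p q hp' hq' l2 hRt hIt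
  set σ1 := foldSt t l1 (initSt t n s) with hσ1
  set σ2 := foldSt t l2 (initSt t n s) with hσ2
  -- σ1 must be a done state
  have hdon1 : ∃ v1, σ1 = St.don v1 := by
    by_contra hnd
    push_neg at hnd
    obtain ⟨a, ha, hsp⟩ := exists_special p q hp' hq' hRf1 hI1 hnd
    rw [hES] at ha
    exact PQ_disjoint p q a hsp (real_members p q hRt2 a ha)
  obtain ⟨v1, hv1⟩ := hdon1
  rw [hv1] at hRf1 hRt1
  have hwf : EO p q l1 (uW p q false n s)
      = (FreeMonoid.of (lA p q)) ^ (evalL p q false v1) := hRf1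
  have hwt1 : EO p q l1 (uW p q true n s)
      = (FreeMonoid.of (lA p q)) ^ (evalL p q true v1) := hRt1
  have hdon2 : ∃ v2, σ2 = St.don v2 := by
    by_contra hnd
    push_neg at hnd
    obtain ⟨a, ha, hsp⟩ := exists_special p q hp' hq' hRt2 hI2 hnd
    rw [← hES, hwf, mz_pow_of, nsmul_mem_iff] at ha
    exact QP_disjoint_A p q a hsp ha.2
  obtain ⟨v2, hv2⟩ := hdon2
  rw [hv2] at hRt2
  have hwt2 : EO p q l2 (uW p q true n s)
      = (FreeMonoid.of (lA p q)) ^ (evalL p q true v2) := hRt2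
  have e1 : evalL p q false v1 = evalL p q true v2 := by
    apply pow_of_inj (lA p q)
    rw [← hwf, ← hwt2, hES]
  have e2 : evalL p q true v1 = evalL p q true v2 := by
    apply pow_of_inj (lA p q)
    rw [← hwt1, ← hwt2, hEQ]
  -- extract v1 structure
  have hVOK : VOK n s σ1 := VOK_fold n s t l1 _ (VOK_init n s t)
  rw [hv1] at hVOK hI1
  obtain ⟨r, hr⟩ := hVOK
  obtain ⟨hlen, hpos⟩ := hI1
  refine ⟨fun i => v1.getD (i : ℕ) 1, fun i => getD_pos hpos _, ?_, ?_, ?_⟩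
  · rw [hr]; rfl
  · rw [hr]; rfl
  · have : evalL p q false v1 = evalL p q true v1 := by omega
    rw [evalL, evalL] at this
    simpa [F] using this

/-! ### transport to `Fin k` -/

noncomputable def KK : ℕ := Fintype.card (Lam p q)

instance : Nonempty (Lam p q) := ⟨lS p q⟩

lemma KK_pos : 0 < KK p q := Fintype.card_pos

noncomputable def phi : Fin (KK p q) ≃o Lam p q :=
  Fintype.orderIsoFinOfCardEq (Lam p q) rfl

noncomputable def dn : FreeMonoid (Lam p q) →* FreeMonoid (Fin (KK p q)) :=
  FreeMonoid.map (phi p q).symm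

noncomputable def up : FreeMonoid (Fin (KK p q)) →* FreeMonoid (Lam p q) :=
  FreeMonoid.map (phi p q)

lemma dn_up : (dn p q).comp (up p q) = MonoidHom.id _ := by
  apply FreeMonoid.hom_eq
  intro x
  simp [dn, up, FreeMonoid.map_of]

lemma up_dn : (up p q).comp (dn p q) = MonoidHom.id _ := by
  apply FreeMonoid.hom_eq
  intro x
  simp [dn, up, FreeMonoid.map_of]

lemma dn_up_apply (w : FreeMonoid (Fin (KK p q))) : dn p q (up p q w) = w := by
  have := congrArg (fun f => (f : _ →* _) w) (dn_up p q)
  simpa using this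

lemma up_dn_apply (w : FreeMonoid (Lam p q)) : up p q (dn p q w) = w := by
  have := congrArg (fun f => (f : _ →* _) w) (up_dn p q)
  simpa using this

noncomputable def eEnd : Monoid.End (FreeMonoid (Lam p q)) →* Monoid.End (FreeMonoid (Fin (KK p q))) where
  toFun g := ((dn p q).comp (g : FreeMonoid (Lam p q) →* FreeMonoid (Lam p q))).comp (up p q)
  map_one' := by
    apply FreeMonoid.hom_eq
    intro x
    show dn p q ((1 : Monoid.End (FreeMonoid (Lam p q))) (up p q (FreeMonoid.of x))) = _
    show dn p q (up p q (FreeMonoid.of x)) = _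
    rw [dn_up_apply]
    rfl
  map_mul' a b := by
    apply FreeMonoid.hom_eq
    intro x
    show dn p q (a (b (up p q (FreeMonoid.of x)))) = dn p q (a (up p q (dn p q (b (up p q (FreeMonoid.of x))))))
    rw [up_dn_apply]

lemma eEnd_apply (g : Monoid.End (FreeMonoid (Lam p q))) (w : FreeMonoid (Fin (KK p q))) :
    eEnd p q g w = dn p q (g (up p q w)) := rfl

lemma eEnd_inj : Function.Injective (eEnd p q) := by
  intro a b h
  apply FreeMonoid.hom_eq
  intro x
  have h1 := congrArg (fun g : Monoid.End (FreeMonoid (Fin (KK p q))) =>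
    up p q (g (dn p q (FreeMonoid.of x)))) h
  simp only [eEnd_apply, up_dn_apply] at h1
  exact h1

lemma eEnd_oEnd : eEnd p q (oEnd (Lam p q)) = oEnd (Fin (KK p q)) := by
  apply FreeMonoid.hom_eq
  intro x
  show dn p q ((oEnd (Lam p q)) (up p q (FreeMonoid.of x))) = (oEnd (Fin (KK p q))) (FreeMonoid.of x)
  rw [oEnd_apply]
  rfl

lemma eEnd_UT {g : Monoid.End (FreeMonoid (Lam p q))} (hg : UT p q g) :
    IsUpperTriangular (eEnd p q g) := by
  intro x y hxy hy
  rw [eEnd_apply] at hy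
  have hup : up p q (FreeMonoid.of x) = FreeMonoid.of (phi p q x) := FreeMonoid.map_of _ _
  rw [hup] at hy
  rw [show dn p q = FreeMonoid.map (phi p q).symm from rfl, FreeMonoid.toList_map,
    List.mem_map] at hy
  obtain ⟨a, ha, rfl⟩ := hy
  have hle : phi p q x ≤ a := hg (phi p q x) a ha
  have : x ≤ (phi p q).symm a := by
    rw [← (phi p q).symm_apply_apply x]
    exact (phi p q).symm.monotone hle
  omega

lemma eEnd_closure_iff (h' : Monoid.End (FreeMonoid (Fin (KK p q)))) :
    h' ∈ Submonoid.closure ({eEnd p q (gg1 p q), eEnd p q (gg2 p q)} :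
        Set (Monoid.End (FreeMonoid (Fin (KK p q)))))
      ↔ ∃ h ∈ Submonoid.closure ({gg1 p q, gg2 p q} :
          Set (Monoid.End (FreeMonoid (Lam p q)))), eEnd p q h = h' := by
  rw [← Set.image_pair, ← MonoidHom.map_mclosure, Submonoid.mem_map]

end S5

/-- equivalence of the Diophantine condition with the solvability of the
linear equations `g2² Prod(n,s) x = g2³ Prod(n,s) x ≠ o` and
`g2² Prod(n,s) x = g2³ Prod(n,s) y ≠ o` over the monoid generated by `g1, g2`.
Endomorphisms are applied on the right, so the paper's product `fg` (apply `f` first)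
is `g * f` in terms of Mathlib's composition product on `Monoid.End`; e.g.
`g2² g1^n g2 g1^s g2` is `g2 * g1 ^ s * g2 * g1 ^ n * g2 ^ 2`. -/
theorem statement5 (t : ℕ) (ht : 2 ≤ t) (p q : MvPolynomial (Fin t) ℕ)
    (hp : ∀ m : Fin t → ℕ, (∀ i, 0 < m i) → 0 < MvPolynomial.eval m p)
    (hq : ∀ m : Fin t → ℕ, (∀ i, 0 < m i) → 0 < MvPolynomial.eval m q) :
    ∃ (k : ℕ) (g1 g2 : Monoid.End (FreeMonoid (Fin k))),
      0 < k ∧ IsUpperTriangular g1 ∧ IsUpperTriangular g2 ∧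
      ∀ n s : ℕ, 0 < n → 0 < s →
        (((∃ m : Fin t → ℕ, (∀ i, 0 < m i) ∧ m ⟨0, by omega⟩ = n ∧ m ⟨1, by omega⟩ = s ∧
              MvPolynomial.eval m p = MvPolynomial.eval m q) ↔
            (∃ h ∈ Submonoid.closure ({g1, g2} : Set (Monoid.End (FreeMonoid (Fin k)))),
              h * (g2 * g1 ^ s * g2 * g1 ^ n * g2 ^ 2) =
                h * (g2 * g1 ^ s * g2 * g1 ^ n * g2 ^ 3) ∧
              h * (g2 * g1 ^ s * g2 * g1 ^ n * g2 ^ 2) ≠ oEnd (Fin k))) ∧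
          ((∃ h ∈ Submonoid.closure ({g1, g2} : Set (Monoid.End (FreeMonoid (Fin k)))),
              h * (g2 * g1 ^ s * g2 * g1 ^ n * g2 ^ 2) =
                h * (g2 * g1 ^ s * g2 * g1 ^ n * g2 ^ 3) ∧
              h * (g2 * g1 ^ s * g2 * g1 ^ n * g2 ^ 2) ≠ oEnd (Fin k)) ↔
            (∃ h1 ∈ Submonoid.closure ({g1, g2} : Set (Monoid.End (FreeMonoid (Fin k)))),
              ∃ h2 ∈ Submonoid.closure ({g1, g2} : Set (Monoid.End (FreeMonoid (Fin k)))),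
              h1 * (g2 * g1 ^ s * g2 * g1 ^ n * g2 ^ 2) =
                h2 * (g2 * g1 ^ s * g2 * g1 ^ n * g2 ^ 3) ∧
              h1 * (g2 * g1 ^ s * g2 * g1 ^ n * g2 ^ 2) ≠ oEnd (Fin k)))) := by
  classical
  have hp' : 0 < MvPolynomial.eval (fun _ => (1:ℕ)) p := hp _ (fun _ => Nat.one_pos)
  have hq' : 0 < MvPolynomial.eval (fun _ => (1:ℕ)) q := hq _ (fun _ => Nat.one_pos)
  refine ⟨S5.KK p q, S5.eEnd p q (S5.gg1 p q), S5.eEnd p q (S5.gg2 p q),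
    S5.KK_pos p q, S5.eEnd_UT p q (S5.UT_gg1 p q), S5.eEnd_UT p q (S5.UT_gg2 p q), ?_⟩
  intro n s hn hs
  have hW2 : S5.eEnd p q (S5.gg2 p q) * S5.eEnd p q (S5.gg1 p q) ^ s * S5.eEnd p q (S5.gg2 p q)
        * S5.eEnd p q (S5.gg1 p q) ^ n * S5.eEnd p q (S5.gg2 p q) ^ 2
      = S5.eEnd p q (S5.gg2 p q * S5.gg1 p q ^ s * S5.gg2 p q * S5.gg1 p q ^ n
          * S5.gg2 p q ^ 2) := by
    rw [map_mul, map_mul, map_mul, map_mul, map_pow, map_pow, map_pow]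
  have hW3 : S5.eEnd p q (S5.gg2 p q) * S5.eEnd p q (S5.gg1 p q) ^ s * S5.eEnd p q (S5.gg2 p q)
        * S5.eEnd p q (S5.gg1 p q) ^ n * S5.eEnd p q (S5.gg2 p q) ^ 3
      = S5.eEnd p q (S5.gg2 p q * S5.gg1 p q ^ s * S5.gg2 p q * S5.gg1 p q ^ n
          * S5.gg2 p q ^ 3) := by
    rw [map_mul, map_mul, map_mul, map_mul, map_pow, map_pow, map_pow]
  have hAB : (∃ m : Fin t → ℕ, (∀ i, 0 < m i) ∧ m ⟨0, by omega⟩ = n ∧ m ⟨1, by omega⟩ = s ∧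
        MvPolynomial.eval m p = MvPolynomial.eval m q) →
      (∃ h ∈ Submonoid.closure ({S5.eEnd p q (S5.gg1 p q), S5.eEnd p q (S5.gg2 p q)} :
          Set (Monoid.End (FreeMonoid (Fin (S5.KK p q))))),
        h * (S5.eEnd p q (S5.gg2 p q) * S5.eEnd p q (S5.gg1 p q) ^ s * S5.eEnd p q (S5.gg2 p q)
            * S5.eEnd p q (S5.gg1 p q) ^ n * S5.eEnd p q (S5.gg2 p q) ^ 2) =
          h * (S5.eEnd p q (S5.gg2 p q) * S5.eEnd p q (S5.gg1 p q) ^ s * S5.eEnd p q (S5.gg2 p q)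
            * S5.eEnd p q (S5.gg1 p q) ^ n * S5.eEnd p q (S5.gg2 p q) ^ 3) ∧
        h * (S5.eEnd p q (S5.gg2 p q) * S5.eEnd p q (S5.gg1 p q) ^ s * S5.eEnd p q (S5.gg2 p q)
            * S5.eEnd p q (S5.gg1 p q) ^ n * S5.eEnd p q (S5.gg2 p q) ^ 2) ≠ oEnd (Fin (S5.KK p q))) := by
    rintro ⟨m, hmpos, hm0, hm1, hmeq⟩
    obtain ⟨h, hcl, heq⟩ := S5.main_forward p q ht hn hs hp' hq' m hmpos hm0 hm1 hmeq
    refine ⟨S5.eEnd p q h, ?_, ?_, ?_⟩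
    · rw [S5.eEnd_closure_iff]
      exact ⟨h, hcl, rfl⟩
    · rw [hW2, hW3, ← map_mul (S5.eEnd p q) h, ← map_mul (S5.eEnd p q) h, heq]
    · rw [hW2, ← map_mul (S5.eEnd p q) h]
      intro hcon
      rw [← S5.eEnd_oEnd p q] at hcon
      exact S5.W2_ne_o p q h hcl (S5.eEnd_inj p q hcon)
  have hCA : (∃ h1 ∈ Submonoid.closure ({S5.eEnd p q (S5.gg1 p q), S5.eEnd p q (S5.gg2 p q)} :
          Set (Monoid.End (FreeMonoid (Fin (S5.KK p q))))),
        ∃ h2 ∈ Submonoid.closure ({S5.eEnd p q (S5.gg1 p q), S5.eEnd p q (S5.gg2 p q)} :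
          Set (Monoid.End (FreeMonoid (Fin (S5.KK p q))))),
        h1 * (S5.eEnd p q (S5.gg2 p q) * S5.eEnd p q (S5.gg1 p q) ^ s * S5.eEnd p q (S5.gg2 p q)
            * S5.eEnd p q (S5.gg1 p q) ^ n * S5.eEnd p q (S5.gg2 p q) ^ 2) =
          h2 * (S5.eEnd p q (S5.gg2 p q) * S5.eEnd p q (S5.gg1 p q) ^ s * S5.eEnd p q (S5.gg2 p q)
            * S5.eEnd p q (S5.gg1 p q) ^ n * S5.eEnd p q (S5.gg2 p q) ^ 3) ∧
        h1 * (S5.eEnd p q (S5.gg2 p q) * S5.eEnd p q (S5.gg1 p q) ^ s * S5.eEnd p q (S5.gg2 p q)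
            * S5.eEnd p q (S5.gg1 p q) ^ n * S5.eEnd p q (S5.gg2 p q) ^ 2) ≠ oEnd (Fin (S5.KK p q))) →
      (∃ m : Fin t → ℕ, (∀ i, 0 < m i) ∧ m ⟨0, by omega⟩ = n ∧ m ⟨1, by omega⟩ = s ∧
        MvPolynomial.eval m p = MvPolynomial.eval m q) := by
    rintro ⟨h1', hcl1', h2', hcl2', heq, -⟩
    rw [S5.eEnd_closure_iff] at hcl1' hcl2'
    obtain ⟨h1, hcl1, rfl⟩ := hcl1'
    obtain ⟨h2, hcl2, rfl⟩ := hcl2'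
    refine S5.main_backward p q ht hn hs hp' hq' hcl1 hcl2 ?_
    apply S5.eEnd_inj p q
    rw [map_mul (S5.eEnd p q) h1, map_mul (S5.eEnd p q) h2, ← hW2, ← hW3]
    exact heq
  refine ⟨⟨fun hA => hAB hA, fun hB => ?_⟩, ⟨fun hB => ?_, fun hC => hAB (hCA hC)⟩⟩
  · obtain ⟨h, hcl, heq, hne⟩ := hB
    exact hCA ⟨h, hcl, h, hcl, heq, hne⟩
  · obtain ⟨h, hcl, heq, hne⟩ := hB
    exact ⟨h, hcl, h, hcl, heq, hne⟩
end
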